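/- arXiv:2209.01617 — 6 statements merged into one kernel-verified Lean document; each statement's English description precedes it below -/
import Mathlib

section
/- If D is an ultrafilter on an index set I and the ultraproduct of a family of finite sets (n_i)_{i∈I} with respect to D is infinite with cardinality λ, then λ^{ℵ₀} = λ. -/
open Cardinal

universe u v w

namespace ShelahUP

variable {I : Type u} (D : Ultrafilter I)

/-- the ultraproduct relation -/
def rel (α : I → Type v) (f g : ∀ i, α i) : Prop := {i | f i = g i} ∈ D

theorem rel_equiv (α : I → Type v) : Equivalence (rel D α) := by
  constructor
  · intro f
    have : {i | f i = f i} = Set.univ := by ext i; simp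
    unfold rel
    rw [this]
    exact Filter.univ_mem
  · intro f g h
    refine Filter.mem_of_superset h fun i hi => ?_
    simp only [Set.mem_setOf_eq] at hi ⊢
    exact hi.symm
  · intro f g hgroup h1 h2
    refine Filter.mem_of_superset (Filter.inter_mem h1 h2) fun i hi => ?_
    simp only [Set.mem_inter_iff, Set.mem_setOf_eq] at hi ⊢
    exact hi.1.trans hi.2

theorem rel_mk_eq {α : I → Type v} {f g : ∀ i, α i} :
    Quot.mk (rel D α) f = Quot.mk (rel D α) g ↔ rel D α f g := by
  rw [Quot.eq, (rel_equiv D α).eqvGen_iff]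

theorem rel_map {α : I → Type v} {β : I → Type w} (F : ∀ i, α i → β i) :
    ∀ f g, rel D α f g → rel D β (fun i => F i (f i)) (fun i => F i (g i)) := by
  intro f g h
  refine Filter.mem_of_superset h fun i hi => ?_
  simp only [Set.mem_setOf_eq] at hi ⊢
  rw [hi]

/-- the cardinal of the ultraproduct of `Fin (g i)` -/
noncomputable def M (g : I → ℕ) : Cardinal.{u} := #(Quot (rel D (fun i => Fin (g i))))

/-- congruence of ultraproducts under pointwise equivalences -/
noncomputable def quotCongr {α : I → Type v} {β : I → Type w} (e : ∀ i, α i ≃ β i) :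
    Quot (rel D α) ≃ Quot (rel D β) where
  toFun := Quot.map (fun f i => e i (f i)) (rel_map D (fun i => e i))
  invFun := Quot.map (fun f i => (e i).symm (f i)) (rel_map D (fun i => (e i).symm))
  left_inv := by
    rintro ⟨f⟩
    exact congrArg (Quot.mk _) (funext fun i => (e i).symm_apply_apply (f i))
  right_inv := by
    rintro ⟨f⟩
    exact congrArg (Quot.mk _) (funext fun i => (e i).apply_symm_apply (f i))

theorem M_mono_ae {a b : I → ℕ} (hb : ∀ i, 0 < b i)
    (hab : {i | a i ≤ b i} ∈ D) : M D a ≤ M D b := by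
  classical
  refine mk_le_of_injective
    (f := Quot.map (fun f i => if h : a i ≤ b i then Fin.castLE h (f i) else ⟨0, hb i⟩)
      (fun f g hr => rel_map D (fun i x => if h : a i ≤ b i then Fin.castLE h x else ⟨0, hb i⟩) f g hr)) ?_
  rintro ⟨f⟩ ⟨g⟩ h
  have h' := (rel_mk_eq D).mp h
  refine Quot.sound (Filter.mem_of_superset (Filter.inter_mem h' hab) fun i hi => ?_)
  obtain ⟨h1, h2⟩ := hi
  simp only [Set.mem_setOf_eq] at h1 h2 ⊢
  rw [dif_pos h2, dif_pos h2] at h1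
  exact Fin.castLE_injective h2 h1

theorem M_const_le (c : ℕ) : M D (fun _ => c) ≤ c := by
  classical
  have key : ∀ q : Quot (rel D fun _ : I => Fin c),
      ∃ v : Fin c, Quot.mk (rel D fun _ : I => Fin c) (fun _ => v) = q := by
    rintro ⟨f⟩
    by_contra hcon
    push_neg at hcon
    have hv : ∀ v : Fin c, {i | (fun _ : I => v) i = f i}ᶜ ∈ D := by
      intro v
      rw [Ultrafilter.compl_mem_iff_notMem]
      intro hmem
      exact hcon v (Quot.sound hmem)
    have hI : (⋂ v : Fin c, {i | (fun _ : I => v) i = f i}ᶜ) ∈ D := Filter.iInter_mem.mpr hv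
    have hempty : (⋂ v : Fin c, {i | (fun _ : I => v) i = f i}ᶜ) = ∅ := by
      ext i
      simp only [Set.mem_iInter, Set.mem_compl_iff, Set.mem_setOf_eq, Set.mem_empty_iff_false,
        iff_false, not_forall, not_not]
      exact ⟨f i, rfl⟩
    rw [hempty] at hI
    exact Filter.empty_notMem (D : Filter I) hI
  have inj : Function.Injective (fun q => (ULift.up ((key q).choose) : ULift.{u} (Fin c))) := by
    intro q q' h
    have h' : (key q).choose = (key q').choose := congrArg ULift.down h
    rw [← (key q).choose_spec, ← (key q').choose_spec, h']
  calc M D (fun _ => c) ≤ #(ULift.{u} (Fin c)) := mk_le_of_injective inj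
    _ = c := by simp

theorem M_mul (a b : I → ℕ) : M D (fun i => a i * b i) ≤ M D a * M D b := by
  have inj : Function.Injective (fun q : Quot (rel D fun i => Fin (a i * b i)) =>
      (Quot.map (fun f i => (finProdFinEquiv.symm (f i)).1)
        (fun f g hr => rel_map D (fun i (x : Fin (a i * b i)) => (finProdFinEquiv.symm x).1) f g hr) q,
       Quot.map (fun f i => (finProdFinEquiv.symm (f i)).2)
        (fun f g hr => rel_map D (fun i (x : Fin (a i * b i)) => (finProdFinEquiv.symm x).2) f g hr) q)) := by
    rintro ⟨f⟩ ⟨g⟩ h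
    simp only [Prod.mk.injEq] at h
    have h1 := (rel_mk_eq D).mp h.1
    have h2 := (rel_mk_eq D).mp h.2
    refine Quot.sound (Filter.mem_of_superset (Filter.inter_mem h1 h2) fun i hi => ?_)
    obtain ⟨e1, e2⟩ := hi
    simp only [Set.mem_setOf_eq] at e1 e2 ⊢
    have : finProdFinEquiv.symm (f i) = finProdFinEquiv.symm (g i) := Prod.ext e1 e2
    exact finProdFinEquiv.symm.injective this
  calc M D (fun i => a i * b i)
      ≤ #(Quot (rel D fun i => Fin (a i)) × Quot (rel D fun i => Fin (b i))) :=
        mk_le_of_injective inj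
    _ = M D a * M D b := by rw [mk_prod, lift_id, lift_id]; rfl

theorem M_pow (a : I → ℕ) (e : ℕ) : M D (fun i => a i ^ e) ≤ M D a ^ e := by
  induction e with
  | zero =>
    simp only [pow_zero]
    exact_mod_cast M_const_le D 1
  | succ e ih =>
    have hfe : (fun i => a i ^ (e + 1)) = fun i => a i ^ e * a i :=
      funext fun i => pow_succ _ _
    rw [hfe, pow_succ]
    exact (M_mul D _ _).trans (mul_le_mul_left ih _)

theorem aleph0_le_M {g : I → ℕ} (hg : ∀ i, 0 < g i)
    (hub : ∀ r : ℕ, {i | r ≤ g i} ∈ D) : ℵ₀ ≤ M D g := by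
  have inj : Function.Injective (fun r : ULift.{u} ℕ =>
      Quot.mk (rel D fun i => Fin (g i))
        (fun i => (⟨min r.down (g i - 1), by have := hg i; omega⟩ : Fin (g i)))) := by
    rintro ⟨r⟩ ⟨r'⟩ h
    suffices hrr : r = r' by rw [hrr]
    by_contra hne
    have hrel := (rel_mk_eq D).mp h
    have hbig := hub (max r r' + 1)
    obtain ⟨i, hi1, hi2⟩ := Ultrafilter.nonempty_of_mem (Filter.inter_mem hrel hbig)
    simp only [Set.mem_setOf_eq] at hi1 hi2
    have hval : min r (g i - 1) = min r' (g i - 1) := congrArg Fin.val hi1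
    omega
  calc (ℵ₀ : Cardinal.{u}) = #(ULift.{u} ℕ) := by simp
    _ ≤ M D g := mk_le_of_injective inj

/-- iterated square root bounds -/
theorem T_pos {x : ℕ} (hx : 0 < x) (m : ℕ) : 0 < Nat.sqrt^[m] x := by
  induction m with
  | zero => simpa
  | succ m ih => rw [Function.iterate_succ_apply']; exact Nat.sqrt_pos.mpr ih

theorem T_le_self (x m : ℕ) : Nat.sqrt^[m] x ≤ x := by
  induction m with
  | zero => simp
  | succ m ih =>
    rw [Function.iterate_succ_apply']
    exact (Nat.sqrt_le_self _).trans ih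

theorem le_T_pow {x : ℕ} (hx : 0 < x) (m : ℕ) :
    x ≤ (2 * Nat.sqrt^[m] x) ^ 4 ^ m := by
  induction m with
  | zero => simpa using Nat.le_mul_of_pos_left x (by norm_num : (0:ℕ) < 2)
  | succ m ih =>
    have hTm1 := T_pos hx (m + 1)
    have step : Nat.sqrt^[m] x ≤ (Nat.sqrt^[m+1] x + 1) ^ 2 := by
      rw [Function.iterate_succ_apply']
      calc Nat.sqrt^[m] x
          ≤ ((Nat.sqrt^[m] x).sqrt + 1) * ((Nat.sqrt^[m] x).sqrt + 1) :=
            le_of_lt (Nat.lt_succ_sqrt _)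
        _ = ((Nat.sqrt^[m] x).sqrt + 1) ^ 2 := (sq _).symm
    have step2 : 2 * Nat.sqrt^[m] x ≤ (2 * Nat.sqrt^[m+1] x) ^ 4 := by
      have h1 : Nat.sqrt^[m+1] x + 1 ≤ 2 * Nat.sqrt^[m+1] x := by omega
      calc 2 * Nat.sqrt^[m] x ≤ 2 * (Nat.sqrt^[m+1] x + 1) ^ 2 :=
            Nat.mul_le_mul_left _ step
        _ ≤ 2 * (2 * Nat.sqrt^[m+1] x) ^ 2 :=
            Nat.mul_le_mul_left _ (Nat.pow_le_pow_left h1 2)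
        _ ≤ (2 * Nat.sqrt^[m+1] x) ^ 2 * (2 * Nat.sqrt^[m+1] x) ^ 2 := by
            refine Nat.mul_le_mul_right _ ?_
            nlinarith
        _ = (2 * Nat.sqrt^[m+1] x) ^ 4 := by ring
    calc x ≤ (2 * Nat.sqrt^[m] x) ^ 4 ^ m := ih
      _ ≤ ((2 * Nat.sqrt^[m+1] x) ^ 4) ^ 4 ^ m := Nat.pow_le_pow_left step2 _
      _ = (2 * Nat.sqrt^[m+1] x) ^ 4 ^ (m + 1) := by
          rw [← pow_mul, pow_succ, Nat.mul_comm (4 ^ m) 4]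

theorem prod_T_le {x : ℕ} (hx : 0 < x) (M : ℕ) :
    ∏ m ∈ Finset.range M, Nat.sqrt^[m + 1] x ≤ x := by
  have key : ∀ M, Nat.sqrt^[M] x * ∏ m ∈ Finset.range M, Nat.sqrt^[m + 1] x ≤ x := by
    intro M
    induction M with
    | zero => simp
    | succ M ih =>
      rw [Finset.prod_range_succ]
      calc Nat.sqrt^[M+1] x * ((∏ m ∈ Finset.range M, Nat.sqrt^[m + 1] x) * Nat.sqrt^[M+1] x)
          = (Nat.sqrt^[M+1] x * Nat.sqrt^[M+1] x) * ∏ m ∈ Finset.range M, Nat.sqrt^[m + 1] x := by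
            ring
        _ ≤ Nat.sqrt^[M] x * ∏ m ∈ Finset.range M, Nat.sqrt^[m + 1] x := by
            refine Nat.mul_le_mul_right _ ?_
            rw [Function.iterate_succ_apply', ← sq]
            exact Nat.sqrt_le' _
        _ ≤ x := ih
  calc ∏ m ∈ Finset.range M, Nat.sqrt^[m + 1] x
      ≤ Nat.sqrt^[M] x * ∏ m ∈ Finset.range M, Nat.sqrt^[m + 1] x :=
        Nat.le_mul_of_pos_left _ (T_pos hx M)
    _ ≤ x := key M

end ShelahUP

open ShelahUP in
/-- If `D` is an ultrafilter on `I` and the ultraproduct of a family of finite sets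
`n i` with respect to `D` has infinite cardinality `lam`, then `lam ^ ℵ₀ = lam`. -/
theorem stmt_0 {I : Type u} (D : Ultrafilter I) (n : I → Type u) [∀ i, Finite (n i)]
    (lam : Cardinal.{u})
    (hlam : lam = #(Quot (fun f g : (∀ i, n i) => {i | f i = g i} ∈ D)))
    (hinf : ℵ₀ ≤ lam) : lam ^ ℵ₀ = lam := by
  classical
  -- every n i is nonempty
  have hne : ∀ i, Nonempty (n i) := by
    by_contra hcon
    push_neg at hcon
    obtain ⟨i0, hi0⟩ := hcon
    have hE : IsEmpty (∀ i, n i) := ⟨fun f => hi0.false (f i0)⟩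
    have hE2 : IsEmpty (Quot (fun f g : (∀ i, n i) => {i | f i = g i} ∈ D)) := by
      constructor; rintro ⟨f⟩; exact hE.false f
    rw [hlam, Cardinal.mk_eq_zero _] at hinf
    exact Cardinal.aleph0_pos.not_ge hinf
  let k : I → ℕ := fun i => Nat.card (n i)
  have hkpos : ∀ i, 0 < k i := fun i => Nat.card_pos
  -- lam is the cardinal of the ultraproduct of Fin (k i)
  have hlamM : lam = M D k := by
    rw [hlam]
    exact Cardinal.mk_congr (quotCongr D (fun i => Finite.equivFin (n i)))
  -- k is unbounded along D
  have hub : ∀ r : ℕ, {i | r ≤ k i} ∈ D := by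
    intro r
    by_contra hmem
    have hc : {i | r ≤ k i}ᶜ ∈ D := Ultrafilter.compl_mem_iff_notMem.mpr hmem
    have hr1 : 0 < r := by
      rcases Nat.eq_zero_or_pos r with h | h
      · subst h
        have huniv : {i : I | 0 ≤ k i} = Set.univ := by ext i; simp
        rw [huniv] at hmem
        exact absurd Filter.univ_mem hmem
      · exact h
    have hle : M D k ≤ M D (fun _ => r) := by
      refine M_mono_ae D (fun _ => hr1) (Filter.mem_of_superset hc fun i hi => ?_)
      simp only [Set.mem_compl_iff, Set.mem_setOf_eq] at hi ⊢
      omega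
    have hfin : lam ≤ r := hlamM ▸ (hle.trans (M_const_le D r))
    exact (Cardinal.nat_lt_aleph0 r).not_ge (hinf.trans hfin)
  -- the factor functions
  let h : ℕ → I → ℕ := fun m i => if m ≤ k i then Nat.sqrt^[m + 1] (k i) else 1
  have hhval : ∀ m i, h m i = if m ≤ k i then Nat.sqrt^[m + 1] (k i) else 1 := fun _ _ => rfl
  have hhpos : ∀ m i, 0 < h m i := by
    intro m i
    rw [hhval]
    by_cases hm : m ≤ k i
    · simp only [if_pos hm]; exact T_pos (hkpos i) (m + 1)
    · simp [if_neg hm]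
  have hhle : ∀ m i, h m i ≤ k i := by
    intro m i
    rw [hhval]
    by_cases hm : m ≤ k i
    · simp only [if_pos hm]; exact T_le_self _ _
    · simp only [if_neg hm]; exact hkpos i
  -- each M D (h m) equals lam
  have hmu : ∀ m : ℕ, M D (h m) = lam := by
    intro m
    have hub' : ∀ r : ℕ, {i | r ≤ h m i} ∈ D := by
      intro r
      refine Filter.mem_of_superset
        (Filter.inter_mem (hub m) (hub ((2 * r) ^ 4 ^ (m + 1)))) fun i hi => ?_
      obtain ⟨h1, h2⟩ := hi
      simp only [Set.mem_setOf_eq] at h1 h2 ⊢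
      rw [hhval]
      simp only [if_pos h1]
      by_contra hlt
      push_neg at hlt
      have hb := le_T_pow (hkpos i) (m + 1)
      have hstrict : (2 * Nat.sqrt^[m+1] (k i)) ^ 4 ^ (m + 1) < (2 * r) ^ 4 ^ (m + 1) :=
        Nat.pow_lt_pow_left (by omega) (by positivity)
      omega
    have hinf' : ℵ₀ ≤ M D (h m) := aleph0_le_M D (hhpos m) hub'
    have hle1 : M D (h m) ≤ M D k := by
      refine M_mono_ae D hkpos ?_
      have huniv : {i | h m i ≤ k i} = Set.univ := by ext i; simpa using hhle m i
      rw [huniv]; exact Filter.univ_mem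
    have hle2 : M D k ≤ M D (h m) := by
      have hkey : M D k ≤ M D (fun i => 2 ^ 4 ^ (m + 1) * h m i ^ 4 ^ (m + 1)) := by
        refine M_mono_ae D (fun i => by have := hhpos m i; positivity) ?_
        refine Filter.mem_of_superset (hub m) fun i hi => ?_
        simp only [Set.mem_setOf_eq] at hi ⊢
        rw [hhval]
        simp only [if_pos hi]
        calc k i ≤ (2 * Nat.sqrt^[m+1] (k i)) ^ 4 ^ (m + 1) := le_T_pow (hkpos i) (m + 1)
          _ = 2 ^ 4 ^ (m + 1) * Nat.sqrt^[m+1] (k i) ^ 4 ^ (m + 1) := by rw [Nat.mul_pow]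
      have hmul : M D (fun i => 2 ^ 4 ^ (m + 1) * h m i ^ 4 ^ (m + 1)) ≤
          ((2 ^ 4 ^ (m + 1) : ℕ) : Cardinal) * M D (h m) ^ 4 ^ (m + 1) := by
        calc M D (fun i => 2 ^ 4 ^ (m + 1) * h m i ^ 4 ^ (m + 1))
            ≤ M D (fun _ => 2 ^ 4 ^ (m + 1)) * M D (fun i => h m i ^ 4 ^ (m + 1)) := M_mul D _ _
          _ ≤ ((2 ^ 4 ^ (m + 1) : ℕ) : Cardinal) * M D (h m) ^ 4 ^ (m + 1) :=
              mul_le_mul' (M_const_le D _) (M_pow D _ _)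
      have heq : ((2 ^ 4 ^ (m + 1) : ℕ) : Cardinal) * M D (h m) ^ 4 ^ (m + 1) = M D (h m) := by
        rw [Cardinal.power_nat_eq hinf' (Nat.one_le_iff_ne_zero.mpr (by positivity))]
        refine Cardinal.mul_eq_right hinf' ((Cardinal.nat_lt_aleph0 _).le.trans hinf') ?_
        exact_mod_cast (by positivity : (0:ℕ) < 2 ^ 4 ^ (m+1)).ne'
      rw [← heq]
      exact hkey.trans hmul
    rw [hlamM]
    exact le_antisymm hle1 hle2
  -- the product function G
  let G : I → ℕ := fun i => ∏ j : Fin (k i + 1), h j.1 i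
  have hGle : ∀ i, G i ≤ k i := by
    intro i
    show (∏ j : Fin (k i + 1), h j.1 i) ≤ k i
    rw [Fin.prod_univ_eq_prod_range (fun j => h j i) (k i + 1)]
    have heq : ∏ j ∈ Finset.range (k i + 1), h j i =
        ∏ j ∈ Finset.range (k i + 1), Nat.sqrt^[j + 1] (k i) := by
      refine Finset.prod_congr rfl fun j hj => ?_
      rw [Finset.mem_range] at hj
      rw [hhval]; simp only [if_pos (by omega : j ≤ k i)]
    rw [heq]
    exact prod_T_le (hkpos i) _
  -- surjection from the ultraproduct of G onto the countable product
  let ψ : (∀ i, Fin (G i)) → ∀ m : ULift.{u} ℕ, Quot (rel D fun i => Fin (h m.down i)) :=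
    fun f m =>
      Quot.mk _ (fun i =>
        if hm : m.down ≤ k i then
          (finPiFinEquiv.symm (f i)) ⟨m.down, by omega⟩
        else ⟨0, hhpos m.down i⟩)
  have resp : ∀ f g, rel D (fun i => Fin (G i)) f g → ψ f = ψ g := by
    intro f g hfg
    funext m
    refine Quot.sound (Filter.mem_of_superset hfg fun i hi => ?_)
    simp only [Set.mem_setOf_eq] at hi ⊢
    rw [hi]
  have hsurj : Function.Surjective (Quot.lift ψ resp) := by
    intro c
    refine ⟨Quot.mk _ (fun i => finPiFinEquiv (fun j : Fin (k i + 1) => (c ⟨j.1⟩).out i)), ?_⟩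
    funext m
    show ψ _ m = c m
    conv_rhs => rw [← Quot.out_eq (c m)]
    refine Quot.sound (Filter.mem_of_superset (hub m.down) fun i hi => ?_)
    simp only [Set.mem_setOf_eq] at hi ⊢
    rw [dif_pos hi]
    simp only [Equiv.symm_apply_apply]
  have key1 : #(∀ m : ULift.{u} ℕ, Quot (rel D fun i => Fin (h m.down i))) ≤ M D G :=
    mk_le_of_surjective hsurj
  have key2 : #(∀ m : ULift.{u} ℕ, Quot (rel D fun i => Fin (h m.down i))) = lam ^ ℵ₀ := by
    rw [Cardinal.mk_pi]
    have heq : (Cardinal.prod fun m : ULift.{u} ℕ =>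
        #(Quot (rel D fun i => Fin (h m.down i)))) =
        Cardinal.prod fun _ : ULift.{u} ℕ => lam := by
      congr 1
      funext m
      exact hmu m.down
    rw [heq, Cardinal.prod_const, Cardinal.lift_id, Cardinal.lift_id, Cardinal.mk_uLift,
      Cardinal.mk_nat, Cardinal.lift_aleph0]
  have key3 : M D G ≤ lam := by
    rw [hlamM]
    refine M_mono_ae D hkpos ?_
    have huniv : {i | G i ≤ k i} = Set.univ := by ext i; simpa using hGle i
    rw [huniv]; exact Filter.univ_mem
  have hle : lam ^ ℵ₀ ≤ lam := by
    rw [← key2]; exact key1.trans key3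
  have hge : lam ≤ lam ^ ℵ₀ := by
    conv_lhs => rw [← Cardinal.power_one lam]
    refine Cardinal.power_le_power_left ?_ Cardinal.one_le_aleph0
    rintro rfl
    exact Cardinal.aleph0_pos.not_ge hinf
  exact le_antisymm hle hge
end

section
/- For a strongly inaccessible cardinal μ, the following are equivalent: (1) every μ-tree has a branch of length μ (i.e., μ has the tree property); (2) for every family of functions f_α : α → α (α < μ) there is a function f : μ → μ such that for every α < μ there exists β with α ≤ β < μ and f_β ↾ α = f ↾ α. -/
open Cardinal

/-- `μ` has the tree property: every `μ`-tree (a tree of height `μ`, all of whose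
levels have cardinality `< μ`, with each point's predecessors linearly ordered and
hitting every lower level) has a branch of length `μ`. -/
def TreeProp (μ : Cardinal) : Prop :=
  ∀ (T : Type) (lt : T → T → Prop) (ht : T → Ordinal),
    (∀ s t u, lt s t → lt t u → lt s u) →
    (∀ t, ¬ lt t t) →
    (∀ s t, lt s t → ht s < ht t) →
    (∀ t, ∀ β < ht t, ∃ s, lt s t ∧ ht s = β) →
    (∀ s t u, lt s u → lt t u → (lt s t ∨ s = t ∨ lt t s)) →
    (∀ t, ht t < μ.ord) →
    (∀ α < μ.ord, ∃ t, ht t = α) →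
    (∀ α : Ordinal, #{t | ht t = α} < μ) →
    ∃ B : Set T, (∀ s ∈ B, ∀ t ∈ B, lt s t ∨ s = t ∨ lt t s) ∧
      ∀ α < μ.ord, ∃ t ∈ B, ht t = α

/-- For every family of functions `f_α : α → α` (for `α < μ`, coded as `f α`)
there is `f : μ → μ` such that for every `α < μ` some `β` with `α ≤ β < μ`
satisfies `f_β ↾ α = f ↾ α`. -/
def FuncProp (μ : Cardinal) : Prop :=
  ∀ f : Ordinal → Ordinal → Ordinal,
    (∀ α < μ.ord, ∀ β < α, f α β < α) →
    ∃ g : Ordinal → Ordinal, (∀ β < μ.ord, g β < μ.ord) ∧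
      ∀ α < μ.ord, ∃ β, α ≤ β ∧ β < μ.ord ∧ ∀ γ < α, f β γ = g γ

namespace Stmt7Aux


noncomputable section

abbrev O (μ : Cardinal.{0}) : Type := (Cardinal.ord μ).ToType

def A {μ : Cardinal.{0}} (x : O μ) : Ordinal :=
  @Ordinal.typein (O μ) (· < ·) isWellOrder_lt x

theorem A_lt {μ : Cardinal} (x : O μ) : A x < μ.ord :=
  Ordinal.typein_lt_self x

theorem A_inj {μ : Cardinal} : Function.Injective (A (μ := μ)) :=
  (@Ordinal.typein (O μ) (· < ·) isWellOrder_lt).injective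

theorem A_surj {μ : Cardinal} {α : Ordinal} (h : α < μ.ord) : ∃ x : O μ, A x = α := by
  have h' : α < @Ordinal.type (O μ) (· < ·) isWellOrder_lt := by
    rwa [Ordinal.type_toType]
  obtain ⟨x, hx⟩ := @Ordinal.typein_surj (O μ) (· < ·) isWellOrder_lt _ h'
  exact ⟨x, hx⟩

theorem mk_seg_lt {μ : Cardinal} {α : Ordinal} (hα : α < μ.ord) :
    #{x : O μ // A x < α} < μ := by
  have hemb : Function.Injective
      (fun x : {x : O μ // A x < α} => (Ordinal.ToType.mk (o := α)) ⟨A x.1, x.2⟩) := by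
    intro x y hxy
    have h2 := (Ordinal.ToType.mk (o := α)).injective hxy
    have h3 : A x.1 = A y.1 := congrArg Subtype.val h2
    exact Subtype.ext (A_inj h3)
  calc #{x : O μ // A x < α} ≤ #(α.ToType) := mk_le_of_injective hemb
    _ = α.card := Cardinal.mk_toType α
    _ < μ := Cardinal.lt_ord.1 hα

theorem treeProp_to_funcProp {μ : Cardinal} (h1 : ℵ₀ < μ) (h2 : μ.IsRegular)
    (h3 : μ.IsStrongLimit) (htp : TreeProp μ) : FuncProp μ := by
  intro f hfb
  classical
  have hord_lim : Order.IsSuccLimit (Cardinal.ord μ) := Cardinal.isSuccLimit_ord h2.aleph0_le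
  have hsucc : ∀ {a : Ordinal}, a < μ.ord → a + 1 < μ.ord := by
    intro a ha
    rw [Ordinal.add_one_eq_succ]
    exact hord_lim.succ_lt ha
  have h0ord : (0 : Ordinal) < μ.ord := hord_lim.pos
  obtain ⟨d0, hd0⟩ := A_surj (μ := μ) h0ord
  have hOcard : #(O μ) = μ := by rw [Cardinal.mk_toType, Cardinal.card_ord]
  have hOinf : Infinite (O μ) := by
    rw [Cardinal.infinite_iff, hOcard]; exact h1.le
  -- the evaluation of iterated functions
  set vl : List (O μ) → O μ → Ordinal :=
    fun l x => l.foldr (fun γ v => if A γ < v then f v (A γ) else 0) (A x) with hvl_def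
  have hvl_nil : ∀ x, vl [] x = A x := fun x => rfl
  have hvl_cons : ∀ γ l x, vl (γ :: l) x =
      if A γ < vl l x then f (vl l x) (A γ) else 0 := fun γ l x => rfl
  have hvl_lt : ∀ l x, vl l x < μ.ord := by
    intro l x
    induction l with
    | nil => exact A_lt x
    | cons γ l ih =>
      rw [hvl_cons]
      by_cases h : A γ < vl l x
      · rw [if_pos h]
        exact (hfb (vl l x) ih (A γ) h).trans ih
      · rw [if_neg h]; exact h0ord
  -- index type of the "field" of sets
  set ι : Type := List (O μ) × List (O μ) × O μ × Fin 3 with hι_def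
  set S : ι → Set (O μ) := fun i =>
    {x | if i.2.2.2 = 0 then vl i.1 x < vl i.2.1 x
         else if i.2.2.2 = 1 then vl i.1 x < A i.2.2.1
         else vl i.1 x = A i.2.2.1} with hS_def
  set iLT : List (O μ) → List (O μ) → ι := fun l₁ l₂ => (l₁, l₂, d0, 0) with hiLT
  set iBnd : List (O μ) → O μ → ι := fun l d => (l, [], d, 1) with hiBnd
  set iVal : List (O μ) → O μ → ι := fun l d => (l, [], d, 2) with hiVal
  have hS_lt : ∀ l₁ l₂ x, x ∈ S (iLT l₁ l₂) ↔ vl l₁ x < vl l₂ x := by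
    intro l₁ l₂ x; simp [hS_def, hiLT]
  have hS_bnd : ∀ l d x, x ∈ S (iBnd l d) ↔ vl l x < A d := by
    intro l d x; simp [hS_def, hiBnd]
  have hS_val : ∀ l d x, x ∈ S (iVal l d) ↔ vl l x = A d := by
    intro l d x; simp [hS_def, hiVal]
  -- an injection of ι into O μ, giving ranks
  have hιle : #ι ≤ #(O μ) := by
    have hμμ : μ * μ = μ := Cardinal.mul_eq_self h2.aleph0_le
    have h3μ : (3 : Cardinal) ≤ μ := le_of_lt ((by exact_mod_cast Cardinal.nat_lt_aleph0 3 : (3:Cardinal) < ℵ₀).trans h1)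
    have hstep : ∀ c : Cardinal, c ≤ μ → μ * c ≤ μ := by
      intro c hc
      calc μ * c ≤ μ * μ := mul_le_mul_right hc μ
        _ = μ := hμμ
    rw [hOcard, hι_def]
    rw [Cardinal.mk_prod, Cardinal.mk_prod, Cardinal.mk_prod]
    simp only [Cardinal.lift_id, Cardinal.mk_list_eq_mk, hOcard, Cardinal.mk_fintype,
      Fintype.card_fin]
    push_cast
    exact hstep _ (hstep _ (hstep _ h3μ))
  have hemb : Nonempty (ι ↪ O μ) := (Cardinal.le_def _ _).1 hιle
  set jι : ι ↪ O μ := hemb.some with hjι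
  set rank : ι → Ordinal := fun i => A (jι i) with hrank
  have hrank_lt : ∀ i, rank i < μ.ord := fun i => A_lt _
  have hrank_seg : ∀ {α : Ordinal}, α < μ.ord → #{i : ι // rank i < α} < μ := by
    intro α hα
    have : Function.Injective (fun i : {i : ι // rank i < α} => (⟨jι i.1, i.2⟩ : {x : O μ // A x < α})) := by
      intro i j hij
      exact Subtype.ext (jι.injective (congrArg Subtype.val hij))
    exact (mk_le_of_injective this).trans_lt (mk_seg_lt hα)
  -- the tree
  set T : Type := {p : O μ × (ι → Bool) //
    (∀ η < μ.ord, ∃ x : O μ, η ≤ A x ∧ ∀ i : ι, rank i < A p.1 → (x ∈ S i ↔ p.2 i = true)) ∧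
    (∀ i : ι, ¬ rank i < A p.1 → p.2 i = false)} with hT_def
  set tlt : T → T → Prop := fun p q =>
    A p.1.1 < A q.1.1 ∧ ∀ i : ι, rank i < A p.1.1 → p.1.2 i = q.1.2 i with htlt
  set tht : T → Ordinal := fun p => A p.1.1 with htht
  obtain ⟨B, hB1, hB2⟩ := htp T tlt tht
    (by -- transitivity
      rintro s t u ⟨h1st, h2st⟩ ⟨h1tu, h2tu⟩
      exact ⟨h1st.trans h1tu, fun i hi => (h2st i hi).trans (h2tu i (hi.trans h1st))⟩)
    (by rintro t ⟨h1t, _⟩; exact absurd h1t (lt_irrefl _))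
    (by rintro s t ⟨h1st, _⟩; exact h1st)
    (by -- predecessors exist
      intro t β hβ
      have hβμ : β < μ.ord := hβ.trans (A_lt _)
      obtain ⟨b', hb'⟩ := A_surj hβμ
      refine ⟨⟨(b', fun i => if rank i < β then t.1.2 i else false), ?_, ?_⟩, ?_, ?_⟩
      · intro η hη
        obtain ⟨x, hx1, hx2⟩ := t.2.1 η hη
        refine ⟨x, hx1, ?_⟩
        intro i hi
        rw [hb'] at hi
        show x ∈ S i ↔ (if rank i < β then t.1.2 i else false) = true
        rw [if_pos hi]
        exact hx2 i (hi.trans hβ)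
      · intro i hi
        rw [hb'] at hi
        show (if rank i < β then t.1.2 i else false) = false
        rw [if_neg hi]
      · refine ⟨?_, ?_⟩
        · show A b' < A t.1.1
          rw [hb']; exact hβ
        · intro i hi
          show (if rank i < β then t.1.2 i else false) = t.1.2 i
          rw [hb'] at hi
          rw [if_pos hi]
      · show A b' = β
        exact hb')
    (by -- linearity of predecessors
      rintro s t u ⟨h1su, h2su⟩ ⟨h1tu, h2tu⟩
      rcases lt_trichotomy (A s.1.1) (A t.1.1) with hlt | heq | hgt
      · left
        exact ⟨hlt, fun i hi => (h2su i hi).trans ((h2tu i (hi.trans hlt)).symm)⟩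
      · right; left
        apply Subtype.ext
        apply Prod.ext
        · exact A_inj heq
        · funext i
          by_cases hi : rank i < A s.1.1
          · rw [h2su i hi, h2tu i (heq ▸ hi)]
          · rw [s.2.2 i hi, t.2.2 i (heq ▸ hi)]
      · right; right
        exact ⟨hgt, fun i hi => (h2tu i hi).trans ((h2su i (hi.trans hgt)).symm)⟩)
    (fun t => A_lt _)
    (by -- every level is hit
      intro α hα
      obtain ⟨b, hb⟩ := A_surj hα
      have hK : #({i : ι // rank i < α} → Bool) < μ := by
        have h2K : #({i : ι // rank i < α} → Bool) = 2 ^ #{i : ι // rank i < α} := by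
          rw [← Cardinal.power_def, Cardinal.mk_bool]
        rw [h2K]
        exact h3.two_power_lt (hrank_seg hα)
      set τ : O μ → ({i : ι // rank i < α} → Bool) :=
        fun x k => if x ∈ S k.1 then true else false with hτ
      have hclaim : ∃ v : {i : ι // rank i < α} → Bool,
          ∀ η < μ.ord, ∃ x, η ≤ A x ∧ τ x = v := by
        by_contra hcon
        push_neg at hcon
        have hcon' : ∀ v : {i : ι // rank i < α} → Bool, ∃ η, η < μ.ord ∧
            ∀ x, τ x = v → A x < η := by
          intro v
          obtain ⟨η, hη1, hη2⟩ := hcon v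
          exact ⟨η, hη1, fun x hx => by
            rcases lt_or_ge (A x) η with h | h
            · exact h
            · exact absurd hx (hη2 x h)⟩
        choose η hη1 hη2 using hcon'
        have hσ : (⨆ v, η v) < μ.ord :=
          Cardinal.iSup_lt_ord_of_isRegular h2 (by rwa [Cardinal.mk_congr (Equiv.refl _)]) hη1
        obtain ⟨x, hx⟩ := A_surj hσ
        have := hη2 (τ x) x rfl
        rw [hx] at this
        exact absurd (Ordinal.le_iSup η (τ x)) (not_le.2 this)
      obtain ⟨v, hv⟩ := hclaim
      refine ⟨⟨(b, fun i => if h : rank i < α then v ⟨i, h⟩ else false), ?_, ?_⟩, ?_⟩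
      · intro η hη
        obtain ⟨x, hx1, hx2⟩ := hv η hη
        refine ⟨x, hx1, ?_⟩
        intro i hi
        rw [hb] at hi
        show x ∈ S i ↔ (if h : rank i < α then v ⟨i, h⟩ else false) = true
        rw [dif_pos hi, ← hx2]
        simp only [hτ]
        by_cases hxS : x ∈ S i
        · simp [hxS]
        · simp [hxS]
      · intro i hi
        rw [hb] at hi
        show (if h : rank i < α then v ⟨i, h⟩ else false) = false
        rw [dif_neg hi]
      · show A b = α
        exact hb)
    (by -- levels are small
      intro α
      rcases lt_or_ge α μ.ord with hα | hα
      · have hK : #({i : ι // rank i < α} → Bool) < μ := by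
          have h2K : #({i : ι // rank i < α} → Bool) = 2 ^ #{i : ι // rank i < α} := by
            rw [← Cardinal.power_def, Cardinal.mk_bool]
          rw [h2K]
          exact h3.two_power_lt (hrank_seg hα)
        refine lt_of_le_of_lt ?_ hK
        have hinj : Function.Injective
            (fun t : {t : T | tht t = α} => (fun k : {i : ι // rank i < α} => t.1.1.2 k.1)) := by
          intro a b hab
          have ha : A a.1.1.1 = α := a.2
          have hb : A b.1.1.1 = α := b.2
          apply Subtype.ext
          apply Subtype.ext
          apply Prod.ext
          · exact A_inj (ha.trans hb.symm)
          · funext i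
            by_cases hi : rank i < α
            · exact congrFun hab ⟨i, hi⟩
            · rw [a.1.2.2 i (by rwa [ha]), b.1.2.2 i (by rwa [hb])]
        exact mk_le_of_injective hinj
      · have hempty : {t : T | tht t = α} = ∅ := by
          apply Set.eq_empty_iff_forall_notMem.2
          intro t htα
          have : tht t < μ.ord := A_lt _
          rw [htα] at this
          exact absurd this (not_lt.2 hα)
        rw [hempty]
        simp only [Cardinal.mk_emptyCollection]
        exact h2.pos)
  -- now process the branch
  have hnode : ∀ ρ : Ordinal, ρ < μ.ord → ∃ t, t ∈ B ∧ tht t = ρ := by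
    intro ρ hρ
    obtain ⟨t, ht1, ht2⟩ := hB2 ρ hρ
    exact ⟨t, ht1, ht2⟩
  choose node hnodeB hnodeht using hnode
  set εs : ι → Bool := fun i =>
    (node (rank i + 1) (hsucc (hrank_lt i))).1.2 i with hεs
  have hcoh : ∀ t, t ∈ B → ∀ i : ι, rank i < tht t → t.1.2 i = εs i := by
    intro t htB i hi
    set u := node (rank i + 1) (hsucc (hrank_lt i)) with hu
    have huht : tht u = rank i + 1 := hnodeht _ _
    rcases hB1 t htB u (hnodeB _ _) with h | h | h
    · exact h.2 i hi
    · rw [h]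
    · exact (h.2 i (by show rank i < tht u; rw [huht]; exact lt_add_one _)).symm
  -- realization lemma
  have hreal : ∀ J : Set ι, #J < μ → ∀ η < μ.ord,
      ∃ x : O μ, η ≤ A x ∧ ∀ i ∈ J, (x ∈ S i ↔ εs i = true) := by
    intro J hJ η hη
    set ρ : Ordinal := ⨆ i : J, (rank i.1 + 1) with hρdef
    have hρ : ρ < μ.ord :=
      Cardinal.iSup_lt_ord_of_isRegular h2 hJ (fun i => hsucc (hrank_lt i.1))
    set t := node ρ hρ with htdef
    have htht' : tht t = ρ := hnodeht _ _
    obtain ⟨x, hx1, hx2⟩ := t.2.1 η hη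
    refine ⟨x, hx1, ?_⟩
    intro i hiJ
    have hiρ : rank i < ρ := by
      have : rank i + 1 ≤ ρ := Ordinal.le_iSup (fun i : J => rank i.1 + 1) ⟨i, hiJ⟩
      exact lt_of_lt_of_le (lt_add_one _) this
    have hiρ' : rank i < A t.1.1 := by
      show rank i < tht t
      rwa [htht']
    rw [hx2 i hiρ', hcoh t (hnodeB _ _) i (by rwa [htht'])]
  -- small-cardinality helpers
  have hsing : ∀ i : ι, #({i} : Set ι) < μ := by
    intro i
    rw [Cardinal.mk_singleton]
    exact lt_of_lt_of_le Cardinal.one_lt_aleph0 h1.le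
  -- basic consequences
  have hbig_nil : ∀ d : O μ, εs (iBnd [] d) = false ∧ εs (iVal [] d) = false := by
    intro d
    constructor
    · by_contra hcon
      rw [Bool.not_eq_false] at hcon
      obtain ⟨x, hx1, hx2⟩ := hreal {iBnd [] d} (hsing _) (A d + 1) (hsucc (A_lt d))
      have := (hx2 _ (Set.mem_singleton _)).2 hcon
      rw [hS_bnd] at this
      rw [hvl_nil] at this
      exact absurd (this.trans (lt_of_lt_of_le (lt_add_one _) hx1)) (lt_irrefl _)
    · by_contra hcon
      rw [Bool.not_eq_false] at hcon
      obtain ⟨x, hx1, hx2⟩ := hreal {iVal [] d} (hsing _) (A d + 1) (hsucc (A_lt d))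
      have := (hx2 _ (Set.mem_singleton _)).2 hcon
      rw [hS_val] at this
      rw [hvl_nil] at this
      rw [this] at hx1
      exact absurd hx1 (not_le.2 (lt_add_one _))
  set big : List (O μ) → Prop :=
    fun l => ∀ d : O μ, εs (iBnd l d) = false ∧ εs (iVal l d) = false with hbig_def
  -- existence of a minimal "big" germ
  have hmin : ∃ e : List (O μ), big e ∧ ∀ l, big l → εs (iLT l e) = false := by
    by_contra hcon
    push_neg at hcon
    have hcon' : ∀ e : List (O μ), big e → ∃ l, big l ∧ εs (iLT l e) = true := by
      intro e he
      obtain ⟨l, hl1, hl2⟩ := hcon e he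
      exact ⟨l, hl1, by rwa [← Bool.not_eq_false]⟩
    choose nxt hnxt1 hnxt2 using hcon'
    set seq : ℕ → {l : List (O μ) // big l} := fun n =>
      Nat.rec ⟨[], hbig_nil⟩ (fun _ p => ⟨nxt p.1 p.2, hnxt1 p.1 p.2⟩) n with hseq
    have hseqs : ∀ n, εs (iLT (seq (n+1)).1 (seq n).1) = true := by
      intro n
      exact hnxt2 (seq n).1 (seq n).2
    set J : Set ι := Set.range (fun n : ℕ => iLT (seq (n+1)).1 (seq n).1) with hJdef
    have hJcard : #J < μ := by
      refine lt_of_le_of_lt Cardinal.mk_range_le ?_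
      rw [Cardinal.mk_nat]
      exact h1
    obtain ⟨x, hx1, hx2⟩ := hreal J hJcard 0 h0ord
    have hdesc : ∀ n, vl (seq (n+1)).1 x < vl (seq n).1 x := by
      intro n
      have := (hx2 _ (Set.mem_range_self n)).2 (hseqs n)
      rwa [hS_lt] at this
    obtain ⟨a, ⟨n, hna⟩, hmin'⟩ := Ordinal.lt_wf.has_min
      (Set.range (fun n => vl (seq n).1 x)) ⟨_, Set.mem_range_self 0⟩
    exact hmin' _ (Set.mem_range_self (n+1)) (hna ▸ hdesc n)
  obtain ⟨e, hbig_e, hemin⟩ := hmin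
  -- the comparison fact: (γ :: e) is below e
  have hRγ : ∀ γ : O μ, εs (iLT (γ :: e) e) = true := by
    intro γ
    by_contra hcon
    rw [Bool.not_eq_true] at hcon
    set J : Set ι := {iLT (γ :: e) e, iBnd e γ, iVal e γ} with hJdef
    have hJcard : #J < μ := by
      refine lt_of_le_of_lt (Cardinal.mk_insert_le.trans
        (add_le_add_left (Cardinal.mk_insert_le.trans
          (add_le_add_left (le_of_eq (Cardinal.mk_singleton _)) 1)) 1)) ?_
      exact Cardinal.add_lt_of_lt h2.aleph0_le
        (Cardinal.add_lt_of_lt h2.aleph0_le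
          (lt_of_lt_of_le Cardinal.one_lt_aleph0 h1.le)
          (lt_of_lt_of_le Cardinal.one_lt_aleph0 h1.le))
        (lt_of_lt_of_le Cardinal.one_lt_aleph0 h1.le)
    obtain ⟨x, hx1, hx2⟩ := hreal J hJcard 0 h0ord
    have hnotlt : ¬ vl (γ :: e) x < vl e x := by
      have := hx2 (iLT (γ :: e) e) (by rw [hJdef]; left; rfl)
      rw [hS_lt] at this
      intro hcontra
      have := this.1 hcontra
      rw [hcon] at this
      exact Bool.false_ne_true this
    have hnotbnd : ¬ vl e x < A γ := by
      have := hx2 (iBnd e γ) (by rw [hJdef]; right; left; rfl)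
      rw [hS_bnd] at this
      intro hcontra
      have := this.1 hcontra
      rw [(hbig_e γ).1] at this
      exact Bool.false_ne_true this
    have hnotval : ¬ vl e x = A γ := by
      have := hx2 (iVal e γ) (by rw [hJdef]; right; right; rfl)
      rw [hS_val] at this
      intro hcontra
      have := this.1 hcontra
      rw [(hbig_e γ).2] at this
      exact Bool.false_ne_true this
    have hgt : A γ < vl e x := by
      rcases lt_trichotomy (vl e x) (A γ) with h | h | h
      · exact absurd h hnotbnd
      · exact absurd h hnotval
      · exact h
    apply hnotlt
    rw [hvl_cons, if_pos hgt]
    exact hfb (vl e x) (hvl_lt e x) (A γ) hgt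
  -- every coordinate gets a value
  have hval_ex : ∀ γ : O μ, ∃ d : O μ, εs (iVal (γ :: e) d) = true := by
    intro γ
    by_contra hcon
    push_neg at hcon
    have hno : ∀ d, εs (iVal (γ :: e) d) = false := by
      intro d
      exact Bool.eq_false_iff.2 (hcon d)
    by_cases hbnd : ∀ d, εs (iBnd (γ :: e) d) = false
    · have : big (γ :: e) := fun d => ⟨hbnd d, hno d⟩
      have h' := hemin (γ :: e) this
      rw [hRγ γ] at h'
      exact absurd h' (by decide)
    · push_neg at hbnd
      obtain ⟨d, hd⟩ := hbnd
      replace hd : εs (iBnd (γ :: e) d) = true := by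
        cases h : εs (iBnd (γ :: e) d) with
        | false => exact absurd h hd
        | true => rfl
      set J : Set ι := insert (iBnd (γ :: e) d)
        (Set.range (fun d' : {d' : O μ // A d' < A d} => iVal (γ :: e) d'.1)) with hJdef
      have hJcard : #J < μ := by
        refine lt_of_le_of_lt Cardinal.mk_insert_le ?_
        refine Cardinal.add_lt_of_lt h2.aleph0_le ?_
          (lt_of_lt_of_le Cardinal.one_lt_aleph0 h1.le)
        exact lt_of_le_of_lt Cardinal.mk_range_le (mk_seg_lt (A_lt d))
      obtain ⟨x, hx1, hx2⟩ := hreal J hJcard 0 h0ord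
      have hxbnd : vl (γ :: e) x < A d := by
        have := hx2 (iBnd (γ :: e) d) (Set.mem_insert _ _)
        rw [hS_bnd] at this
        exact this.2 hd
      obtain ⟨d', hd'⟩ := A_surj ((hxbnd).trans (A_lt d))
      have hd'lt : A d' < A d := by rw [hd']; exact hxbnd
      have := hx2 (iVal (γ :: e) d')
        (Set.mem_insert_of_mem _ (Set.mem_range_self (⟨d', hd'lt⟩ : {d' : O μ // A d' < A d})))
      rw [hS_val] at this
      have := this.1 (by rw [hd'])
      rw [hno d'] at this
      exact Bool.false_ne_true this
  choose dval hdval using hval_ex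
  -- the preimage function
  have hinv : ∀ γo : Ordinal, γo < μ.ord → ∃ x : O μ, A x = γo := fun γo h => A_surj h
  choose inv hinvA using hinv
  -- the guessed function
  refine ⟨fun γo => if h : γo < μ.ord then A (dval (inv γo h)) else 0, ?_, ?_⟩
  · intro β hβ
    show (if h : β < μ.ord then A (dval (inv β h)) else 0) < μ.ord
    rw [dif_pos hβ]
    exact A_lt _
  · intro α hα
    set a : O μ := inv α hα with ha
    have haA : A a = α := hinvA α hα
    set J : Set ι := insert (iBnd e a) (insert (iVal e a)
      (Set.range (fun γ : {γ : O μ // A γ < α} => iVal (γ.1 :: e) (dval γ.1)))) with hJdef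
    have hJcard : #J < μ := by
      refine lt_of_le_of_lt Cardinal.mk_insert_le ?_
      refine Cardinal.add_lt_of_lt h2.aleph0_le ?_ (lt_of_lt_of_le Cardinal.one_lt_aleph0 h1.le)
      refine lt_of_le_of_lt Cardinal.mk_insert_le ?_
      refine Cardinal.add_lt_of_lt h2.aleph0_le ?_ (lt_of_lt_of_le Cardinal.one_lt_aleph0 h1.le)
      exact lt_of_le_of_lt Cardinal.mk_range_le (mk_seg_lt hα)
    obtain ⟨x, hx1, hx2⟩ := hreal J hJcard 0 h0ord
    have hnotbnd : ¬ vl e x < A a := by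
      have := hx2 (iBnd e a) (Set.mem_insert _ _)
      rw [hS_bnd] at this
      intro hcontra
      have := this.1 hcontra
      rw [(hbig_e a).1] at this
      exact Bool.false_ne_true this
    have hnotval : ¬ vl e x = A a := by
      have := hx2 (iVal e a) (Set.mem_insert_of_mem _ (Set.mem_insert _ _))
      rw [hS_val] at this
      intro hcontra
      have := this.1 hcontra
      rw [(hbig_e a).2] at this
      exact Bool.false_ne_true this
    have hgt : A a < vl e x := by
      rcases lt_trichotomy (vl e x) (A a) with h | h | h
      · exact absurd h hnotbnd
      · exact absurd h hnotval
      · exact h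
    rw [haA] at hgt
    refine ⟨vl e x, le_of_lt hgt, hvl_lt e x, ?_⟩
    intro γo hγo
    have hγoμ : γo < μ.ord := hγo.trans hα
    set γ : O μ := inv γo hγoμ with hγ
    have hγA : A γ = γo := hinvA γo hγoμ
    have hγα : A γ < α := by rw [hγA]; exact hγo
    have hmem : iVal (γ :: e) (dval γ) ∈ J := by
      rw [hJdef]
      exact Set.mem_insert_of_mem _ (Set.mem_insert_of_mem _
        (Set.mem_range_self (⟨γ, hγα⟩ : {γ : O μ // A γ < α})))
    have hvalx : vl (γ :: e) x = A (dval γ) := by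
      have := hx2 _ hmem
      rw [hS_val] at this
      exact this.2 (hdval γ)
    have hγlt : A γ < vl e x := hγα.trans hgt
    rw [hvl_cons, if_pos hγlt] at hvalx
    rw [hγA] at hvalx
    rw [hvalx]
    show A (dval γ) = if h : γo < μ.ord then A (dval (inv γo h)) else 0
    rw [dif_pos hγoμ]

end



theorem funcProp_to_treeProp {μ : Cardinal} (h1 : ℵ₀ < μ) (h2 : μ.IsRegular)
    (hf : FuncProp μ) : TreeProp μ := by
  intro T lt ht htrans hirr hmono hpredex hlin hltord hsurj hsmall
  classical
  have hord_lim : Order.IsSuccLimit (Cardinal.ord μ) := Cardinal.isSuccLimit_ord h2.aleph0_le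
  -- bound for each level
  set bnd : Ordinal → Ordinal := fun δ => (#{t : T | ht t = δ}).ord with hbnd_def
  have hbnd_lt : ∀ δ, bnd δ < μ.ord := fun δ => Cardinal.ord_lt_ord.2 (hsmall δ)
  -- injections of levels into `bnd δ`
  have hemb : ∀ δ : Ordinal, Nonempty ({t : T // ht t = δ} ↪ (bnd δ).ToType) := by
    intro δ
    refine (Cardinal.le_def _ _).1 (le_of_eq ?_)
    rw [Cardinal.mk_toType, Cardinal.card_ord]
    rfl
  have emb : ∀ δ : Ordinal, {t : T // ht t = δ} ↪ (bnd δ).ToType := fun δ => (hemb δ).some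
  -- the level-local code
  set e' : ∀ δ : Ordinal, {t : T // ht t = δ} → Ordinal :=
    fun δ u => @Ordinal.typein ((bnd δ).ToType) (· < ·) isWellOrder_lt (emb δ u) with he'_def
  have he'_lt : ∀ δ u, e' δ u < bnd δ := fun δ u => Ordinal.typein_lt_self _
  have he'_inj : ∀ δ u v, e' δ u = e' δ v → u = v := by
    intro δ u v huv
    exact (emb δ).injective ((@Ordinal.typein ((bnd δ).ToType) (· < ·) isWellOrder_lt).injective huv)
  set e : T → Ordinal := fun t => e' (ht t) ⟨t, rfl⟩ with he_def
  have he_eq : ∀ {δ : Ordinal} (s : T) (hs : ht s = δ), e s = e' δ ⟨s, hs⟩ := by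
    intro δ s hs
    cases hs
    rfl
  have he_lt : ∀ t, e t < bnd (ht t) := fun t => he'_lt _ _
  have he_inj : ∀ s t : T, ht s = ht t → e s = e t → s = t := by
    intro s t hst hest
    rw [he_eq s hst, he_eq t rfl] at hest
    have := he'_inj _ _ _ hest
    exact congrArg Subtype.val this
  -- choices of nodes at each level and predecessors
  have hT : ∀ β : Ordinal, β < μ.ord → ∃ t : T, ht t = β := hsurj
  choose tβ htβ using hT
  have hpred : ∀ (t : T) (δ : Ordinal), δ < ht t → ∃ s, lt s t ∧ ht s = δ := by
    intro t δ h; exact hpredex t δ h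
  choose pred hpred_lt hpred_ht using hpred
  -- the function family
  set f : Ordinal → Ordinal → Ordinal := fun β δ =>
    if h : δ < β ∧ β < μ.ord then
      (fun s : T => if e s < β then e s else 0) (pred (tβ β h.2) δ (by rw [htβ β h.2]; exact h.1))
    else 0 with hfdef
  have hfbound : ∀ α < μ.ord, ∀ β < α, f α β < α := by
    intro α hα β hβ
    rw [hfdef]
    simp only
    rw [dif_pos ⟨hβ, hα⟩]
    have hβpos : (0 : Ordinal) < α := (zero_le (a := β)).trans_lt hβ
    by_cases hc : e (pred (tβ α hα) β (by rw [htβ α hα]; exact hβ)) < α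
    · rwa [if_pos hc]
    · rw [if_neg hc]; exact hβpos
  obtain ⟨g, hg1, hg2⟩ := hf f hfbound
  -- key computation
  have hkey : ∀ (α : Ordinal), α < μ.ord → ∀ (β : Ordinal), α ≤ β → (hβ : β < μ.ord) →
      (∀ γ < α, f β γ = g γ) → ∀ (δ : Ordinal) (hδ : δ < α), bnd δ < α →
      ∃ s : T, lt s (tβ β hβ) ∧ ht s = δ ∧ e s = g δ := by
    intro α hα β hαβ hβ hmatch δ hδ hbα
    have hδβ : δ < β := hδ.trans_le hαβ
    have hδht : δ < ht (tβ β hβ) := by rw [htβ β hβ]; exact hδβ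
    refine ⟨pred (tβ β hβ) δ hδht, hpred_lt _ _ _, hpred_ht _ _ _, ?_⟩
    have hcomp : f β δ = e (pred (tβ β hβ) δ hδht) := by
      rw [hfdef]
      simp only
      rw [dif_pos ⟨hδβ, hβ⟩]
      have hes : e (pred (tβ β hβ) δ hδht) < β := by
        have h1' : e (pred (tβ β hβ) δ hδht) < bnd δ := by
          have := he_lt (pred (tβ β hβ) δ hδht)
          rwa [hpred_ht _ _ _] at this
        exact h1'.trans (hbα.trans_le hαβ)
      rw [if_pos hes]
    rw [← hcomp, hmatch δ hδ]
  -- the branch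
  refine ⟨{t : T | e t = g (ht t)}, ?_, ?_⟩
  · -- comparability
    intro s hs t htt
    set δ₁ := ht s with hd1
    set δ₂ := ht t with hd2
    set α := max (max (δ₁ + 1) (δ₂ + 1)) (max (bnd δ₁ + 1) (bnd δ₂ + 1)) with hα_def
    have hsucc : ∀ {a : Ordinal}, a < μ.ord → a + 1 < μ.ord := by
      intro a ha
      rw [Ordinal.add_one_eq_succ]
      exact hord_lim.succ_lt ha
    have hα : α < μ.ord := by
      apply max_lt (max_lt ?_ ?_) (max_lt ?_ ?_)
      · exact hsucc (hltord s)
      · exact hsucc (hltord t)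
      · exact hsucc (hbnd_lt δ₁)
      · exact hsucc (hbnd_lt δ₂)
    obtain ⟨β, hαβ, hβ, hmatch⟩ := hg2 α hα
    have hδ₁α : δ₁ < α := (lt_add_one δ₁).trans_le ((le_max_left _ _).trans (le_max_left _ _))
    have hδ₂α : δ₂ < α := (lt_add_one δ₂).trans_le ((le_max_right _ _).trans (le_max_left _ _))
    have hb₁α : bnd δ₁ < α := (lt_add_one _).trans_le ((le_max_left _ _).trans (le_max_right _ _))
    have hb₂α : bnd δ₂ < α := (lt_add_one _).trans_le ((le_max_right _ _).trans (le_max_right _ _))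
    obtain ⟨s', hslt, hsht, hse⟩ := hkey α hα β hαβ hβ hmatch δ₁ hδ₁α hb₁α
    obtain ⟨t', htlt, htht, hte⟩ := hkey α hα β hαβ hβ hmatch δ₂ hδ₂α hb₂α
    have hs' : s' = s := by
      apply he_inj s' s (by rw [hsht])
      rw [hse]
      exact hs.symm
    have ht' : t' = t := by
      apply he_inj t' t (by rw [htht])
      rw [hte]
      exact htt.symm
    rw [← hs', ← ht']
    exact hlin s' t' (tβ β hβ) hslt htlt
  · -- levels
    intro δ hδ
    set α := max (δ + 1) (bnd δ + 1) with hα_def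
    have hα : α < μ.ord := by
      apply max_lt
      · exact (Ordinal.add_one_eq_succ δ) ▸ hord_lim.succ_lt hδ
      · exact (Ordinal.add_one_eq_succ (bnd δ)) ▸ hord_lim.succ_lt (hbnd_lt δ)
    obtain ⟨β, hαβ, hβ, hmatch⟩ := hg2 α hα
    have hδα : δ < α := lt_of_lt_of_le (by exact lt_of_lt_of_le (lt_add_one δ) le_rfl) (le_max_left _ _)
    have hbδα : bnd δ < α := lt_of_lt_of_le (lt_add_one _) (le_max_right _ _)
    obtain ⟨s, hslt, hsht, hse⟩ := hkey α hα β hαβ hβ hmatch δ hδα hbδα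
    exact ⟨s, by rw [Set.mem_setOf_eq, hse, hsht], hsht⟩

end Stmt7Aux

/-- Shelah: for a strongly inaccessible `μ`, the tree property is equivalent to the
combinatorial function-guessing property. -/
theorem stmt_7 (μ : Cardinal) (h1 : ℵ₀ < μ) (h2 : μ.IsRegular)
    (h3 : μ.IsStrongLimit) : TreeProp μ ↔ FuncProp μ :=
  ⟨fun htp => Stmt7Aux.treeProp_to_funcProp h1 h2 h3 htp,
   fun hfp => Stmt7Aux.funcProp_to_treeProp h1 h2 hfp⟩
end

section
/- There exists a linear order I of cardinality ℵ₁ such that the square I × I, with the coordinatewise partial order, is the union of countably many chains. -/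
open Cardinal Set

namespace Shelah

noncomputable section
open scoped Classical

instance (β : Ordinal) : IsWellOrder β.ToType (· < ·) := isWellOrder_lt

/-! ### Ladders -/

lemma exists_ladder (β : Ordinal) (hβ : Order.IsSuccLimit β) (hc : β.card ≤ ℵ₀) :
    ∃ l : ℕ → Ordinal, (∀ n, l n < β) ∧ (∀ ξ < β, ∃ n, ξ < l n) := by
  have hne : Nonempty β.ToType := Ordinal.nonempty_toType_iff.2 hβ.pos.ne'
  have hcnt : Countable β.ToType := by
    rw [← Cardinal.mk_le_aleph0_iff, Cardinal.mk_toType]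
    exact hc
  obtain ⟨s, hs⟩ := exists_surjective_nat β.ToType
  refine ⟨fun n => Ordinal.typein (α := β.ToType) (· < ·) (s n) + 1,
    fun n => hβ.succ_lt (Ordinal.typein_lt_self _), fun ξ hξ => ?_⟩
  obtain ⟨n, hn⟩ := hs (Ordinal.enum (α := β.ToType) (· < ·)
    ⟨ξ, by rwa [Ordinal.type_toType]⟩)
  refine ⟨n, ?_⟩
  simp only [hn]
  exact Order.lt_add_one_iff.2 (Ordinal.typein_enum _ _).ge

def ladder (β : Ordinal) : ℕ → Ordinal :=
  if h : Order.IsSuccLimit β ∧ β.card ≤ ℵ₀ then (exists_ladder β h.1 h.2).choose else fun _ => 0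

lemma ladder_lt {β : Ordinal} (hβ : Order.IsSuccLimit β) (hc : β.card ≤ ℵ₀) (n : ℕ) :
    ladder β n < β := by
  rw [ladder, dif_pos (⟨hβ, hc⟩ : Order.IsSuccLimit β ∧ β.card ≤ ℵ₀)]
  exact (exists_ladder β hβ hc).choose_spec.1 n

lemma ladder_cover {β : Ordinal} (hβ : Order.IsSuccLimit β) (hc : β.card ≤ ℵ₀) {ξ : Ordinal}
    (hξ : ξ < β) : ∃ n, ξ < ladder β n := by
  rw [ladder, dif_pos (⟨hβ, hc⟩ : Order.IsSuccLimit β ∧ β.card ≤ ℵ₀)]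
  exact (exists_ladder β hβ hc).choose_spec.2 ξ hξ

/-- block index -/
def blk (β ξ : Ordinal) : ℕ :=
  if h : ∃ n, ξ < ladder β n then Nat.find h else 0

lemma blk_spec {β ξ : Ordinal} (h : ∃ n, ξ < ladder β n) : ξ < ladder β (blk β ξ) := by
  rw [blk, dif_pos h]; exact Nat.find_spec h

lemma blk_le {β ξ : Ordinal} (h : ∃ n, ξ < ladder β n) {n : ℕ} (hn : ξ < ladder β n) :
    blk β ξ ≤ n := by
  rw [blk, dif_pos h]; exact Nat.find_min' h hn

lemma blk_mono {β : Ordinal} (hβ : Order.IsSuccLimit β) (hc : β.card ≤ ℵ₀) {ξ ξ' : Ordinal}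
    (hle : ξ ≤ ξ') (h' : ξ' < β) : blk β ξ ≤ blk β ξ' := by
  have h2 := ladder_cover hβ hc h'
  exact blk_le ⟨_, lt_of_le_of_lt hle (blk_spec h2)⟩ (lt_of_le_of_lt hle (blk_spec h2))

/-! ### The coherent family -/

def e : Ordinal → Ordinal → ℕ := fun β =>
  Ordinal.limitRecOn β (fun _ => 0)
    (fun γ eγ => fun ξ => if ξ = γ then 0 else eγ ξ)
    (fun β hβ ih => fun ξ =>
      if hc : β.card ≤ ℵ₀ then
        if hξ : ξ < β then
          max (ih (ladder β (blk β ξ)) (ladder_lt hβ hc _) ξ) (blk β ξ)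
        else 0
      else 0)

lemma e_succ (γ : Ordinal) (ξ : Ordinal) :
    e (Order.succ γ) ξ = if ξ = γ then 0 else e γ ξ := by
  unfold e; rw [Ordinal.limitRecOn_succ]

lemma e_limit {β : Ordinal} (hβ : Order.IsSuccLimit β) (hc : β.card ≤ ℵ₀) {ξ : Ordinal} (hξ : ξ < β) :
    e β ξ = max (e (ladder β (blk β ξ)) ξ) (blk β ξ) := by
  unfold e; rw [Ordinal.limitRecOn_limit _ _ _ _ hβ, dif_pos hc, dif_pos hξ]

/-! ### Invariants : finite-to-one and coherence -/

def F2O (β : Ordinal) : Prop := ∀ m : ℕ, {ξ : Ordinal | ξ < β ∧ e β ξ < m}.Finite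

def COH (β : Ordinal) : Prop := ∀ α < β, {ξ : Ordinal | ξ < α ∧ e β ξ ≠ e α ξ}.Finite

lemma main_invariant : ∀ β : Ordinal, β.card ≤ ℵ₀ → F2O β ∧ COH β := by
  intro β
  induction β using Ordinal.induction with
  | h β IH =>
  intro hβcard
  rcases Ordinal.zero_or_succ_or_isSuccLimit β with h0 | ⟨γ, rfl⟩ | hlim
  · subst h0
    constructor
    · intro m
      convert Set.finite_empty
      ext ξ; simp only [Set.mem_setOf_eq, Set.mem_empty_iff_false, iff_false, not_and]
      intro h; exact absurd h (not_lt_zero (a := ξ))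
    · intro α hα; exact absurd hα (not_lt_zero (a := α))
  · -- successor case
    have hγβ : γ < Order.succ γ := Order.lt_succ γ
    have hγcard : γ.card ≤ ℵ₀ :=
      le_trans (Ordinal.card_le_card (le_of_lt hγβ)) hβcard
    obtain ⟨hf, hc⟩ := IH γ hγβ hγcard
    constructor
    · intro m
      apply Set.Finite.subset (Set.Finite.insert γ (hf m))
      intro ξ ⟨hξ, hv⟩
      rcases eq_or_ne ξ γ with rfl | hne
      · exact Set.mem_insert _ _
      · have hξγ : ξ < γ := lt_of_le_of_ne (Order.lt_succ_iff.1 hξ) hne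
        rw [e_succ, if_neg hne] at hv
        exact Set.mem_insert_of_mem _ ⟨hξγ, hv⟩
    · intro α hα
      have hαγ : α ≤ γ := Order.lt_succ_iff.1 hα
      have key : ∀ ξ < α, e (Order.succ γ) ξ = e γ ξ := by
        intro ξ hξ
        rw [e_succ, if_neg (ne_of_lt (lt_of_lt_of_le hξ hαγ))]
      rcases eq_or_lt_of_le hαγ with rfl | hαγ'
      · convert Set.finite_empty
        ext ξ; simp only [Set.mem_setOf_eq, Set.mem_empty_iff_false, iff_false, not_and]
        intro hξ
        rw [key ξ hξ]; simp
      · apply Set.Finite.subset (hc α hαγ')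
        intro ξ ⟨hξ, hv⟩
        rw [key ξ hξ] at hv
        exact ⟨hξ, hv⟩
  · -- limit case
    have hlad : ∀ n, ladder β n < β := ladder_lt hlim hβcard
    have hladcard : ∀ n, (ladder β n).card ≤ ℵ₀ :=
      fun n => le_trans (Ordinal.card_le_card (le_of_lt (hlad n))) hβcard
    have IHl : ∀ n, F2O (ladder β n) ∧ COH (ladder β n) :=
      fun n => IH _ (hlad n) (hladcard n)
    constructor
    · intro m
      apply Set.Finite.subset
        (Set.Finite.biUnion (Set.finite_Iio m)
          (fun n _ => ((IHl n).1 m)))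
      intro ξ ⟨hξ, hv⟩
      rw [e_limit hlim hβcard hξ] at hv
      have hblk : blk β ξ < m := lt_of_le_of_lt (le_max_right _ _) hv
      have hev : e (ladder β (blk β ξ)) ξ < m := lt_of_le_of_lt (le_max_left _ _) hv
      exact Set.mem_biUnion hblk ⟨blk_spec (ladder_cover hlim hβcard hξ), hev⟩
    · intro α hα
      have hαcard : α.card ≤ ℵ₀ := le_trans (Ordinal.card_le_card (le_of_lt hα)) hβcard
      obtain ⟨hfα, hcα⟩ := IH α hα hαcard
      -- pairwise difference sets between ladder points and α are finite
      have pairfin : ∀ n : ℕ,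
          {ξ : Ordinal | ξ < ladder β n ∧ ξ < α ∧ e (ladder β n) ξ ≠ e α ξ}.Finite := by
        intro n
        rcases lt_trichotomy (ladder β n) α with h | h | h
        · apply Set.Finite.subset (hcα (ladder β n) h)
          intro ξ ⟨h1, _, h3⟩; exact ⟨h1, fun hh => h3 hh.symm⟩
        · convert Set.finite_empty
          ext ξ; simp only [Set.mem_setOf_eq, Set.mem_empty_iff_false, iff_false, not_and]
          intro _ _; rw [h]; simp
        · apply Set.Finite.subset ((IHl n).2 α h)
          intro ξ ⟨_, h2, h3⟩; exact ⟨h2, h3⟩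
      set K := blk β α with hK
      apply Set.Finite.subset
        (Set.Finite.biUnion (Set.finite_Iio (K+1))
          (fun n _ => Set.Finite.union (pairfin n) ((IHl n).1 n)))
      intro ξ ⟨hξα, hv⟩
      have hξβ : ξ < β := lt_trans hξα hα
      have hcover := ladder_cover hlim hβcard hξβ
      set n := blk β ξ with hn
      have hξl : ξ < ladder β n := blk_spec hcover
      have hnK : n < K + 1 := by
        have := blk_mono hlim hβcard (le_of_lt hξα) hα
        omega
      rw [e_limit hlim hβcard hξβ] at hv
      have : e (ladder β n) ξ ≠ e α ξ ∨ e (ladder β n) ξ < n := by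
        by_contra hcon
        push_neg at hcon
        obtain ⟨h1, h2⟩ := hcon
        rw [max_eq_left h2] at hv
        exact hv h1
      rcases this with h | h
      · exact Set.mem_biUnion hnK (Set.mem_union_left _ ⟨hξl, hξα, h⟩)
      · exact Set.mem_biUnion hnK (Set.mem_union_right _ ⟨hξl, h⟩)

/-! ### The family over `W` -/

abbrev W : Type := (Cardinal.aleph 1).ord.ToType

abbrev NB : Type := WithBot ℕ

def tw (x : W) : Ordinal := Ordinal.typein (α := W) (· < ·) x

lemma tw_lt_iff {x y : W} : tw x < tw y ↔ x < y := by
  unfold tw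
  exact (Ordinal.typein_lt_typein _)

lemma tw_inj : Function.Injective tw := by
  intro x y h
  rcases lt_trichotomy x y with hc | hc | hc
  · exact absurd (tw_lt_iff.2 hc) (by rw [h]; exact lt_irrefl _)
  · exact hc
  · exact absurd (tw_lt_iff.2 hc) (by rw [h]; exact lt_irrefl _)

lemma tw_card (x : W) : (tw x).card ≤ ℵ₀ := by
  have h1 : tw x < (Cardinal.aleph 1).ord := Ordinal.typein_lt_self x
  have h2 : (tw x).card < Cardinal.aleph 1 := Cardinal.lt_ord.1 h1
  have : Cardinal.aleph 1 = Order.succ ℵ₀ := by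
    rw [← Cardinal.aleph_zero, ← Cardinal.aleph_succ]
    norm_num
  rw [this, Order.lt_succ_iff] at h2
  exact h2

/-- the `⊥`-padded functions -/
def a (b : W) : W → NB := fun w => if w < b then (e (tw b) (tw w) : NB) else ⊥

lemma a_bot_iff {b w : W} : a b w = ⊥ ↔ ¬ w < b := by
  unfold a
  split
  · simp_all
  · simp_all

lemma a_eq {b w : W} (h : w < b) : a b w = (e (tw b) (tw w) : NB) := if_pos h

lemma a_f2o (b : W) (m : ℕ) : {w : W | a b w ≠ ⊥ ∧ a b w < (m : NB)}.Finite := by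
  have hfin := (main_invariant (tw b) (tw_card b)).1 m
  apply Set.Finite.subset (Set.Finite.preimage (Set.injOn_of_injective tw_inj) hfin)
  intro w ⟨h1, h2⟩
  have hw : w < b := by by_contra hc; exact h1 (a_bot_iff.2 hc)
  rw [a_eq hw] at h2
  exact ⟨tw_lt_iff.2 hw, by exact_mod_cast h2⟩

lemma a_coh' {b c : W} (hbc : b < c) :
    {w : W | a b w ≠ ⊥ ∧ a c w ≠ ⊥ ∧ a b w ≠ a c w}.Finite := by
  have hfin := (main_invariant (tw c) (tw_card c)).2 (tw b) (tw_lt_iff.2 hbc)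
  apply Set.Finite.subset (Set.Finite.preimage (Set.injOn_of_injective tw_inj) hfin)
  intro w ⟨h1, _, h3⟩
  have hw : w < b := by by_contra hc; exact h1 (a_bot_iff.2 hc)
  have hwc : w < c := lt_trans hw hbc
  rw [a_eq hw, a_eq hwc] at h3
  refine ⟨tw_lt_iff.2 hw, fun hh => h3 ?_⟩
  exact_mod_cast hh.symm

lemma a_coh (b c : W) :
    {w : W | a b w ≠ ⊥ ∧ a c w ≠ ⊥ ∧ a b w ≠ a c w}.Finite := by
  rcases lt_trichotomy b c with h | h | h
  · exact a_coh' h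
  · subst h
    convert Set.finite_empty
    ext w; simp
  · apply Set.Finite.subset (a_coh' h)
    intro w ⟨h1, h2, h3⟩
    exact ⟨h2, h1, fun hh => h3 hh.symm⟩

lemma a_inj : Function.Injective a := by
  intro b c h
  by_contra hne
  rcases lt_trichotomy b c with hc | hc | hc
  · have h1 : a b b = ⊥ := a_bot_iff.2 (lt_irrefl b)
    have h2 : a c b = ⊥ := by rw [← h]; exact h1
    rw [a_bot_iff] at h2
    exact h2 hc
  · exact hne hc
  · have h1 : a c c = ⊥ := a_bot_iff.2 (lt_irrefl c)
    have h2 : a b c = ⊥ := by rw [h]; exact h1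
    rw [a_bot_iff] at h2
    exact h2 hc

/-! ### Counting lemmas for finite sets in a linear order -/

section Counting

lemma symm_coe_eq_card {F : Finset W} {k : ℕ} (h : F.card = k) {w : W} (hw : w ∈ F) :
    ((F.orderIsoOfFin h).symm ⟨w, hw⟩ : ℕ) = (F.filter (· < w)).card := by
  set iso := F.orderIsoOfFin h with hiso
  set i0 := iso.symm ⟨w, hw⟩ with hi0
  have himg : F.filter (· < w) = (Finset.Iio i0).image (fun i => (iso i : W)) := by
    ext u
    simp only [Finset.mem_filter, Finset.mem_image, Finset.mem_Iio]
    constructor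
    · rintro ⟨hu, hlt⟩
      refine ⟨iso.symm ⟨u, hu⟩, ?_, by simp⟩
      rw [hi0, iso.symm.lt_iff_lt]
      exact Subtype.mk_lt_mk.2 hlt
    · rintro ⟨i, hi, rfl⟩
      refine ⟨(iso i).2, ?_⟩
      have : iso i < iso i0 := iso.lt_iff_lt.2 hi
      rw [hi0, iso.apply_symm_apply] at this
      exact this
  rw [himg, Finset.card_image_of_injective _ (fun i j hij => iso.injective (Subtype.ext hij)),
    Fin.card_Iio]

lemma iso_lt_iff {F : Finset W} {k : ℕ} (h : F.card = k) (δ : W) (i : Fin k) :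
    ((F.orderIsoOfFin h i : W) < δ) ↔ (i : ℕ) < (F.filter (· < δ)).card := by
  set iso := F.orderIsoOfFin h with hiso
  constructor
  · intro hlt
    have he : (i : ℕ) = (F.filter (· < (iso i : W))).card := by
      have := symm_coe_eq_card h (iso i).2
      rw [Subtype.coe_eta, iso.symm_apply_apply] at this
      exact this
    rw [he]
    apply Finset.card_lt_card
    constructor
    · intro u hu
      rw [Finset.mem_filter] at hu ⊢
      exact ⟨hu.1, lt_trans hu.2 hlt⟩
    · intro hsub
      have : (iso i : W) ∈ F.filter (· < δ) := Finset.mem_filter.2 ⟨(iso i).2, hlt⟩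
      have := Finset.mem_filter.1 (hsub this)
      exact lt_irrefl _ this.2
  · intro hlt
    by_contra hc
    push_neg at hc
    have he : (i : ℕ) = (F.filter (· < (iso i : W))).card := by
      have := symm_coe_eq_card h (iso i).2
      rw [Subtype.coe_eta, iso.symm_apply_apply] at this
      exact this
    have hsub : F.filter (· < δ) ⊆ F.filter (· < (iso i : W)) := by
      intro u hu
      rw [Finset.mem_filter] at hu ⊢
      exact ⟨hu.1, lt_of_lt_of_le hu.2 hc⟩
    have := Finset.card_le_card hsub
    omega

lemma filter_eq_of_agree {F F' : Finset W} {δ : W}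
    (hsets : ∀ w, w < δ → (w ∈ F ↔ w ∈ F')) {w : W} (hwδ : w ≤ δ) :
    F.filter (· < w) = F'.filter (· < w) := by
  ext u
  simp only [Finset.mem_filter]
  constructor
  · rintro ⟨h1, h2⟩; exact ⟨(hsets u (lt_of_lt_of_le h2 hwδ)).1 h1, h2⟩
  · rintro ⟨h1, h2⟩; exact ⟨(hsets u (lt_of_lt_of_le h2 hwδ)).2 h1, h2⟩

/-- the two enumerations agree below a cut where the sets agree -/
lemma iso_agree_below {F F' : Finset W} {k : ℕ} (h : F.card = k) (h' : F'.card = k)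
    {δ : W} (hsets : ∀ w, w < δ → (w ∈ F ↔ w ∈ F')) (i : Fin k)
    (hi : (F.orderIsoOfFin h i : W) < δ) :
    (F'.orderIsoOfFin h' i : W) = (F.orderIsoOfFin h i : W) := by
  set iso := F.orderIsoOfFin h
  set iso' := F'.orderIsoOfFin h'
  set w : W := (iso i : W) with hw
  have hwF : w ∈ F := (iso i).2
  have hwF' : w ∈ F' := (hsets w hi).1 hwF
  have hidx : (iso'.symm ⟨w, hwF'⟩ : ℕ) = (i : ℕ) := by
    rw [symm_coe_eq_card h' hwF', ← filter_eq_of_agree hsets (le_of_lt hi)]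
    have h2 := symm_coe_eq_card h hwF
    have hpt : (⟨w, hwF⟩ : {x // x ∈ F}) = iso i := Subtype.ext rfl
    rw [hpt, iso.symm_apply_apply] at h2
    omega
  have : iso'.symm ⟨w, hwF'⟩ = i := Fin.ext hidx
  rw [← this, iso'.apply_symm_apply]

/-- if the cut point is in both sets, the enumerations match it at the same index -/
lemma iso_cut_eq {F F' : Finset W} {k : ℕ} (h : F.card = k) (h' : F'.card = k)
    {δ : W} (hsets : ∀ w, w < δ → (w ∈ F ↔ w ∈ F')) (hδF : δ ∈ F) (hδF' : δ ∈ F') :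
    (F'.orderIsoOfFin h' ((F.orderIsoOfFin h).symm ⟨δ, hδF⟩) : W) = δ := by
  set iso := F.orderIsoOfFin h
  set iso' := F'.orderIsoOfFin h'
  set i : Fin k := iso.symm ⟨δ, hδF⟩ with hi
  have hidx : (iso'.symm ⟨δ, hδF'⟩ : ℕ) = (i : ℕ) := by
    rw [symm_coe_eq_card h' hδF', ← filter_eq_of_agree hsets (le_refl δ), hi,
      symm_coe_eq_card h hδF]
  have : iso'.symm ⟨δ, hδF'⟩ = i := Fin.ext hidx
  rw [← this, iso'.apply_symm_apply]

end Counting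

/-! ### The core combinatorial lemma -/

def Dfin (x y : W → NB) : Set W := {w | x w ≠ ⊥ ∧ y w ≠ ⊥ ∧ x w ≠ y w}

lemma core
    {x y x' y' : W → NB} {α β α' β' : W} {M k : ℕ} {F F' : Finset W}
    (hx : ∀ w, x w = ⊥ ↔ ¬ w < α) (hy : ∀ w, y w = ⊥ ↔ ¬ w < β)
    (hx' : ∀ w, x' w = ⊥ ↔ ¬ w < α') (hy' : ∀ w, y' w = ⊥ ↔ ¬ w < β')
    (hαβ : α < β) (hα'β' : α' < β')
    (hMD : ∀ w, w ∈ Dfin x y → x w < (M : NB) ∧ y w < (M : NB))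
    (hMD' : ∀ w, w ∈ Dfin x' y' → x' w < (M : NB) ∧ y' w < (M : NB))
    (hMy : y α < (M : NB))
    (hkF : F.card = k) (hkF' : F'.card = k)
    (hF : ∀ w, w ∈ F ↔ ((x w ≠ ⊥ ∧ x w < (M : NB)) ∨ (y w ≠ ⊥ ∧ y w < (M : NB))))
    (hF' : ∀ w, w ∈ F' ↔ ((x' w ≠ ⊥ ∧ x' w < (M : NB)) ∨ (y' w ≠ ⊥ ∧ y' w < (M : NB))))
    (hmatch : ∀ i : Fin k,
      (x (F.orderIsoOfFin hkF i : W), y (F.orderIsoOfFin hkF i : W))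
        = (x' (F'.orderIsoOfFin hkF' i : W), y' (F'.orderIsoOfFin hkF' i : W)))
    (hlt : Pi.Lex (· < ·) (@fun _ => (· < ·)) x x') :
    Pi.Lex (· < ·) (@fun _ => (· < ·)) y y' := by
  obtain ⟨δ, hbelow, hδ⟩ := hlt
  have hx'δbot : x' δ ≠ ⊥ := fun h => by rw [h] at hδ; exact not_lt_bot hδ
  have hδα' : δ < α' := by by_contra hc; exact hx'δbot ((hx' δ).2 hc)
  have hδα : δ ≤ α := by
    by_contra hc
    push_neg at hc
    have h1 : x α = ⊥ := (hx α).2 (lt_irrefl α)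
    have h2 : x' α = ⊥ := by rw [← hbelow α hc]; exact h1
    rw [hx' α] at h2
    exact h2 (lt_trans hc hδα')
  have hδβ : δ < β := lt_of_le_of_lt hδα hαβ
  have hδβ' : δ < β' := lt_trans hδα' hα'β'
  have hyδ : y δ ≠ ⊥ := fun h => ((hy δ).1 h) hδβ
  have hy'δ : y' δ ≠ ⊥ := fun h => ((hy' δ).1 h) hδβ'
  -- membership below the cut is controlled by the first coordinate
  have claimA : ∀ w, w < δ → (w ∈ F ↔ (x w < (M : NB))) := by
    intro w hw
    have hwα : w < α := lt_of_lt_of_le hw hδα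
    have hxw : x w ≠ ⊥ := fun h => ((hx w).1 h) hwα
    have hyw : y w ≠ ⊥ := fun h => ((hy w).1 h) (lt_trans hwα hαβ)
    rw [hF w]
    constructor
    · rintro (⟨_, h2⟩ | ⟨_, h2⟩)
      · exact h2
      · by_cases hxy : x w = y w
        · rw [hxy]; exact h2
        · exact (hMD w ⟨hxw, hyw, hxy⟩).1
    · intro h; exact Or.inl ⟨hxw, h⟩
  have claimA' : ∀ w, w < δ → (w ∈ F' ↔ (x' w < (M : NB))) := by
    intro w hw
    have hwα : w < α' := lt_trans hw hδα'
    have hxw : x' w ≠ ⊥ := fun h => ((hx' w).1 h) hwα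
    have hyw : y' w ≠ ⊥ := fun h => ((hy' w).1 h) (lt_trans hwα hα'β')
    rw [hF' w]
    constructor
    · rintro (⟨_, h2⟩ | ⟨_, h2⟩)
      · exact h2
      · by_cases hxy : x' w = y' w
        · rw [hxy]; exact h2
        · exact (hMD' w ⟨hxw, hyw, hxy⟩).1
    · intro h; exact Or.inl ⟨hxw, h⟩
  have hsets : ∀ w, w < δ → (w ∈ F ↔ w ∈ F') := by
    intro w hw
    rw [claimA w hw, claimA' w hw, hbelow w hw]
  have claimB : ∀ w, w < δ → w ∈ F → y w = y' w := by
    intro w hwδ hwF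
    set i := (F.orderIsoOfFin hkF).symm ⟨w, hwF⟩ with hi
    have h1 : (F.orderIsoOfFin hkF i : W) = w := by rw [hi, OrderIso.apply_symm_apply]
    have h2 : (F'.orderIsoOfFin hkF' i : W) = w := by
      rw [iso_agree_below hkF hkF' hsets i (by rw [h1]; exact hwδ), h1]
    have hm := hmatch i
    rw [h1, h2] at hm
    exact (Prod.ext_iff.1 hm).2
  have claimC : ∀ w, w < δ → y w = y' w := by
    intro w hw
    by_contra hne
    have hwα : w < α := lt_of_lt_of_le hw hδα
    have hwα' : w < α' := lt_trans hw hδα'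
    have hxw : x w ≠ ⊥ := fun h => ((hx w).1 h) hwα
    have hyw : y w ≠ ⊥ := fun h => ((hy w).1 h) (lt_trans hwα hαβ)
    have hx'w : x' w ≠ ⊥ := fun h => ((hx' w).1 h) hwα'
    have hy'w : y' w ≠ ⊥ := fun h => ((hy' w).1 h) (lt_trans hwα' hα'β')
    by_cases hxy : x w = y w
    · have hne' : x' w ≠ y' w := fun hh => hne (by rw [← hxy, hbelow w hw, hh])
      have hM1 := (hMD' w ⟨hx'w, hy'w, hne'⟩).1
      have hwF' : w ∈ F' := (hF' w).2 (Or.inl ⟨hx'w, hM1⟩)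
      have hwF : w ∈ F := (hsets w hw).2 hwF'
      exact hne (claimB w hw hwF)
    · have hM1 := (hMD w ⟨hxw, hyw, hxy⟩).1
      have hwF : w ∈ F := (hF w).2 (Or.inl ⟨hxw, hM1⟩)
      exact hne (claimB w hw hwF)
  -- the matched pair at the cut point, if present in both sets
  have pairδ : δ ∈ F → δ ∈ F' → x δ = x' δ ∧ y δ = y' δ := by
    intro hδF hδF'
    set i := (F.orderIsoOfFin hkF).symm ⟨δ, hδF⟩ with hi
    have h1 : (F.orderIsoOfFin hkF i : W) = δ := by rw [hi, OrderIso.apply_symm_apply]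
    have h2 := iso_cut_eq hkF hkF' hsets hδF hδF'
    have hm := hmatch i
    rw [h1, hi, h2] at hm
    exact Prod.ext_iff.1 hm
  refine ⟨δ, fun j hj => claimC j hj, ?_⟩
  by_cases hδα2 : δ < α
  · -- case I
    have hxδ : x δ ≠ ⊥ := fun h => ((hx δ).1 h) hδα2
    by_cases hxy : x δ = y δ
    · by_cases hxy' : x' δ = y' δ
      · rw [← hxy, ← hxy']; exact hδ
      · have hM1 := (hMD' δ ⟨hx'δbot, hy'δ, hxy'⟩).1
        have hδF' : δ ∈ F' := (hF' δ).2 (Or.inl ⟨hx'δbot, hM1⟩)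
        have hδF : δ ∈ F := (hF δ).2 (Or.inl ⟨hxδ, lt_trans hδ hM1⟩)
        exact absurd (pairδ hδF hδF').1 (ne_of_lt hδ)
    · have hM1 := (hMD δ ⟨hxδ, hyδ, hxy⟩).1
      have hM2 := (hMD δ ⟨hxδ, hyδ, hxy⟩).2
      have hδF : δ ∈ F := (hF δ).2 (Or.inl ⟨hxδ, hM1⟩)
      have hδF' : δ ∉ F' := fun h => absurd (pairδ hδF h).1 (ne_of_lt hδ)
      have hge : ¬ (y' δ < (M : NB)) := fun h => hδF' ((hF' δ).2 (Or.inr ⟨hy'δ, h⟩))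
      exact lt_of_lt_of_le hM2 (not_lt.1 hge)
  · -- case II : δ = α
    have hδeqα : δ = α := le_antisymm hδα (not_lt.1 hδα2)
    have hxδbot : x δ = ⊥ := (hx δ).2 (by rw [hδeqα]; exact lt_irrefl α)
    have hyδM : y δ < (M : NB) := by rw [hδeqα]; exact hMy
    have hδF : δ ∈ F := (hF δ).2 (Or.inr ⟨hyδ, hyδM⟩)
    have hδF' : δ ∉ F' := by
      intro h
      have := (pairδ hδF h).1
      rw [hxδbot] at this
      exact hx'δbot this.symm
    have hge : ¬ (y' δ < (M : NB)) := fun h => hδF' ((hF' δ).2 (Or.inr ⟨hy'δ, h⟩))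
    exact lt_of_lt_of_le hyδM (not_lt.1 hge)

/-! ### Invariant data -/

def val (v : NB) : ℕ := v.unbotD 0

lemma coe_val {v : NB} (h : v ≠ ⊥) : (val v : NB) = v := by
  induction v using WithBot.recBotCoe with
  | bot => exact absurd rfl h
  | coe n => rfl

def DfinF (b c : W) : Set W := Dfin (a b) (a c)

lemma DfinF_finite (b c : W) : (DfinF b c).Finite := a_coh b c

def Mv (b c : W) : ℕ :=
  (((DfinF_finite b c).toFinset.sup fun w => val (a b w) ⊔ val (a c w)) ⊔ val (a c b)) + 1

lemma Mv_D {b c w : W} (hw : w ∈ Dfin (a b) (a c)) :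
    a b w < (Mv b c : NB) ∧ a c w < (Mv b c : NB) := by
  have hmem : w ∈ (DfinF_finite b c).toFinset := (Set.Finite.mem_toFinset _).2 hw
  have h1 := Finset.le_sup (f := fun w => val (a b w) ⊔ val (a c w)) hmem
  obtain ⟨h2, h3, _⟩ := hw
  have hb : val (a b w) < Mv b c := by
    have := le_trans (le_sup_left : val (a b w) ≤ _) h1
    unfold Mv; omega
  have hc : val (a c w) < Mv b c := by
    have := le_trans (le_sup_right : val (a c w) ≤ _) h1
    unfold Mv; omega
  constructor
  · rw [← coe_val h2]; exact_mod_cast hb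
  · rw [← coe_val h3]; exact_mod_cast hc

lemma Mv_y {b c : W} (hbc : b < c) : a c b < (Mv b c : NB) := by
  have hnb : a c b ≠ ⊥ := fun h => (a_bot_iff.1 h) hbc
  have : val (a c b) < Mv b c := by unfold Mv; omega
  rw [← coe_val hnb]; exact_mod_cast this

def FvSet (b c : W) : Finset W :=
  (Set.Finite.union (a_f2o b (Mv b c)) (a_f2o c (Mv b c))).toFinset

lemma FvSet_mem {b c w : W} : w ∈ FvSet b c ↔
    ((a b w ≠ ⊥ ∧ a b w < (Mv b c : NB)) ∨ (a c w ≠ ⊥ ∧ a c w < (Mv b c : NB))) := by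
  unfold FvSet
  rw [Set.Finite.mem_toFinset]
  rfl

def kv (b c : W) : ℕ := (FvSet b c).card

def Lv (b c : W) : List (NB × NB) :=
  ((FvSet b c).sort (· ≤ ·)).map fun w => (a b w, a c w)

/-! ### The linear order `I` -/

def aL (b : W) : Lex (W → NB) := toLex (a b)

lemma aL_inj : Function.Injective aL := fun b c h => a_inj h

def Carrier : Set (Lex (W → NB)) := Set.range aL

def Idx : Type := ↥Carrier

noncomputable instance : LinearOrder Idx := by
  unfold Idx
  infer_instance

def idx (s : Idx) : W := s.2.choose

lemma idx_spec (s : Idx) : aL (idx s) = s.val := s.2.choose_spec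

lemma idx_lt_iff {s t : Idx} :
    s < t ↔ Pi.Lex (· < ·) (@fun _ => (· < ·)) (a (idx s)) (a (idx t)) := by
  have h : s < t ↔ s.val < t.val := Iff.rfl
  rw [h, ← idx_spec s, ← idx_spec t]
  exact Iff.rfl

lemma idx_le_iff {s t : Idx} : s ≤ t ↔ (s.val ≤ t.val) := Iff.rfl

lemma idx_eq_iff {s t : Idx} : idx s = idx t ↔ s = t := by
  constructor
  · intro h
    apply Subtype.ext
    rw [← idx_spec s, ← idx_spec t, h]
  · intro h; rw [h]

/-! ### Applying the core lemma -/

lemma apply_core {b c b' c' : W} (hbc : b < c) (hbc' : b' < c')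
    (hM : Mv b c = Mv b' c') (hk : kv b c = kv b' c') (hL : Lv b c = Lv b' c')
    (hlt : Pi.Lex (· < ·) (@fun _ => (· < ·)) (a b) (a b')) :
    Pi.Lex (· < ·) (@fun _ => (· < ·)) (a c) (a c') := by
  have hkF : (FvSet b c).card = kv b c := rfl
  have hkF' : (FvSet b' c').card = kv b c := hk.symm ▸ rfl
  apply core (x := a b) (y := a c) (x' := a b') (y' := a c')
    (α := b) (β := c) (α' := b') (β' := c') (M := Mv b c) (k := kv b c)
    (F := FvSet b c) (F' := FvSet b' c') (hkF := hkF) (hkF' := hkF')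
    (fun w => a_bot_iff) (fun w => a_bot_iff) (fun w => a_bot_iff) (fun w => a_bot_iff)
    hbc hbc' (fun w hw => Mv_D hw)
    (fun w hw => by have := Mv_D hw; rwa [← hM] at this) (Mv_y hbc)
    (fun w => FvSet_mem) (fun w => by rw [hM]; exact FvSet_mem) ?_ hlt
  -- the matching condition
  intro i
  have hi1 : (i : ℕ) < ((FvSet b c).sort (· ≤ ·)).length := by
    rw [Finset.length_sort, hkF]; exact i.isLt
  have hi2 : (i : ℕ) < ((FvSet b' c').sort (· ≤ ·)).length := by
    rw [Finset.length_sort, hkF']; exact i.isLt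
  have e1 : ((FvSet b c).orderIsoOfFin hkF i : W) = ((FvSet b c).sort (· ≤ ·))[(i : ℕ)] := by
    rw [Finset.coe_orderIsoOfFin_apply, Finset.orderEmbOfFin_apply]
    simp [Fin.getElem_fin]
  have e2 : ((FvSet b' c').orderIsoOfFin hkF' i : W) = ((FvSet b' c').sort (· ≤ ·))[(i : ℕ)] := by
    rw [Finset.coe_orderIsoOfFin_apply, Finset.orderEmbOfFin_apply]
    simp [Fin.getElem_fin]
  rw [e1, e2]
  have hL1 : (Lv b c)[(i : ℕ)]'(by unfold Lv; rw [List.length_map]; exact hi1)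
      = (a b ((FvSet b c).sort (· ≤ ·))[(i : ℕ)], a c ((FvSet b c).sort (· ≤ ·))[(i : ℕ)]) := by
    unfold Lv; rw [List.getElem_map]
  have hL2 : (Lv b' c')[(i : ℕ)]'(by unfold Lv; rw [List.length_map]; exact hi2)
      = (a b' ((FvSet b' c').sort (· ≤ ·))[(i : ℕ)], a c' ((FvSet b' c').sort (· ≤ ·))[(i : ℕ)]) := by
    unfold Lv; rw [List.getElem_map]
  rw [← hL1, ← hL2]
  exact List.getElem_of_eq hL _

/-! ### The decomposition function -/

instance : Encodable NB := inferInstanceAs (Encodable (Option ℕ))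

def invF (p : Idx × Idx) : ℕ × ℕ × ℕ × List (NB × NB) :=
  if idx p.1 < idx p.2 then (1, Mv (idx p.1) (idx p.2), kv (idx p.1) (idx p.2), Lv (idx p.1) (idx p.2))
  else if idx p.2 < idx p.1 then (2, Mv (idx p.2) (idx p.1), kv (idx p.2) (idx p.1), Lv (idx p.2) (idx p.1))
  else (0, 0, 0, [])

noncomputable def fDec : Idx × Idx → ℕ := fun p => Encodable.encode (invF p)

lemma prod_le_of_both {s t s' t' : Idx} (h1 : s ≤ s') (h2 : t ≤ t') :
    (s, t) ≤ (s', t') := Prod.mk_le_mk.2 ⟨h1, h2⟩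

lemma fiber_chain (p q : Idx × Idx) (h : fDec p = fDec q) : p ≤ q ∨ q ≤ p := by
  have hinv : invF p = invF q := Encodable.encode_injective h
  obtain ⟨s, t⟩ := p
  obtain ⟨s', t'⟩ := q
  unfold invF at hinv
  simp only at hinv
  rcases lt_trichotomy (idx s) (idx t) with hst | hst | hst
  · rw [if_pos hst] at hinv
    rcases lt_trichotomy (idx s') (idx t') with hst' | hst' | hst'
    · rw [if_pos hst'] at hinv
      simp only [Prod.mk.injEq] at hinv
      obtain ⟨-, hM, hk, hL⟩ := hinv
      rcases lt_trichotomy s s' with hss | hss | hss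
      · left
        have hlt := idx_lt_iff.1 hss
        have := apply_core hst hst' hM hk hL hlt
        exact prod_le_of_both (le_of_lt hss) (le_of_lt (idx_lt_iff.2 this))
      · subst hss
        rcases le_total t t' with htt | htt
        · exact Or.inl (prod_le_of_both le_rfl htt)
        · exact Or.inr (prod_le_of_both le_rfl htt)
      · right
        have hlt := idx_lt_iff.1 hss
        have := apply_core hst' hst hM.symm hk.symm hL.symm hlt
        exact prod_le_of_both (le_of_lt hss) (le_of_lt (idx_lt_iff.2 this))
    · rw [if_neg (by rw [hst']; exact lt_irrefl _), if_neg (by rw [hst']; exact lt_irrefl _)]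
        at hinv
      simp only [Prod.mk.injEq] at hinv
      omega
    · rw [if_neg (not_lt.2 (le_of_lt hst')), if_pos hst'] at hinv
      simp only [Prod.mk.injEq] at hinv
      omega
  · -- diagonal
    rw [if_neg (by rw [hst]; exact lt_irrefl _), if_neg (by rw [hst]; exact lt_irrefl _)] at hinv
    have hts : s = t := idx_eq_iff.1 hst
    subst hts
    rcases lt_trichotomy (idx s') (idx t') with hst' | hst' | hst'
    · rw [if_pos hst'] at hinv
      simp only [Prod.mk.injEq] at hinv
      omega
    · have hts' : s' = t' := idx_eq_iff.1 hst'
      subst hts'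
      rcases le_total s s' with hss | hss
      · exact Or.inl (prod_le_of_both hss hss)
      · exact Or.inr (prod_le_of_both hss hss)
    · rw [if_neg (not_lt.2 (le_of_lt hst')), if_pos hst'] at hinv
      simp only [Prod.mk.injEq] at hinv
      omega
  · rw [if_neg (not_lt.2 (le_of_lt hst)), if_pos hst] at hinv
    rcases lt_trichotomy (idx s') (idx t') with hst' | hst' | hst'
    · rw [if_pos hst'] at hinv
      simp only [Prod.mk.injEq] at hinv
      omega
    · rw [if_neg (by rw [hst']; exact lt_irrefl _), if_neg (by rw [hst']; exact lt_irrefl _)]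
        at hinv
      simp only [Prod.mk.injEq] at hinv
      omega
    · rw [if_neg (not_lt.2 (le_of_lt hst')), if_pos hst'] at hinv
      simp only [Prod.mk.injEq] at hinv
      obtain ⟨-, hM, hk, hL⟩ := hinv
      rcases lt_trichotomy t t' with htt | htt | htt
      · left
        have hlt := idx_lt_iff.1 htt
        have := apply_core hst hst' hM hk hL hlt
        exact prod_le_of_both (le_of_lt (idx_lt_iff.2 this)) (le_of_lt htt)
      · subst htt
        rcases le_total s s' with hss | hss
        · exact Or.inl (prod_le_of_both hss le_rfl)
        · exact Or.inr (prod_le_of_both hss le_rfl)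
      · right
        have hlt := idx_lt_iff.1 htt
        have := apply_core hst' hst hM.symm hk.symm hL.symm hlt
        exact prod_le_of_both (le_of_lt (idx_lt_iff.2 this)) (le_of_lt htt)

lemma mk_Idx : #Idx = Cardinal.aleph 1 := by
  have h1 : #Idx = #(Set.range aL) := rfl
  rw [h1, Cardinal.mk_range_eq _ aL_inj]
  exact Cardinal.mk_ord_toType _

end

end Shelah

open Cardinal

/-- Shelah: there is a linear order `I` of cardinality `ℵ₁` such that `I × I`, with
the coordinatewise partial order, is the union of countably many chains. -/
theorem stmt_8 :
    ∃ (I : Type) (_ : LinearOrder I), #I = Cardinal.aleph 1 ∧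
      ∃ f : I × I → ℕ, ∀ p q : I × I, f p = f q → p ≤ q ∨ q ≤ p := by
  exact ⟨Shelah.Idx, inferInstance, Shelah.mk_Idx, Shelah.fDec, Shelah.fiber_chain⟩
end

section
/- If λ > ℵ₀ is a strong limit cardinal, then among the graphs with at most λ vertices in which every vertex has valence < λ, there is a universal one, i.e., a graph into which every such graph embeds as a subgraph. -/
open Cardinal Set

namespace Stmt9

instance iwo (o : Ordinal.{0}) : IsWellOrder o.ToType (· < ·) := isWellOrder_lt

abbrev PP (lam : Cardinal.{0}) : Type := lam.ord.ToType
abbrev II (lam : Cardinal.{0}) : Type := (lam.ord.cof).ord.ToType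

section Setup
variable (lam : Cardinal.{0})

lemma kappa_aleph0 (h0 : ℵ₀ < lam) : ℵ₀ ≤ lam.ord.cof :=
  Ordinal.aleph0_le_cof.2 (Cardinal.isSuccLimit_ord h0.le)

lemma kappa_le : lam.ord.cof ≤ lam := Ordinal.cof_ord_le lam

lemma mkII : #(II lam) = lam.ord.cof := by
  rw [Cardinal.mk_toType, Cardinal.card_ord]

lemma mkPP : #(PP lam) = lam := by
  rw [Cardinal.mk_toType, Cardinal.card_ord]

lemma II_nonempty (h0 : ℵ₀ < lam) : Nonempty (II lam) := by
  rw [Ordinal.toType_nonempty_iff_ne_zero, ne_eq, Cardinal.ord_eq_zero]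
  intro h
  have h2 := kappa_aleph0 lam h0
  rw [h] at h2
  exact Cardinal.aleph0_pos.not_ge h2

/-- a cofinal subset of `PP lam` of size `cof`. -/
noncomputable def Sdata : {S : Set (PP lam) // Set.Unbounded (· < ·) S ∧ #S = lam.ord.cof} := by
  apply Classical.indefiniteDescription
  obtain ⟨s, hs, hs'⟩ := Order.exists_cof_eq (PP lam)
  refine ⟨s, fun a => ?_, by rw [hs', Ordinal.cof_toType]⟩
  obtain ⟨b, hb, hab⟩ := hs a
  exact ⟨b, hb, not_lt_of_ge hab⟩

noncomputable def gEq : II lam ≃ ↥(Sdata lam).val :=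
  Classical.choice <| Cardinal.eq.mp <| by rw [mkII, (Sdata lam).prop.2]

/-- rank of the i-th element of the cofinal set -/
noncomputable def ordfun (i : II lam) : Ordinal :=
  Ordinal.typein (α := PP lam) (· < ·) ((gEq lam i : ↥(Sdata lam).val) : PP lam)

lemma ordfun_card_lt (i : II lam) : (ordfun lam i).card < lam :=
  Cardinal.card_typein_toType_lt lam _

noncomputable def lfun (i : II lam) : Cardinal :=
  ℵ₀ ⊔ ⨆ j : (Set.Iic i), (ordfun lam j.val).card

lemma lfun_aleph0 (i : II lam) : ℵ₀ ≤ lfun lam i := le_sup_left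

lemma mk_Iic_lt_cof (h0 : ℵ₀ < lam) (i : II lam) : #(Set.Iic i) < lam.ord.cof := by
  have he : (Set.Iic i) = insert i (Set.Iio i) := by
    ext x; simp [le_iff_lt_or_eq, or_comm]
  rw [he]
  have h2 : #(Set.Iio i) < lam.ord.cof := Cardinal.mk_Iio_ord_toType i
  calc #(insert i (Set.Iio i) : Set (II lam)) ≤ #(Set.Iio i) + 1 := Cardinal.mk_insert_le
  _ < lam.ord.cof := Cardinal.add_lt_of_lt (kappa_aleph0 lam h0) h2
      (lt_of_lt_of_le Cardinal.one_lt_aleph0 (kappa_aleph0 lam h0))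

lemma lfun_lt (h0 : ℵ₀ < lam) (i : II lam) : lfun lam i < lam := by
  apply max_lt h0
  exact Ordinal.iSup_lt (mk_Iic_lt_cof lam h0 i) (fun j => ordfun_card_lt lam j.val)

lemma lfun_mono (h0 : ℵ₀ < lam) {i i' : II lam} (h : i ≤ i') : lfun lam i ≤ lfun lam i' := by
  apply sup_le le_sup_left
  apply le_trans _ (le_sup_right)
  apply ciSup_le'
  intro j
  exact le_ciSup (Cardinal.bddAbove_range _) (⟨j.val, j.prop.trans h⟩ : Set.Iic i')

lemma lfun_unbounded (h0 : ℵ₀ < lam) {nu : Cardinal} (hnu : nu < lam) :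
    ∃ i : II lam, nu ≤ lfun lam i := by
  have hord : nu.ord < lam.ord := Cardinal.ord_lt_ord.2 hnu
  set a : PP lam := Ordinal.enum (α := PP lam) (· < ·)
    ⟨nu.ord, by rw [Ordinal.type_toType]; exact hord⟩ with ha
  obtain ⟨s, hsS, hs⟩ := (Sdata lam).prop.1 a
  set i : II lam := (gEq lam).symm ⟨s, hsS⟩ with hi
  refine ⟨i, ?_⟩
  have h1 : nu ≤ (ordfun lam i).card := by
    have hnot : ¬ (((gEq lam i : ↥(Sdata lam).val) : PP lam) < a) := by
      rw [hi, Equiv.apply_symm_apply]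
      exact hs
    have h2 : Ordinal.typein (α := PP lam) (· < ·) a ≤ ordfun lam i :=
      (Ordinal.typein_le_typein (α := PP lam) (· < ·)).2 hnot
    have h3 : Ordinal.typein (α := PP lam) (· < ·) a = nu.ord := by
      rw [ha]; exact Ordinal.typein_enum _ _
    rw [h3] at h2
    calc nu = nu.ord.card := (Cardinal.card_ord nu).symm
    _ ≤ (ordfun lam i).card := Ordinal.card_le_card h2
  refine le_trans h1 (le_trans ?_ le_sup_right)
  exact le_ciSup (Cardinal.bddAbove_range _) (⟨i, le_refl i⟩ : Set.Iic i)

noncomputable def pos (h0 : ℵ₀ < lam) (h1 : lam.IsStrongLimit) (i : II lam) : PP lam :=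
  Ordinal.enum (α := PP lam) (· < ·) ⟨((2 : Cardinal.{0}) ^ lfun lam i).ord, by
    rw [Ordinal.type_toType]; exact Cardinal.ord_lt_ord.2 (h1.two_power_lt (lfun_lt lam h0 i))⟩

lemma pos_mono (h0 : ℵ₀ < lam) (h1 : lam.IsStrongLimit) {i i' : II lam} (h : i ≤ i') :
    pos lam h0 h1 i ≤ pos lam h0 h1 i' := by
  unfold pos
  rw [Ordinal.enum_le_enum' lam.ord, Subtype.mk_le_mk]
  exact Cardinal.ord_le_ord.2 (Cardinal.power_le_power_left two_ne_zero (lfun_mono lam h0 h))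

lemma mk_Iio_pos (h0 : ℵ₀ < lam) (h1 : lam.IsStrongLimit) (i : II lam) :
    #(Set.Iio (pos lam h0 h1 i)) = (2 : Cardinal.{0}) ^ lfun lam i := by
  have h2 : #(Set.Iio (pos lam h0 h1 i)) = (Ordinal.typein (α := PP lam) (· < ·) (pos lam h0 h1 i)).card := by
    exact (Ordinal.card_typein (r := ((· < ·) : PP lam → PP lam → Prop)) _).symm
  rw [h2]
  unfold pos
  exact (congrArg Ordinal.card (Ordinal.typein_enum _ _)).trans (Cardinal.card_ord _)

lemma mk_Iio_pos_lt (h0 : ℵ₀ < lam) (h1 : lam.IsStrongLimit) (i : II lam) :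
    #(Set.Iio (pos lam h0 h1 i)) < lam := by
  rw [mk_Iio_pos]
  exact h1.two_power_lt (lfun_lt lam h0 i)

end Setup
section Graph
variable (lam : Cardinal.{0})

abbrev VV : Type := PP lam × II lam × II lam × PP lam

variable (h0 : ℵ₀ < lam) (h1 : lam.IsStrongLimit)

def validV (x : VV lam) : Prop :=
  x.2.2.1 ≤ x.2.1 ∧ x.2.2.2 < pos lam h0 h1 x.2.2.1

def LinkV (x y : VV lam) : Prop :=
  x.1 = y.1 ∧ validV lam h0 h1 x ∧ validV lam h0 h1 y ∧
    (x.2.1 = y.2.1 ∨ (lam.ord.cof < lam ∧ x.2.1 < y.2.1 ∧ y.2.2.1 ≤ x.2.1))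

noncomputable def GG : SimpleGraph (VV lam) := SimpleGraph.fromRel (LinkV lam h0 h1)

lemma mul_le_lam (h0 : ℵ₀ < lam) {a b : Cardinal} (ha : a ≤ lam) (hb : b ≤ lam) : a * b ≤ lam :=
  le_trans (Cardinal.mul_le_max a b) (max_le (max_le ha hb) h0.le)

lemma mkVV_le (h0 : ℵ₀ < lam) : #(VV lam) ≤ lam := by
  have e : #(VV lam) = lam * (lam.ord.cof * (lam.ord.cof * lam)) := by
    simp [Cardinal.mk_prod, mkPP, mkII]
  rw [e]
  exact mul_le_lam lam h0 le_rfl (mul_le_lam lam h0 (kappa_le lam)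
    (mul_le_lam lam h0 (kappa_le lam) le_rfl))

def SupSet (v : VV lam) : Set (VV lam) :=
  {y | y.1 = v.1 ∧ y.2.2.1 ≤ v.2.1 ∧ y.2.2.2 < pos lam h0 h1 v.2.1 ∧
    (lam.ord.cof < lam ∨ y.2.1 ≤ v.2.1)}

lemma nbr_subset (h0 : ℵ₀ < lam) (h1 : lam.IsStrongLimit) (v : VV lam) :
    (GG lam h0 h1).neighborSet v ⊆ SupSet lam h0 h1 v := by
  intro y hy
  have hadj : (GG lam h0 h1).Adj v y := hy
  rw [GG, SimpleGraph.fromRel_adj] at hadj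
  obtain ⟨hne, hL⟩ := hadj
  rcases hL with hL | hL
  · obtain ⟨hc, hvx, hvy, hst⟩ := hL
    rcases hst with hst | ⟨hsing, hlt, hble⟩
    · exact ⟨hc.symm, hvy.1.trans_eq hst.symm,
        lt_of_lt_of_le hvy.2 (pos_mono lam h0 h1 (hvy.1.trans_eq hst.symm)),
        Or.inr hst.symm.le⟩
    · exact ⟨hc.symm, hble, lt_of_lt_of_le hvy.2 (pos_mono lam h0 h1 hble), Or.inl hsing⟩
  · obtain ⟨hc, hvy, hvx, hst⟩ := hL
    rcases hst with hst | ⟨hsing, hlt, hble⟩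
    · exact ⟨hc, hvy.1.trans_eq hst,
        lt_of_lt_of_le hvy.2 (pos_mono lam h0 h1 (hvy.1.trans_eq hst)),
        Or.inr hst.le⟩
    · exact ⟨hc, hvy.1.trans hlt.le, lt_of_lt_of_le hvy.2
        (pos_mono lam h0 h1 (hvy.1.trans hlt.le)), Or.inl hsing⟩

lemma nbr_card_lt (h0 : ℵ₀ < lam) (h1 : lam.IsStrongLimit) (v : VV lam) : #((GG lam h0 h1).neighborSet v) < lam := by
  apply lt_of_le_of_lt (Cardinal.mk_le_mk_of_subset (nbr_subset lam h0 h1 v))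
  have hIic : #(Set.Iic v.2.1) < lam :=
    lt_of_lt_of_le (mk_Iic_lt_cof lam h0 v.2.1) (kappa_le lam)
  have hIio : #(Set.Iio (pos lam h0 h1 v.2.1)) < lam := mk_Iio_pos_lt lam h0 h1 v.2.1
  rcases lt_or_ge lam.ord.cof lam with hsing | hreg
  · -- singular: inject into II × Iic × Iio
    have hinj : Function.Injective (fun (y : ↥(SupSet lam h0 h1 v)) =>
        ((y.val.2.1, ⟨y.val.2.2.1, y.prop.2.1⟩, ⟨y.val.2.2.2, y.prop.2.2.1⟩) :
          II lam × ↥(Set.Iic v.2.1) × ↥(Set.Iio (pos lam h0 h1 v.2.1)))) := by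
      rintro ⟨⟨c1, s1, b1, p1⟩, hy1⟩ ⟨⟨c2, s2, b2, p2⟩, hy2⟩ h
      simp only [Prod.mk.injEq, Subtype.mk.injEq] at h
      obtain ⟨e1, e2, e3⟩ := h
      apply Subtype.ext
      simp only [Prod.mk.injEq]
      exact ⟨hy1.1.trans hy2.1.symm, e1, congrArg Subtype.val e2, congrArg Subtype.val e3⟩
    apply lt_of_le_of_lt (Cardinal.mk_le_of_injective hinj)
    have e : #(II lam × ↥(Set.Iic v.2.1) × ↥(Set.Iio (pos lam h0 h1 v.2.1))) =
        lam.ord.cof * (#(Set.Iic v.2.1) * #(Set.Iio (pos lam h0 h1 v.2.1))) := by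
      simp [Cardinal.mk_prod, mkII]
    rw [e]
    exact Cardinal.mul_lt_of_lt h0.le hsing
      (Cardinal.mul_lt_of_lt h0.le hIic hIio)
  · -- regular: stage also ≤
    have hsub2 : SupSet lam h0 h1 v ⊆
        {y : VV lam | y.1 = v.1 ∧ y.2.1 ≤ v.2.1 ∧ y.2.2.1 ≤ v.2.1 ∧
          y.2.2.2 < pos lam h0 h1 v.2.1} := by
      rintro y ⟨hc, hb, hp, hg⟩
      rcases hg with hg | hg
      · exact absurd hg (not_lt_of_ge hreg)
      · exact ⟨hc, hg, hb, hp⟩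
    apply lt_of_le_of_lt (Cardinal.mk_le_mk_of_subset hsub2)
    have hinj : Function.Injective (fun (y : ↥{y : VV lam | y.1 = v.1 ∧ y.2.1 ≤ v.2.1 ∧
        y.2.2.1 ≤ v.2.1 ∧ y.2.2.2 < pos lam h0 h1 v.2.1}) =>
        ((⟨y.val.2.1, y.prop.2.1⟩, ⟨y.val.2.2.1, y.prop.2.2.1⟩,
          ⟨y.val.2.2.2, y.prop.2.2.2⟩) :
          ↥(Set.Iic v.2.1) × ↥(Set.Iic v.2.1) × ↥(Set.Iio (pos lam h0 h1 v.2.1)))) := by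
      rintro ⟨⟨c1, s1, b1, p1⟩, hy1⟩ ⟨⟨c2, s2, b2, p2⟩, hy2⟩ h
      simp only [Prod.mk.injEq, Subtype.mk.injEq] at h
      obtain ⟨e1, e2, e3⟩ := h
      apply Subtype.ext
      simp only [Prod.mk.injEq]
      exact ⟨hy1.1.trans hy2.1.symm, congrArg Subtype.val e1, congrArg Subtype.val e2, congrArg Subtype.val e3⟩
    apply lt_of_le_of_lt (Cardinal.mk_le_of_injective hinj)
    have e : #(↥(Set.Iic v.2.1) × ↥(Set.Iic v.2.1) × ↥(Set.Iio (pos lam h0 h1 v.2.1))) =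
        #(Set.Iic v.2.1) * (#(Set.Iic v.2.1) * #(Set.Iio (pos lam h0 h1 v.2.1))) := by
      simp [Cardinal.mk_prod]
    rw [e]
    exact Cardinal.mul_lt_of_lt h0.le hIic (Cardinal.mul_lt_of_lt h0.le hIic hIio)

end Graph

section Hside
variable {W : Type} (H : SimpleGraph W)

noncomputable def deg (w : W) : Cardinal.{0} := #(H.neighborSet w)

/-- iterative reachability inside `D` starting from `w0` -/
def RS (w0 : W) (D : Set W) : ℕ → Set W
  | 0 => {w0} ∩ D
  | n+1 => RS w0 D n ∪ {v | v ∈ D ∧ ∃ u ∈ RS w0 D n, H.Adj u v}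

def Aset (w0 : W) (D : Set W) : Set W := ⋃ n, RS H w0 D n

lemma RS_subset_D (w0 : W) (D : Set W) : ∀ n, RS H w0 D n ⊆ D := by
  intro n
  induction n with
  | zero => exact Set.inter_subset_right
  | succ n ih =>
    rintro v (hv | hv)
    · exact ih hv
    · exact hv.1

lemma Aset_subset_D (w0 : W) (D : Set W) : Aset H w0 D ⊆ D := by
  rintro v hv
  obtain ⟨n, hn⟩ := Set.mem_iUnion.1 hv
  exact RS_subset_D H w0 D n hn

lemma Aset_start (w0 : W) (D : Set W) (h : w0 ∈ D) : w0 ∈ Aset H w0 D :=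
  Set.mem_iUnion.2 ⟨0, by exact ⟨rfl, h⟩⟩

lemma Aset_closed (w0 : W) (D : Set W) {u v : W} (hu : u ∈ Aset H w0 D)
    (hadj : H.Adj u v) (hv : v ∈ D) : v ∈ Aset H w0 D := by
  obtain ⟨n, hn⟩ := Set.mem_iUnion.1 hu
  exact Set.mem_iUnion.2 ⟨n+1, Or.inr ⟨hv, u, hn, hadj⟩⟩

lemma RS_mono_D (w0 : W) {D D' : Set W} (h : D ⊆ D') :
    ∀ n, RS H w0 D n ⊆ RS H w0 D' n := by
  intro n
  induction n with
  | zero => exact Set.inter_subset_inter_right _ h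
  | succ n ih =>
    rintro v (hv | ⟨hv1, u, hu, hadj⟩)
    · exact Or.inl (ih hv)
    · exact Or.inr ⟨h hv1, u, ih hu, hadj⟩

lemma Aset_mono_D (w0 : W) {D D' : Set W} (h : D ⊆ D') :
    Aset H w0 D ⊆ Aset H w0 D' := by
  rintro v hv
  obtain ⟨n, hn⟩ := Set.mem_iUnion.1 hv
  exact Set.mem_iUnion.2 ⟨n, RS_mono_D H w0 h n hn⟩

lemma RS_reachable (w0 : W) (D : Set W) :
    ∀ n, ∀ v ∈ RS H w0 D n, H.Reachable w0 v := by
  intro n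
  induction n with
  | zero =>
    intro v hv
    have : v = w0 := hv.1
    rw [this]
  | succ n ih =>
    rintro v (hv | ⟨_, u, hu, hadj⟩)
    · exact ih v hv
    · exact (ih u hu).trans hadj.reachable

lemma Aset_reachable (w0 : W) (D : Set W) {v : W} (hv : v ∈ Aset H w0 D) :
    H.Reachable w0 v := by
  obtain ⟨n, hn⟩ := Set.mem_iUnion.1 hv
  exact RS_reachable H w0 D n v hn

lemma walk_mem_Aset (w0 : W) (D : Set W) {u v : W} (p : H.Walk u v)
    (hu : u ∈ Aset H w0 D) (hsup : ∀ x ∈ p.support, x ∈ D) : v ∈ Aset H w0 D := by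
  induction p with
  | nil => exact hu
  | @cons a b c hadj q ih =>
    apply ih
    · exact Aset_closed H w0 D hu hadj (hsup b (by simp))
    · intro x hx
      exact hsup x (by simp [hx])

lemma RS_card_le (w0 : W) (D : Set W) {mu : Cardinal} (hmu : ℵ₀ ≤ mu)
    (hD : ∀ v ∈ D, deg H v ≤ mu) : ∀ n, #(RS H w0 D n) ≤ mu := by
  intro n
  induction n with
  | zero =>
    apply le_trans (Cardinal.mk_le_mk_of_subset Set.inter_subset_left)
    rw [Cardinal.mk_singleton]
    exact le_trans (le_of_lt Cardinal.one_lt_aleph0) hmu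
  | succ n ih =>
    apply le_trans (Cardinal.mk_union_le _ _)
    have hX : #({v | v ∈ D ∧ ∃ u ∈ RS H w0 D n, H.Adj u v}) ≤ mu := by
      have hsub : {v | v ∈ D ∧ ∃ u ∈ RS H w0 D n, H.Adj u v} ⊆
          ⋃ u : ↥(RS H w0 D n), H.neighborSet u.val := by
        rintro v ⟨hv, u, hu, hadj⟩
        exact Set.mem_iUnion.2 ⟨⟨u, hu⟩, hadj⟩
      apply le_trans (Cardinal.mk_le_mk_of_subset hsub)
      apply le_trans (Cardinal.mk_iUnion_le _)
      have hs : (⨆ u : ↥(RS H w0 D n), #(H.neighborSet u.val)) ≤ mu :=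
        ciSup_le' fun u => hD u.val (RS_subset_D H w0 D n u.prop)
      calc #(↥(RS H w0 D n)) * ⨆ u : ↥(RS H w0 D n), #(H.neighborSet u.val)
          ≤ mu * mu := mul_le_mul' ih hs
        _ ≤ mu := by
            apply le_trans (Cardinal.mul_le_max mu mu)
            simp [hmu]
    calc #(RS H w0 D n) + #({v | v ∈ D ∧ ∃ u ∈ RS H w0 D n, H.Adj u v}) ≤ mu + mu :=
        add_le_add ih hX
      _ ≤ mu := by
          apply le_trans (Cardinal.add_le_max mu mu)
          simp [hmu]

lemma Aset_card_le (w0 : W) (D : Set W) {mu : Cardinal} (hmu : ℵ₀ ≤ mu)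
    (hD : ∀ v ∈ D, deg H v ≤ mu) : #(Aset H w0 D) ≤ mu := by
  apply le_trans (Cardinal.mk_iUnion_le _)
  have hs : (⨆ n : ℕ, #(RS H w0 D n)) ≤ mu := ciSup_le' fun n => RS_card_le H w0 D hmu hD n
  calc #ℕ * ⨆ n : ℕ, #(RS H w0 D n) ≤ ℵ₀ * mu := by
        rw [Cardinal.mk_nat]; exact mul_le_mul' le_rfl hs
    _ ≤ mu := by
        apply le_trans (Cardinal.mul_le_max _ _)
        simp [hmu]

lemma RS_card_lt_reg {lam : Cardinal.{0}} (h0 : ℵ₀ < lam) (hreg : lam ≤ lam.ord.cof)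
    (hdeg : ∀ v : W, deg H v < lam) (w0 : W) (D : Set W) :
    ∀ n, #(RS H w0 D n) < lam := by
  intro n
  induction n with
  | zero =>
    apply lt_of_le_of_lt (Cardinal.mk_le_mk_of_subset Set.inter_subset_left)
    rw [Cardinal.mk_singleton]
    exact lt_trans Cardinal.one_lt_aleph0 h0
  | succ n ih =>
    apply lt_of_le_of_lt (Cardinal.mk_union_le _ _)
    have hX : #({v | v ∈ D ∧ ∃ u ∈ RS H w0 D n, H.Adj u v}) < lam := by
      have hsub : {v | v ∈ D ∧ ∃ u ∈ RS H w0 D n, H.Adj u v} ⊆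
          ⋃ u : ↥(RS H w0 D n), H.neighborSet u.val := by
        rintro v ⟨hv, u, hu, hadj⟩
        exact Set.mem_iUnion.2 ⟨⟨u, hu⟩, hadj⟩
      apply lt_of_le_of_lt (Cardinal.mk_le_mk_of_subset hsub)
      apply lt_of_le_of_lt (Cardinal.mk_iUnion_le _)
      have hs : (⨆ u : ↥(RS H w0 D n), #(H.neighborSet u.val)) < lam :=
        Ordinal.iSup_lt (lt_of_lt_of_le ih hreg) (fun u => hdeg u.val)
      exact Cardinal.mul_lt_of_lt h0.le ih hs
    exact Cardinal.add_lt_of_lt h0.le ih hX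

lemma Aset_card_lt_reg {lam : Cardinal.{0}} (h0 : ℵ₀ < lam) (hreg : lam ≤ lam.ord.cof)
    (hdeg : ∀ v : W, deg H v < lam) (w0 : W) (D : Set W) :
    #(Aset H w0 D) < lam := by
  apply lt_of_le_of_lt (Cardinal.mk_iUnion_le _)
  have hs : (⨆ n : ℕ, #(RS H w0 D n)) < lam :=
    Ordinal.iSup_lt (by rw [Cardinal.mk_nat]; exact lt_of_lt_of_le h0 hreg)
      (RS_card_lt_reg H h0 hreg hdeg w0 D)
  apply Cardinal.mul_lt_of_lt h0.le _ hs
  rw [Cardinal.mk_nat]; exact h0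

end Hside

section Stage
variable (lam : Cardinal.{0}) {W : Type} (H : SimpleGraph W)

/-- vertices of degree at most `lfun lam i` -/
noncomputable def Dset (i : II lam) : Set W := {v | deg H v ≤ lfun lam i}

lemma Dset_mono (h0 : ℵ₀ < lam) {i i' : II lam} (h : i ≤ i') :
    Dset lam H i ⊆ Dset lam H i' :=
  fun x hv => (le_trans (hv : deg H x ≤ lfun lam i) (lfun_mono lam h0 h) : deg H x ≤ lfun lam i')

/-- canonical root of the connected component of a vertex -/
noncomputable def root (w : W) : W := Quot.out (H.connectedComponentMk w)

lemma root_reachable (w : W) : H.Reachable (root H w) w :=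
  SimpleGraph.ConnectedComponent.exact (Quot.out_eq (H.connectedComponentMk w))

lemma root_eq_of_comp_eq {a b : W}
    (h : H.connectedComponentMk a = H.connectedComponentMk b) : root H a = root H b := by
  unfold root; rw [h]

lemma comp_eq_of_adj {a b : W} (h : H.Adj a b) :
    H.connectedComponentMk a = H.connectedComponentMk b :=
  SimpleGraph.ConnectedComponent.connectedComponentMk_eq_of_adj h

lemma exists_lfun_list_bound (h0 : ℵ₀ < lam) (hdeg : ∀ v : W, deg H v < lam) (l : List W) :
    ∃ i : II lam, ∀ x ∈ l, deg H x ≤ lfun lam i := by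
  induction l with
  | nil =>
    obtain ⟨i⟩ := II_nonempty lam h0
    exact ⟨i, by simp⟩
  | cons a l ih =>
    obtain ⟨i, hi⟩ := ih
    obtain ⟨i', hi'⟩ := lfun_unbounded lam h0 (hdeg a)
    refine ⟨max i i', ?_⟩
    intro x hx
    rcases List.mem_cons.1 hx with hx | hx
    · rw [hx]; exact le_trans hi' (lfun_mono lam h0 (le_max_right i i'))
    · exact le_trans (hi x hx) (lfun_mono lam h0 (le_max_left i i'))

lemma exists_stage (h0 : ℵ₀ < lam) (hdeg : ∀ v : W, deg H v < lam) (w : W) :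
    ∃ i : II lam, w ∈ Aset H (root H w) (Dset lam H i) := by
  obtain ⟨p⟩ := root_reachable H w
  obtain ⟨i, hi⟩ := exists_lfun_list_bound lam H h0 hdeg p.support
  refine ⟨i, walk_mem_Aset H (root H w) (Dset lam H i) p ?_ (fun x hx => hi x hx)⟩
  exact Aset_start H _ _ (hi _ p.start_mem_support)

/-- the entry stage of the vertex -/
noncomputable def sIdx (h0 : ℵ₀ < lam) (hdeg : ∀ v : W, deg H v < lam) (w : W) : II lam :=
  (@IsWellFounded.wf (II lam) (· < ·) _).min
    {i | w ∈ Aset H (root H w) (Dset lam H i)} (exists_stage lam H h0 hdeg w)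

lemma sIdx_mem (h0 : ℵ₀ < lam) (hdeg : ∀ v : W, deg H v < lam) (w : W) :
    w ∈ Aset H (root H w) (Dset lam H (sIdx lam H h0 hdeg w)) :=
  WellFounded.min_mem _ {i | w ∈ Aset H (root H w) (Dset lam H i)} (exists_stage lam H h0 hdeg w)

lemma sIdx_le (h0 : ℵ₀ < lam) (hdeg : ∀ v : W, deg H v < lam) {w : W} {i : II lam}
    (h : w ∈ Aset H (root H w) (Dset lam H i)) : sIdx lam H h0 hdeg w ≤ i :=
  le_of_not_gt (WellFounded.not_lt_min _ {i | w ∈ Aset H (root H w) (Dset lam H i)} h)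

/-- the set of candidate block indices -/
def Tset (h0 : ℵ₀ < lam) (hdeg : ∀ v : W, deg H v < lam) (w : W) : Set (II lam) :=
  {i | i = sIdx lam H h0 hdeg w ∨
    ∃ u, H.Adj u w ∧ sIdx lam H h0 hdeg u = i ∧ i < sIdx lam H h0 hdeg w}

/-- the block index of a vertex: the least entry stage of a lower neighbor (or own stage). -/
noncomputable def i0 (h0 : ℵ₀ < lam) (hdeg : ∀ v : W, deg H v < lam) (w : W) : II lam :=
  (@IsWellFounded.wf (II lam) (· < ·) _).min (Tset lam H h0 hdeg w)
    ⟨sIdx lam H h0 hdeg w, Or.inl rfl⟩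

lemma i0_mem (h0 : ℵ₀ < lam) (hdeg : ∀ v : W, deg H v < lam) (w : W) :
    i0 lam H h0 hdeg w ∈ Tset lam H h0 hdeg w :=
  WellFounded.min_mem _ _ _

lemma i0_le (h0 : ℵ₀ < lam) (hdeg : ∀ v : W, deg H v < lam) {w : W} {i : II lam}
    (h : i ∈ Tset lam H h0 hdeg w) : i0 lam H h0 hdeg w ≤ i :=
  le_of_not_gt (WellFounded.not_lt_min _ _ h)

lemma i0_le_sIdx (h0 : ℵ₀ < lam) (hdeg : ∀ v : W, deg H v < lam) (w : W) :
    i0 lam H h0 hdeg w ≤ sIdx lam H h0 hdeg w :=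
  i0_le lam H h0 hdeg (Or.inl rfl)

/-- fibers of the (component, stage, block) assignment -/
def Fib (h0 : ℵ₀ < lam) (hdeg : ∀ v : W, deg H v < lam)
    (γ : H.ConnectedComponent) (i' j : II lam) : Set W :=
  {w | H.connectedComponentMk w = γ ∧ sIdx lam H h0 hdeg w = i' ∧ i0 lam H h0 hdeg w = j}

lemma Fib_card (h0 : ℵ₀ < lam) (hdeg : ∀ v : W, deg H v < lam)
    (γ : H.ConnectedComponent) (i' j : II lam) :
    #(Fib lam H h0 hdeg γ i' j) ≤ lfun lam j := by
  have hA : #(Aset H (Quot.out γ) (Dset lam H j)) ≤ lfun lam j :=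
    Aset_card_le H _ _ (lfun_aleph0 lam j) (fun v hv => hv)
  have hsub : Fib lam H h0 hdeg γ i' j ⊆
      Aset H (Quot.out γ) (Dset lam H j) ∪
        ⋃ u : ↥(Aset H (Quot.out γ) (Dset lam H j)), H.neighborSet u.val := by
    rintro w ⟨hcomp, hs, hj⟩
    have hroot : root H w = Quot.out γ := by unfold root; rw [hcomp]
    rcases i0_mem lam H h0 hdeg w with hcase | ⟨u, hadj, hsu, _⟩
    · left
      have hsj : sIdx lam H h0 hdeg w = j := hcase.symm.trans hj
      have := sIdx_mem lam H h0 hdeg w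
      rwa [hroot, hsj] at this
    · right
      have hcompu : H.connectedComponentMk u = γ := (comp_eq_of_adj H hadj).trans hcomp
      have hrootu : root H u = Quot.out γ := by unfold root; rw [hcompu]
      have hu := sIdx_mem lam H h0 hdeg u
      rw [hrootu, hsu, hj] at hu
      exact Set.mem_iUnion.2 ⟨⟨u, hu⟩, hadj⟩
  apply le_trans (Cardinal.mk_le_mk_of_subset hsub)
  apply le_trans (Cardinal.mk_union_le _ _)
  have hU : #(⋃ u : ↥(Aset H (Quot.out γ) (Dset lam H j)), H.neighborSet u.val) ≤
      lfun lam j := by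
    apply le_trans (Cardinal.mk_iUnion_le _)
    have hs2 : (⨆ u : ↥(Aset H (Quot.out γ) (Dset lam H j)), #(H.neighborSet u.val)) ≤
        lfun lam j :=
      ciSup_le' fun u => Aset_subset_D H _ _ u.prop
    calc _ ≤ lfun lam j * lfun lam j := mul_le_mul' hA hs2
      _ ≤ lfun lam j := by
          apply le_trans (Cardinal.mul_le_max _ _)
          simp [lfun_aleph0 lam j]
  calc _ ≤ lfun lam j + lfun lam j := add_le_add hA hU
    _ ≤ lfun lam j := by
        apply le_trans (Cardinal.add_le_max _ _)
        simp [lfun_aleph0 lam j]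

end Stage

section EmbedCommon
variable (lam : Cardinal.{0}) {W : Type} (H : SimpleGraph W)

/-- an injective coding of connected components into `PP lam` -/
noncomputable def cpEmb (hW : #W ≤ lam) : H.ConnectedComponent ↪ PP lam :=
  Classical.choice ((Cardinal.le_def _ _).1
    (by rw [mkPP]; exact le_trans Cardinal.mk_quot_le hW))

end EmbedCommon

section EmbedSing
variable (lam : Cardinal.{0}) {W : Type} (H : SimpleGraph W)

/-- injections of the fibers into the initial segments -/
noncomputable def eFib (h0 : ℵ₀ < lam) (h1 : lam.IsStrongLimit)
    (hdeg : ∀ v : W, deg H v < lam) (γ : H.ConnectedComponent) (i' j : II lam) :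
    ↥(Fib lam H h0 hdeg γ i' j) ↪ ↥(Set.Iio (pos lam h0 h1 j)) :=
  Classical.choice ((Cardinal.le_def _ _).1
    (by rw [mk_Iio_pos]
        exact le_trans (Fib_card lam H h0 hdeg γ i' j) (le_of_lt (Cardinal.cantor _))))

lemma eFib_key (h0 : ℵ₀ < lam) (h1 : lam.IsStrongLimit) (hdeg : ∀ v : W, deg H v < lam)
    {γ₁ γ₂ : H.ConnectedComponent} {i₁ i₂ j₁ j₂ : II lam}
    (hγ : γ₁ = γ₂) (hi : i₁ = i₂) (hj : j₁ = j₂) (x y : W)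
    (hx : x ∈ Fib lam H h0 hdeg γ₁ i₁ j₁) (hy : y ∈ Fib lam H h0 hdeg γ₂ i₂ j₂)
    (h : ((eFib lam H h0 h1 hdeg γ₁ i₁ j₁) ⟨x, hx⟩).val =
      ((eFib lam H h0 h1 hdeg γ₂ i₂ j₂) ⟨y, hy⟩).val) : x = y := by
  subst hγ; subst hi; subst hj
  have h2 := (eFib lam H h0 h1 hdeg γ₁ i₁ j₁).injective (Subtype.ext h)
  exact congrArg Subtype.val h2

/-- the embedding in the singular case -/
noncomputable def fSing (h0 : ℵ₀ < lam) (h1 : lam.IsStrongLimit) (hW : #W ≤ lam)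
    (hdeg : ∀ v : W, deg H v < lam) (w : W) : VV lam :=
  (cpEmb lam H hW (H.connectedComponentMk w), sIdx lam H h0 hdeg w, i0 lam H h0 hdeg w,
    ((eFib lam H h0 h1 hdeg (H.connectedComponentMk w) (sIdx lam H h0 hdeg w)
      (i0 lam H h0 hdeg w)) ⟨w, ⟨rfl, rfl, rfl⟩⟩).val)

lemma fSing_inj (h0 : ℵ₀ < lam) (h1 : lam.IsStrongLimit) (hW : #W ≤ lam)
    (hdeg : ∀ v : W, deg H v < lam) : Function.Injective (fSing lam H h0 h1 hW hdeg) := by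
  intro a b h
  rw [fSing, fSing, Prod.mk.injEq, Prod.mk.injEq, Prod.mk.injEq] at h
  obtain ⟨h1', h2, h3, h4⟩ := h
  have hcomp : H.connectedComponentMk a = H.connectedComponentMk b :=
    (cpEmb lam H hW).injective h1'
  exact eFib_key lam H h0 h1 hdeg hcomp h2 h3 a b _ _ h4

lemma fSing_valid (h0 : ℵ₀ < lam) (h1 : lam.IsStrongLimit) (hW : #W ≤ lam)
    (hdeg : ∀ v : W, deg H v < lam) (w : W) :
    validV lam h0 h1 (fSing lam H h0 h1 hW hdeg w) := by
  constructor
  · exact i0_le_sIdx lam H h0 hdeg w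
  · exact ((eFib lam H h0 h1 hdeg (H.connectedComponentMk w) (sIdx lam H h0 hdeg w)
      (i0 lam H h0 hdeg w)) ⟨w, ⟨rfl, rfl, rfl⟩⟩).prop

lemma fSing_adj (h0 : ℵ₀ < lam) (h1 : lam.IsStrongLimit) (hsing : lam.ord.cof < lam)
    (hW : #W ≤ lam) (hdeg : ∀ v : W, deg H v < lam) {a b : W} (hadj : H.Adj a b) :
    (GG lam h0 h1).Adj (fSing lam H h0 h1 hW hdeg a) (fSing lam H h0 h1 hW hdeg b) := by
  have hne : fSing lam H h0 h1 hW hdeg a ≠ fSing lam H h0 h1 hW hdeg b :=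
    fun hc => hadj.ne (fSing_inj lam H h0 h1 hW hdeg hc)
  have hcomp : H.connectedComponentMk a = H.connectedComponentMk b := comp_eq_of_adj H hadj
  have hcf : (fSing lam H h0 h1 hW hdeg a).1 = (fSing lam H h0 h1 hW hdeg b).1 :=
    congrArg (cpEmb lam H hW) hcomp
  rw [GG, SimpleGraph.fromRel_adj]
  refine ⟨hne, ?_⟩
  rcases lt_trichotomy (sIdx lam H h0 hdeg a) (sIdx lam H h0 hdeg b) with hlt | heq | hgt
  · left
    refine ⟨hcf, fSing_valid lam H h0 h1 hW hdeg a, fSing_valid lam H h0 h1 hW hdeg b, ?_⟩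
    right
    refine ⟨hsing, hlt, ?_⟩
    exact i0_le lam H h0 hdeg (Or.inr ⟨a, hadj, rfl, hlt⟩)
  · left
    exact ⟨hcf, fSing_valid lam H h0 h1 hW hdeg a, fSing_valid lam H h0 h1 hW hdeg b,
      Or.inl heq⟩
  · right
    refine ⟨hcf.symm, fSing_valid lam H h0 h1 hW hdeg b, fSing_valid lam H h0 h1 hW hdeg a, ?_⟩
    right
    refine ⟨hsing, hgt, ?_⟩
    exact i0_le lam H h0 hdeg (Or.inr ⟨b, hadj.symm, rfl, hgt⟩)

end EmbedSing

section EmbedReg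
variable (lam : Cardinal.{0}) {W : Type} (H : SimpleGraph W)

def CompSet (γ : H.ConnectedComponent) : Set W := {w | H.connectedComponentMk w = γ}

lemma CompSet_eq (γ : H.ConnectedComponent) :
    CompSet H γ = Aset H (Quot.out γ) Set.univ := by
  ext w
  constructor
  · intro hw
    have hr : H.Reachable (Quot.out γ) w := by
      apply SimpleGraph.ConnectedComponent.exact
      have hout : H.connectedComponentMk (Quot.out γ) = γ := Quot.out_eq γ
      rw [hout, hw]
    obtain ⟨p⟩ := hr
    exact walk_mem_Aset H _ _ p (Aset_start H _ _ (Set.mem_univ _)) (fun x _ => Set.mem_univ x)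
  · intro hw
    have hr : H.Reachable (Quot.out γ) w := Aset_reachable H _ _ hw
    have : H.connectedComponentMk (Quot.out γ) = H.connectedComponentMk w :=
      SimpleGraph.ConnectedComponent.sound hr
    have hout : H.connectedComponentMk (Quot.out γ) = γ := Quot.out_eq γ
    rw [CompSet, Set.mem_setOf_eq, ← this, hout]

lemma CompSet_card_lt (h0 : ℵ₀ < lam) (hreg : lam ≤ lam.ord.cof)
    (hdeg : ∀ v : W, deg H v < lam) (γ : H.ConnectedComponent) :
    #(CompSet H γ) < lam := by
  rw [CompSet_eq]
  exact Aset_card_lt_reg H h0 hreg hdeg _ _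

noncomputable def muReg (γ : H.ConnectedComponent) : Cardinal :=
  max (⨆ w : ↥(CompSet H γ), deg H w.val) #(CompSet H γ)

lemma muReg_lt (h0 : ℵ₀ < lam) (hreg : lam ≤ lam.ord.cof)
    (hdeg : ∀ v : W, deg H v < lam) (γ : H.ConnectedComponent) : muReg H γ < lam := by
  apply max_lt _ (CompSet_card_lt lam H h0 hreg hdeg γ)
  exact Ordinal.iSup_lt (lt_of_lt_of_le (CompSet_card_lt lam H h0 hreg hdeg γ) hreg)
    (fun w => hdeg w.val)

/-- a stage large enough for the whole component, in the regular case -/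
noncomputable def iReg (h0 : ℵ₀ < lam) (hreg : lam ≤ lam.ord.cof)
    (hdeg : ∀ v : W, deg H v < lam) (γ : H.ConnectedComponent) : II lam :=
  (lfun_unbounded lam h0 (muReg_lt lam H h0 hreg hdeg γ)).choose

lemma iReg_spec (h0 : ℵ₀ < lam) (hreg : lam ≤ lam.ord.cof)
    (hdeg : ∀ v : W, deg H v < lam) (γ : H.ConnectedComponent) :
    muReg H γ ≤ lfun lam (iReg lam H h0 hreg hdeg γ) :=
  (lfun_unbounded lam h0 (muReg_lt lam H h0 hreg hdeg γ)).choose_spec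

noncomputable def eReg (h0 : ℵ₀ < lam) (h1 : lam.IsStrongLimit) (hreg : lam ≤ lam.ord.cof)
    (hdeg : ∀ v : W, deg H v < lam) (γ : H.ConnectedComponent) :
    ↥(CompSet H γ) ↪ ↥(Set.Iio (pos lam h0 h1 (iReg lam H h0 hreg hdeg γ))) :=
  Classical.choice ((Cardinal.le_def _ _).1 (by
    rw [mk_Iio_pos]
    refine le_trans (le_max_right _ _) (le_trans (iReg_spec lam H h0 hreg hdeg γ) ?_)
    exact le_of_lt (Cardinal.cantor _)))

/-- the embedding in the regular case -/
noncomputable def fReg (h0 : ℵ₀ < lam) (h1 : lam.IsStrongLimit) (hreg : lam ≤ lam.ord.cof)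
    (hW : #W ≤ lam) (hdeg : ∀ v : W, deg H v < lam) (w : W) : VV lam :=
  (cpEmb lam H hW (H.connectedComponentMk w),
    iReg lam H h0 hreg hdeg (H.connectedComponentMk w),
    iReg lam H h0 hreg hdeg (H.connectedComponentMk w),
    ((eReg lam H h0 h1 hreg hdeg (H.connectedComponentMk w)) ⟨w, rfl⟩).val)

lemma eReg_key (h0 : ℵ₀ < lam) (h1 : lam.IsStrongLimit) (hreg : lam ≤ lam.ord.cof)
    (hdeg : ∀ v : W, deg H v < lam) {γ₁ γ₂ : H.ConnectedComponent} (hγ : γ₁ = γ₂)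
    (x y : W) (hx : x ∈ CompSet H γ₁) (hy : y ∈ CompSet H γ₂)
    (h : ((eReg lam H h0 h1 hreg hdeg γ₁) ⟨x, hx⟩).val =
      ((eReg lam H h0 h1 hreg hdeg γ₂) ⟨y, hy⟩).val) : x = y := by
  subst hγ
  have h2 := (eReg lam H h0 h1 hreg hdeg γ₁).injective (Subtype.ext h)
  exact congrArg Subtype.val h2

lemma fReg_inj (h0 : ℵ₀ < lam) (h1 : lam.IsStrongLimit) (hreg : lam ≤ lam.ord.cof)
    (hW : #W ≤ lam) (hdeg : ∀ v : W, deg H v < lam) :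
    Function.Injective (fReg lam H h0 h1 hreg hW hdeg) := by
  intro a b h
  rw [fReg, fReg, Prod.mk.injEq, Prod.mk.injEq, Prod.mk.injEq] at h
  obtain ⟨h1', _, _, h4⟩ := h
  have hcomp : H.connectedComponentMk a = H.connectedComponentMk b :=
    (cpEmb lam H hW).injective h1'
  exact eReg_key lam H h0 h1 hreg hdeg hcomp a b _ _ h4

lemma fReg_adj (h0 : ℵ₀ < lam) (h1 : lam.IsStrongLimit) (hreg : lam ≤ lam.ord.cof)
    (hW : #W ≤ lam) (hdeg : ∀ v : W, deg H v < lam) {a b : W} (hadj : H.Adj a b) :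
    (GG lam h0 h1).Adj (fReg lam H h0 h1 hreg hW hdeg a) (fReg lam H h0 h1 hreg hW hdeg b) := by
  have hne : fReg lam H h0 h1 hreg hW hdeg a ≠ fReg lam H h0 h1 hreg hW hdeg b :=
    fun hc => hadj.ne (fReg_inj lam H h0 h1 hreg hW hdeg hc)
  have hcomp : H.connectedComponentMk a = H.connectedComponentMk b := comp_eq_of_adj H hadj
  rw [GG, SimpleGraph.fromRel_adj]
  refine ⟨hne, Or.inl ⟨congrArg (cpEmb lam H hW) hcomp, ?_, ?_, Or.inl ?_⟩⟩
  · exact ⟨le_rfl, ((eReg lam H h0 h1 hreg hdeg (H.connectedComponentMk a)) ⟨a, rfl⟩).prop⟩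
  · exact ⟨le_rfl, ((eReg lam H h0 h1 hreg hdeg (H.connectedComponentMk b)) ⟨b, rfl⟩).prop⟩
  · exact congrArg (fun γ => iReg lam H h0 hreg hdeg γ) hcomp

end EmbedReg

end Stmt9

open Stmt9 in
/-- Shelah: if `λ > ℵ₀` is a strong limit cardinal, then among the graphs with at
most `λ` vertices in which every vertex has valence `< λ`, there is a universal one
(every such graph embeds into it as a subgraph). -/
theorem stmt_9 (lam : Cardinal.{0}) (h0 : ℵ₀ < lam) (h1 : lam.IsStrongLimit) :
    ∃ (V : Type) (G : SimpleGraph V), #V ≤ lam ∧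
      (∀ v, #(G.neighborSet v) < lam) ∧
      ∀ (W : Type) (H : SimpleGraph W), #W ≤ lam →
        (∀ w, #(H.neighborSet w) < lam) →
        ∃ f : W → V, Function.Injective f ∧
          ∀ a b, H.Adj a b → G.Adj (f a) (f b) := by
  refine ⟨VV lam, GG lam h0 h1, mkVV_le lam h0, fun v => nbr_card_lt lam h0 h1 v, ?_⟩
  intro W H hW hdeg
  rcases lt_or_ge lam.ord.cof lam with hsing | hreg
  · exact ⟨fSing lam H h0 h1 hW hdeg, fSing_inj lam H h0 h1 hW hdeg,
      fun a b hab => fSing_adj lam H h0 h1 hsing hW hdeg hab⟩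
  · exact ⟨fReg lam H h0 h1 hreg hW hdeg, fReg_inj lam H h0 h1 hreg hW hdeg,
      fun a b hab => fReg_adj lam H h0 h1 hreg hW hdeg hab⟩
end

section
/- If 2^{ℵ_α} ≤ ℵ_{α+n}, then there is a Jónsson algebra on ℵ_{α+n}; that is, there is an algebra with countably many operations on a set of cardinality ℵ_{α+n} with no proper subalgebra of the same cardinality. -/
open Cardinal Set Order

namespace Stmt11Aux

lemma mk_Iio_eq {β : Type} [LinearOrder β] [WellFoundedLT β] (x : β) :
    #(Set.Iio x) = (Ordinal.typein ((· < ·) : β → β → Prop) x).card := by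
  show #(Set.Iio x) = #{ y // y < x }
  exact mk_congr (Equiv.subtypeEquivRight fun y => Set.mem_Iio)

lemma mk_Iio_toType_lt {κ : Cardinal.{0}} (w : κ.ord.ToType) : #(Set.Iio w) < κ := by
  rw [mk_Iio_eq]
  exact Cardinal.lt_ord.mp (Ordinal.typein_lt_self w)

lemma mk_le_of_small_segments {β : Type} [LinearOrder β] [WellFoundedLT β]
    {θ : Cardinal} (h : ∀ x : β, #(Set.Iio x) < θ) : #β ≤ θ := by
  have htype : Ordinal.type ((· < ·) : β → β → Prop) ≤ θ.ord := by
    by_contra hlt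
    push_neg at hlt
    obtain ⟨x, hx⟩ := Ordinal.typein_surj ((· < ·) : β → β → Prop) hlt
    have := h x
    rw [mk_Iio_eq, hx, Cardinal.card_ord] at this
    exact lt_irrefl _ this
  calc #β = (Ordinal.type ((· < ·) : β → β → Prop)).card := (Ordinal.card_type _).symm
    _ ≤ θ.ord.card := Ordinal.card_le_card htype
    _ = θ := Cardinal.card_ord θ

lemma mk_Iio_subtype_le {A : Type} [LinearOrder A] (T : Set A) (p : T) :
    #(Set.Iio p) ≤ #(Set.Iio p.1) := by
  have hinj : Function.Injective
      (fun q : Set.Iio p => (⟨q.1.1, Subtype.coe_lt_coe.mpr q.2⟩ : Set.Iio p.1)) := by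
    intro a b hab
    apply Subtype.ext
    apply Subtype.ext
    have := congrArg Subtype.val hab
    simpa using this
  exact Cardinal.mk_le_of_injective hinj

lemma exists_pick' {β : Type} [LinearOrder β] [WellFoundedLT β]
    {θ : Cardinal} (T : Set β) (h : θ < #T) :
    ∃ x ∈ T, θ ≤ #(T ∩ Set.Iio x : Set β) := by
  by_contra hc
  push_neg at hc
  have : #T ≤ θ := by
    apply mk_le_of_small_segments
    intro p
    have h1 : #(Set.Iio p) ≤ #(T ∩ Set.Iio p.1 : Set β) := by
      have hinj : Function.Injective
          (fun q : Set.Iio p => (⟨q.1.1, q.1.2, q.2⟩ : (T ∩ Set.Iio p.1 : Set β))) := by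
        intro a b hab
        apply Subtype.ext
        apply Subtype.ext
        have := congrArg Subtype.val hab
        simpa using this
      exact Cardinal.mk_le_of_injective hinj
    exact h1.trans_lt (hc p.1 p.2)
  exact absurd h this.not_gt

lemma exists_pt {A : Type} [LinearOrder A] [WellFoundedLT A] [Nonempty A] {lam : Cardinal.{0}}
    (hA : #A = lam) :
    ∃ pt : Cardinal → A, ∀ c, c < lam →
      #(Set.Iio (pt c)) = c ∧ ∀ y : A, c ≤ #(Set.Iio y) → pt c ≤ y := by
  classical
  have hex : ∀ c : Cardinal, c < lam → { x : A | c ≤ #(Set.Iio x) }.Nonempty := by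
    intro c hc
    by_contra hcon
    rw [Set.not_nonempty_iff_eq_empty] at hcon
    have hall : ∀ x : A, #(Set.Iio x) < c := by
      intro x
      by_contra hx
      have hmem : x ∈ { x : A | c ≤ #(Set.Iio x) } := not_lt.mp hx
      rw [hcon] at hmem
      exact hmem
    have hle := mk_le_of_small_segments hall
    rw [hA] at hle
    exact absurd hc (hle.trans_lt hc).false.elim
  refine ⟨fun c => if hc : c < lam then
      (IsWellFounded.wf (α := A) (r := (· < ·))).min _ (hex c hc) else Classical.arbitrary A, ?_⟩
  intro c hc
  simp only [dif_pos hc]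
  have hmem := (IsWellFounded.wf (α := A) (r := (· < ·))).min_mem _ (hex c hc)
  have hmin : ∀ y : A, c ≤ #(Set.Iio y) →
      (IsWellFounded.wf (α := A) (r := (· < ·))).min _ (hex c hc) ≤ y := by
    intro y hy
    exact not_lt.mp ((IsWellFounded.wf (α := A) (r := (· < ·))).not_lt_min _ hy)
  refine ⟨le_antisymm ?_ hmem, hmin⟩
  apply mk_le_of_small_segments
  intro p
  refine (mk_Iio_subtype_le _ p).trans_lt ?_
  by_contra hge
  exact absurd p.2 (not_lt.mpr (hmin p.1 (not_lt.mp hge)))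

lemma exists_selector {D K : Type} {κ : Cardinal} (hD : #D ≤ κ)
    (X : D → Set K) (hX : ∀ d, κ ≤ #(X d)) :
    ∃ F : D → K, (∀ d, F d ∈ X d) ∧ Function.Injective F := by
  have hW : #(κ.ord.ToType) = κ := by rw [Cardinal.mk_toType, Cardinal.card_ord]
  obtain ⟨φ⟩ := (Cardinal.le_def D κ.ord.ToType).mp (by rw [hW]; exact hD)
  set r : D → D → Prop := fun a b => φ a < φ b with hr
  have hwf : WellFounded r := InvImage.wf φ IsWellFounded.wf
  have hsmall : ∀ d : D, #{d' // r d' d} < κ := by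
    intro d
    have hinj : Function.Injective (fun p : {d' // r d' d} => (⟨φ p.1, p.2⟩ : Set.Iio (φ d))) := by
      intro a b hab
      apply Subtype.ext
      apply φ.injective
      have := congrArg Subtype.val hab
      simpa using this
    exact (Cardinal.mk_le_of_injective hinj).trans_lt (mk_Iio_toType_lt (φ d))
  have hne : ∀ (d : D) (ih : ∀ d', r d' d → K),
      (X d \ Set.range (fun p : {d' // r d' d} => ih p.1 p.2)).Nonempty := by
    intro d ih
    rw [Set.diff_nonempty]
    intro hsub
    have : κ ≤ #{d' // r d' d} :=
      (hX d).trans ((Cardinal.mk_le_mk_of_subset hsub).trans Cardinal.mk_range_le)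
    exact absurd this (hsmall d).not_ge
  set F : D → K := hwf.fix (fun d ih => (hne d ih).some) with hF
  have hfix : ∀ d, F d = (hne d (fun d' _ => F d')).some := fun d =>
    hwf.fix_eq (fun d ih => (hne d ih).some) d
  have key : ∀ d, F d ∈ X d \ Set.range (fun p : {d' // r d' d} => F p.1) := by
    intro d
    rw [hfix d]
    exact Set.Nonempty.some_mem _
  refine ⟨F, fun d => (key d).1, ?_⟩
  intro a b hab
  rcases lt_trichotomy (φ a) (φ b) with hlt | heq | hgt
  · exact absurd ⟨⟨a, hlt⟩, show F a = F b from hab⟩ (key b).2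
  · exact φ.injective heq
  · exact absurd ⟨⟨b, hgt⟩, show F b = F a from hab.symm⟩ (key a).2

lemma aleph0_le_iter {κ : Cardinal} (hκ : ℵ₀ ≤ κ) (j : ℕ) : ℵ₀ ≤ Order.succ^[j] κ := by
  induction j with
  | zero => exact hκ
  | succ j IH =>
    rw [Function.iterate_succ_apply']
    exact IH.trans (Order.le_succ _)

lemma main_L (κ : Cardinal.{0}) (hκ : ℵ₀ ≤ κ) :
    ∀ (j : ℕ) (D : Type), #D ≤ Order.succ^[j] κ →
    ∀ (K : Type) (X : D → Set K), (∀ d, κ ≤ #(X d)) → ∀ (γ : D → K),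
    ∃ c : K → (∀ i : Fin j, ((Order.succ^[i.val+1] κ).ord.ToType)) → K,
      ∀ (d : D) (L : ∀ i : Fin j, Set ((Order.succ^[i.val+1] κ).ord.ToType)),
        (∀ i, Order.succ^[i.val+1] κ ≤ #(L i)) →
        ∃ a ∈ X d, ∃ b, (∀ i, b i ∈ L i) ∧ c a b = γ d := by
  classical
  intro j
  induction j with
  | zero =>
    intro D hD K X hX γ
    obtain ⟨F, hmem, hinj⟩ := exists_selector hD X hX
    refine ⟨fun a _ => if h : a ∈ Set.range F then γ h.choose else a, ?_⟩
    intro d L _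
    refine ⟨F d, hmem d, fun i => i.elim0, fun i => i.elim0, ?_⟩
    have hmem' : F d ∈ Set.range F := ⟨d, rfl⟩
    show (if h : F d ∈ Set.range F then γ h.choose else F d) = γ d
    rw [dif_pos hmem']
    congr 1
    exact hinj hmem'.choose_spec
  | succ j IH =>
    intro D hD K X hX γ
    set θj1 : Cardinal := Order.succ^[j+1] κ with hθj1
    have hsucc : θj1 = Order.succ (Order.succ^[j] κ) := Function.iterate_succ_apply' _ _ _
    have hW : #(θj1.ord.ToType) = θj1 := by rw [Cardinal.mk_toType, Cardinal.card_ord]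
    obtain ⟨φ⟩ := (Cardinal.le_def D θj1.ord.ToType).mp (by rw [hW]; exact hD)
    have hsub : ∀ x : θj1.ord.ToType, #{d : D // φ d < x} ≤ Order.succ^[j] κ := by
      intro x
      have hinj : Function.Injective
          (fun p : {d : D // φ d < x} => (⟨φ p.1, p.2⟩ : Set.Iio x)) := by
        intro a b hab
        apply Subtype.ext
        apply φ.injective
        have := congrArg Subtype.val hab
        simpa using this
      have h2 := (Cardinal.mk_le_of_injective hinj).trans_lt (mk_Iio_toType_lt x)
      exact Order.lt_succ_iff.mp (h2.trans_le hsucc.le)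
    choose cB hcB using fun x : θj1.ord.ToType =>
      IH {d : D // φ d < x} (hsub x) K (fun p => X p.1) (fun p => hX p.1) (fun p => γ p.1)
    refine ⟨fun a b => cB (b (Fin.last j)) a (fun i : Fin j => b i.castSucc), ?_⟩
    intro d L hL
    have hIic : #(Set.Iic (φ d)) < θj1 := by
      have h1 : #(Set.Iic (φ d)) ≤ #(Set.Iio (φ d)) + 1 := by
        rw [← Set.Iio_union_right]
        exact (Cardinal.mk_union_le _ _).trans (by rw [Cardinal.mk_singleton])
      have h2 : #(Set.Iio (φ d)) ≤ Order.succ^[j] κ := by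
        have := mk_Iio_toType_lt (φ d)
        exact Order.lt_succ_iff.mp (this.trans_le hsucc.le)
      have h3 : (Order.succ^[j] κ) + 1 = Order.succ^[j] κ :=
        Cardinal.add_one_eq (aleph0_le_iter hκ j)
      calc #(Set.Iic (φ d)) ≤ Order.succ^[j] κ + 1 := h1.trans (by gcongr)
        _ = Order.succ^[j] κ := h3
        _ < θj1 := hsucc ▸ Order.lt_succ _
    have hnotsub : ¬ (L (Fin.last j) ⊆ Set.Iic (φ d)) := by
      intro hsubn
      exact absurd ((hL (Fin.last j)).trans (Cardinal.mk_le_mk_of_subset hsubn)) hIic.not_ge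
    obtain ⟨x, hxL, hxn⟩ := Set.not_subset.mp hnotsub
    have hdx : φ d < x := not_le.mp (fun hle => hxn (Set.mem_Iic.mpr hle))
    obtain ⟨a, ha, b', hb', heq⟩ := hcB x ⟨d, hdx⟩ (fun i : Fin j => L i.castSucc)
      (fun i => hL i.castSucc)
    refine ⟨a, ha, Fin.snoc b' x, ?_, ?_⟩
    · intro i
      induction i using Fin.lastCases with
      | last => rw [Fin.snoc_last]; exact hxL
      | cast i => rw [Fin.snoc_castSucc]; exact hb' i
    · simp only [Fin.snoc_last, Fin.snoc_castSucc]
      exact heq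

-- appended to full.lean inside namespace
lemma jonsson_core (κ : Cardinal.{0}) (hκ : ℵ₀ ≤ κ) (n : ℕ) (hn : 0 < n)
    (h : 2 ^ κ ≤ Order.succ^[n] κ)
    (A : Type) [LinearOrder A] [WellFoundedLT A] [Nonempty A]
    (hA : #A = Order.succ^[n] κ)
    (hIio_lt : ∀ x : A, #(Set.Iio x) < Order.succ^[n] κ) :
    ∃ (ops : ℕ → Σ k : ℕ, (Fin k → A) → A),
      ∀ S : Set A,
        (∀ m, ∀ v : Fin (ops m).1 → A, (∀ i, v i ∈ S) → (ops m).2 v ∈ S) →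
        #S = Order.succ^[n] κ → S = Set.univ := by
  classical
  set θ : ℕ → Cardinal := fun i => Order.succ^[i] κ with hθdef
  have hθ0 : θ 0 = κ := rfl
  have hθsucc : ∀ i, θ (i+1) = Order.succ (θ i) := fun i => Function.iterate_succ_apply' _ _ _
  have hθℵ0 : ∀ i, ℵ₀ ≤ θ i := fun i => aleph0_le_iter hκ i
  have hθlt : ∀ i, θ i < θ (i+1) := fun i => by rw [hθsucc]; exact Order.lt_succ _
  have hθmono : ∀ {i j : ℕ}, i < j → θ i < θ j := by
    intro i j hij
    induction j with
    | zero => exact absurd hij (Nat.not_lt_zero i)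
    | succ j IH =>
      rcases Nat.lt_succ_iff_lt_or_eq.mp hij with h' | h'
      · exact (IH h').trans (hθlt j)
      · rw [h']; exact hθlt j
  -- pt
  obtain ⟨pt, hpt⟩ := exists_pt (A := A) hA
  have hpteq : ∀ c, c < θ n → #(Set.Iio (pt c)) = c := fun c hc => (hpt c hc).1
  have hptle : ∀ c, c < θ n → ∀ y : A, c ≤ #(Set.Iio y) → pt c ≤ y := fun c hc => (hpt c hc).2
  -- collapse maps
  set ρ : A → A := fun x => pt #(Set.Iio x) with hρdef
  have hρcard : ∀ x : A, #(Set.Iio (ρ x)) = #(Set.Iio x) := fun x => hpteq _ (hIio_lt x)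
  have he : ∀ x : A, Nonempty ((Set.Iio (ρ x)) ≃ (Set.Iio x)) := fun x => Cardinal.eq.mp (hρcard x)
  set e : ∀ x : A, ((Set.Iio (ρ x) : Set A)) ≃ (Set.Iio x) := fun x => (he x).some with hedef
  set g : A → A → A := fun x y => if hm : y ∈ Set.Iio (ρ x) then (e x ⟨y, hm⟩).1 else y with hgdef
  set g' : A → A → A := fun x y => if hm : y ∈ Set.Iio x then ((e x).symm ⟨y, hm⟩).1 else y
    with hg'def
  have hgeq : ∀ (x z : A) (hz : z ∈ Set.Iio (ρ x)), g x z = (e x ⟨z, hz⟩).1 := by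
    intro x z hz
    simp only [hgdef, dif_pos hz]
  have hg'eq : ∀ (x y : A) (hy : y ∈ Set.Iio x), g' x y = ((e x).symm ⟨y, hy⟩).1 := by
    intro x y hy
    simp only [hg'def, dif_pos hy]
  -- the sets U
  set U : ℕ → Set A := fun i => if i < n then Set.Iio (pt (θ i)) else Set.univ with hUdef
  have hUeq : ∀ i, i < n → U i = Set.Iio (pt (θ i)) := by
    intro i hi
    simp only [hUdef, if_pos hi]
  have hUn : U n = Set.univ := by
    simp only [hUdef, if_neg (lt_irrefl n)]
  have hUcard : ∀ i, i ≤ n → #(U i) = θ i := by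
    intro i hi
    rcases lt_or_eq_of_le hi with h' | h'
    · rw [hUeq i h']
      exact hpteq _ (hθmono h')
    · rw [h', hUn, Cardinal.mk_univ, hA]
  -- bound on initial segments of members of U (j+1)
  have hIioU : ∀ j : ℕ, j + 1 ≤ n → ∀ x : A, x ∈ U (j+1) → #(Set.Iio x) ≤ θ j := by
    intro j hj x hx
    have h3 : #(Set.Iio x) < θ (j+1) := by
      rcases lt_or_eq_of_le hj with h' | h'
      · rw [hUeq _ h'] at hx
        by_contra hge
        exact absurd (hptle _ (hθmono h') x (not_lt.mp hge)) (not_le.mpr hx)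
      · rw [h']
        exact hIio_lt x
    rw [hθsucc j] at h3
    exact Order.lt_succ_iff.mp h3
  -- the demand data for the main operation
  set B0 : Set A := Set.Iio (pt (θ 0)) with hB0def
  have hB0card : #B0 = κ := hpteq κ (hθmono hn)
  have hDcard : #(Set B0 × B0) ≤ θ n := by
    have h1 : #(Set B0 × B0) = 2 ^ κ * κ := by
      rw [Cardinal.mk_prod, Cardinal.lift_id, Cardinal.lift_id, Cardinal.mk_set, hB0card]
    rw [h1]
    calc 2 ^ κ * κ ≤ 2 ^ κ * 2 ^ κ := by
            exact mul_le_mul_right (Cardinal.cantor κ).le _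
      _ = 2 ^ (κ + κ) := (Cardinal.power_add 2 κ κ).symm
      _ = 2 ^ κ := by rw [Cardinal.add_eq_self hκ]
      _ ≤ θ n := h
  set Xf : Set B0 × B0 → Set A := fun d =>
    if #(Subtype.val '' d.1 : Set A) = κ then (Subtype.val '' d.1 : Set A) else B0 with hXfdef
  have hXf : ∀ d, κ ≤ #(Xf d) := by
    intro d
    simp only [hXfdef]
    split_ifs with h'
    · exact h'.ge
    · exact hB0card.ge
  obtain ⟨c, hc⟩ := main_L κ hκ n (Set B0 × B0) hDcard A Xf hXf (fun d => d.2.1)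
  -- bridging equivalences
  have hq : ∀ i : Fin n, Nonempty ((U (i.val+1)) ≃ (Order.succ^[i.val+1] κ).ord.ToType) := by
    intro i
    apply Cardinal.eq.mp
    rw [hUcard (i.val+1) (Nat.succ_le_of_lt i.2), Cardinal.mk_toType, Cardinal.card_ord]
  set q : ∀ i : Fin n, ((U (i.val+1) : Set A)) ≃ (Order.succ^[i.val+1] κ).ord.ToType :=
    fun i => (hq i).some with hqdef
  set op : A → (Fin n → A) → A := fun a v =>
    if hv : ∀ i : Fin n, v i ∈ U (i.val+1) then c a (fun i => q i ⟨v i, hv i⟩) else a with hopdef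
  -- the algebra
  refine ⟨(fun m => match m with
    | 0 => ⟨2, fun v => g (v 0) (v 1)⟩
    | 1 => ⟨2, fun v => g' (v 0) (v 1)⟩
    | 2 => ⟨n+1, fun v => op (v 0) (fun i => v i.succ)⟩
    | (_+3) => ⟨1, fun v => v 0⟩), ?_⟩
  intro S hclosed hScard
  -- closure facts
  have hgS : ∀ x ∈ S, ∀ y ∈ S, g x y ∈ S := by
    intro x hx y hy
    have := hclosed 0 ![x, y] (by
      intro i
      fin_cases i <;> simpa)
    simpa using this
  have hg'S : ∀ x ∈ S, ∀ y ∈ S, g' x y ∈ S := by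
    intro x hx y hy
    have := hclosed 1 ![x, y] (by
      intro i
      fin_cases i <;> simpa)
    simpa using this
  have hopS : ∀ x ∈ S, ∀ v : Fin n → A, (∀ i, v i ∈ S) → op x v ∈ S := by
    intro x hx v hv
    have := hclosed 2 (Fin.cons x v) (by
      intro i
      refine Fin.cases ?_ ?_ i
      · simpa using hx
      · intro j
        simpa using hv j)
    simpa using this
  -- downward transfer
  have trans_down : ∀ x ∈ S, #(S ∩ Set.Iio x : Set A) ≤ #(S ∩ Set.Iio (ρ x) : Set A) := by
    intro x hx
    have hmap : ∀ p : (S ∩ Set.Iio x : Set A), g' x p.1 ∈ (S ∩ Set.Iio (ρ x) : Set A) := by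
      intro p
      refine ⟨hg'S x hx p.1 p.2.1, ?_⟩
      rw [hg'eq x p.1 p.2.2]
      exact ((e x).symm ⟨p.1, p.2.2⟩).2
    have hinj : Function.Injective
        (fun p : (S ∩ Set.Iio x : Set A) => (⟨g' x p.1, hmap p⟩ : (S ∩ Set.Iio (ρ x) : Set A))) := by
      intro a b hab
      have h2 := congrArg Subtype.val hab
      simp only at h2
      rw [hg'eq x a.1 a.2.2, hg'eq x b.1 b.2.2] at h2
      have h3 := (e x).symm.injective (Subtype.ext h2)
      have h4 : a.1 = b.1 := by
        have := congrArg (fun z : (Set.Iio x : Set A) => z.1) h3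
        simpa using this
      exact Subtype.ext h4
    exact Cardinal.mk_le_of_injective hinj
  -- upward transfer
  have trans_up : ∀ x ∈ S, Set.Iio (ρ x) ⊆ S → Set.Iio x ⊆ S := by
    intro x hx hsub y hy
    have hzS : ((e x).symm ⟨y, hy⟩).1 ∈ S := hsub ((e x).symm ⟨y, hy⟩).2
    have h1 : g x ((e x).symm ⟨y, hy⟩).1 = (e x ((e x).symm ⟨y, hy⟩)).1 :=
      hgeq x ((e x).symm ⟨y, hy⟩).1 ((e x).symm ⟨y, hy⟩).2
    have h3 : e x ((e x).symm ⟨y, hy⟩) = ⟨y, hy⟩ := (e x).apply_symm_apply ⟨y, hy⟩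
    have h4 : g x ((e x).symm ⟨y, hy⟩).1 = y := by rw [h1, h3]
    rw [← h4]
    exact hgS x hx _ hzS
  -- DOWN: the trace of S on U j is large
  have down : ∀ k j, j + k = n → θ j ≤ #(S ∩ U j : Set A) := by
    intro k
    induction k with
    | zero =>
      intro j hj
      have hjn : j = n := by omega
      subst hjn
      rw [hUn, Set.inter_univ, hScard]
    | succ k IH =>
      intro j hj
      have hIH := IH (j+1) (by omega)
      have hjn : j < n := by omega
      obtain ⟨x, hxmem, hxcard⟩ :=
        exists_pick' (S ∩ U (j+1) : Set A) ((hθlt j).trans_le hIH)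
      have hxS : x ∈ S := hxmem.1
      have hxIio : #(Set.Iio x) ≤ θ j := hIioU j (by omega) x hxmem.2
      have hsub1 : ((S ∩ U (j+1)) ∩ Set.Iio x : Set A) ⊆ S ∩ Set.Iio x :=
        fun z hz => ⟨hz.1.1, hz.2⟩
      have step1 : θ j ≤ #(S ∩ Set.Iio x : Set A) :=
        hxcard.trans (Cardinal.mk_le_mk_of_subset hsub1)
      have step2 := step1.trans (trans_down x hxS)
      have hρle : ρ x ≤ pt (θ j) := by
        show pt #(Set.Iio x) ≤ pt (θ j)
        apply hptle _ (hIio_lt x)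
        rw [hpteq (θ j) (hθmono hjn)]
        exact hxIio
      have hsub2 : (S ∩ Set.Iio (ρ x) : Set A) ⊆ S ∩ U j := by
        intro z hz
        refine ⟨hz.1, ?_⟩
        rw [hUeq j hjn]
        exact lt_of_lt_of_le hz.2 hρle
      exact step2.trans (Cardinal.mk_le_mk_of_subset hsub2)
  -- BASE: U 0 ⊆ S via the main operation
  have base : Set.Iio (pt (θ 0)) ⊆ S := by
    intro y hy
    have hS0 : #(S ∩ B0 : Set A) = κ := by
      apply le_antisymm
      · exact (Cardinal.mk_le_mk_of_subset Set.inter_subset_right).trans hB0card.le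
      · have hd0 := down n 0 (by omega)
        rw [hUeq 0 hn] at hd0
        exact hd0
    have hval : (Subtype.val '' {p : B0 | p.1 ∈ S} : Set A) = S ∩ B0 := by
      ext z
      constructor
      · rintro ⟨p, hp, rfl⟩
        exact ⟨hp, p.2⟩
      · rintro ⟨hzS, hzB⟩
        exact ⟨⟨z, hzB⟩, hzS, rfl⟩
    have hd : Xf ({p : B0 | p.1 ∈ S}, ⟨y, hy⟩) = S ∩ B0 := by
      simp only [hXfdef]
      rw [hval, if_pos hS0]
    have hsep : ∀ i : Fin n, #({p : (U (i.val+1) : Set A) | p.1 ∈ S}) = #(S ∩ U (i.val+1) : Set A) := by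
      intro i
      apply Cardinal.mk_congr
      exact {
        toFun := fun p => ⟨p.1.1, p.2, p.1.2⟩
        invFun := fun z => ⟨⟨z.1, z.2.2⟩, z.2.1⟩
        left_inv := fun p => rfl
        right_inv := fun z => rfl }
    have hLcard : ∀ i : Fin n,
        Order.succ^[i.val+1] κ ≤ #((q i) '' {p : (U (i.val+1) : Set A) | p.1 ∈ S}) := by
      intro i
      rw [Cardinal.mk_image_eq (q i).injective, hsep i]
      exact down (n - (i.val+1)) (i.val+1) (by omega)
    obtain ⟨a, haX, b, hbL, heq⟩ :=
      hc ({p : B0 | p.1 ∈ S}, ⟨y, hy⟩) (fun i => (q i) '' {p : (U (i.val+1) : Set A) | p.1 ∈ S})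
        hLcard
    rw [hd] at haX
    have hv : ∀ i : Fin n, ((q i).symm (b i)).1 ∈ S := by
      intro i
      obtain ⟨p, hp, hpe⟩ := hbL i
      rw [← hpe, Equiv.symm_apply_apply]
      exact hp
    have hvU : ∀ i : Fin n, ((q i).symm (b i)).1 ∈ U (i.val+1) := fun i => ((q i).symm (b i)).2
    have hopv : op a (fun i => ((q i).symm (b i)).1) = c a b := by
      simp only [hopdef, dif_pos hvU]
      congr 1
      funext i
      have h5 : (⟨((q i).symm (b i)).1, hvU i⟩ : (U (i.val+1) : Set A)) = (q i).symm (b i) := rfl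
      rw [h5, Equiv.apply_symm_apply]
    have hfin : op a (fun i => ((q i).symm (b i)).1) ∈ S := hopS a haX.1 _ hv
    rw [hopv, heq] at hfin
    exact hfin
  -- UP
  have up : ∀ j, j ≤ n → U j ⊆ S := by
    intro j
    induction j with
    | zero =>
      intro _
      rw [hUeq 0 hn]
      exact base
    | succ j IH =>
      intro hj1
      have hIHj := IH (by omega)
      intro y hy
      have hdown := down (n - (j+1)) (j+1) (by omega)
      have hIicy : #(Set.Iic y) ≤ θ j := by
        have h4 : #(Set.Iio y) ≤ θ j := hIioU j hj1 y hy
        calc #(Set.Iic y) ≤ #(Set.Iio y) + 1 := by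
              rw [← Set.Iio_union_right]
              exact (Cardinal.mk_union_le _ _).trans (by rw [Cardinal.mk_singleton])
          _ ≤ θ j + 1 := by gcongr
          _ = θ j := Cardinal.add_one_eq (hθℵ0 j)
      have hbad : #((Set.Iic y ∪ Set.Iio (pt (θ j))) : Set A) < θ (j+1) := by
        have h6 : #(Set.Iio (pt (θ j))) = θ j := hpteq _ (hθmono (by omega))
        calc #((Set.Iic y ∪ Set.Iio (pt (θ j))) : Set A)
            ≤ #(Set.Iic y) + #(Set.Iio (pt (θ j))) := Cardinal.mk_union_le _ _
          _ ≤ θ j + θ j := by rw [h6]; gcongr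
          _ = θ j := Cardinal.add_eq_self (hθℵ0 j)
          _ < θ (j+1) := hθlt j
      have hnotsub : ¬ ((S ∩ U (j+1) : Set A) ⊆ (Set.Iic y ∪ Set.Iio (pt (θ j)))) := by
        intro hsubn
        exact absurd (hdown.trans (Cardinal.mk_le_mk_of_subset hsubn)) (not_le.mpr hbad)
      obtain ⟨x, hxmem, hxbad⟩ := Set.not_subset.mp hnotsub
      have hx1 : y < x := not_le.mp (fun hle => hxbad (Or.inl (Set.mem_Iic.mpr hle)))
      have hx2 : pt (θ j) ≤ x := not_lt.mp (fun hlt => hxbad (Or.inr (Set.mem_Iio.mpr hlt)))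
      have hxle : #(Set.Iio x) ≤ θ j := hIioU j hj1 x hxmem.2
      have hxge : θ j ≤ #(Set.Iio x) := by
        rw [← hpteq (θ j) (hθmono (by omega))]
        exact Cardinal.mk_le_mk_of_subset (fun z hz => lt_of_lt_of_le hz hx2)
      have hxcard2 : #(Set.Iio x) = θ j := le_antisymm hxle hxge
      have hρx : ρ x = pt (θ j) := by
        show pt #(Set.Iio x) = pt (θ j)
        rw [hxcard2]
      have hfinal : Set.Iio x ⊆ S := by
        apply trans_up x hxmem.1
        rw [hρx, ← hUeq j (by omega)]
        exact hIHj
      exact hfinal hx1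
  have hfin := up n le_rfl
  rw [hUn] at hfin
  exact Set.eq_univ_of_univ_subset hfin

end Stmt11Aux

open Cardinal

/-- Shelah: if `2^{ℵ_α} ≤ ℵ_{α+n}`, then there is a Jónsson algebra on `ℵ_{α+n}`:
an algebra with countably many finitary operations on a set of cardinality
`ℵ_{α+n}` having no proper subalgebra of the same cardinality. -/
theorem stmt_11 (α : Ordinal) (n : ℕ)
    (h : 2 ^ Cardinal.aleph α ≤ Cardinal.aleph (α + n)) :
    ∃ (A : Type) (ops : ℕ → Σ k : ℕ, (Fin k → A) → A),
      #A = Cardinal.aleph (α + n) ∧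
      ∀ S : Set A,
        (∀ m, ∀ v : Fin (ops m).1 → A, (∀ i, v i ∈ S) → (ops m).2 v ∈ S) →
        #S = Cardinal.aleph (α + n) → S = Set.univ := by
  classical
  have hκ : ℵ₀ ≤ Cardinal.aleph α := Cardinal.aleph0_le_aleph α
  have hfinal : ∀ m : ℕ, Order.succ^[m] (Cardinal.aleph α) = Cardinal.aleph (α + m) := by
    intro m
    induction m with
    | zero => simp
    | succ m IH =>
      rw [Function.iterate_succ_apply', IH, Nat.cast_succ, ← add_assoc, Ordinal.add_one_eq_succ,
        Cardinal.aleph_succ]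
  rcases Nat.eq_zero_or_pos n with hn0 | hn
  · subst hn0
    rw [← hfinal 0] at h
    exact absurd h (Cardinal.cantor _).not_ge
  · rw [← hfinal n] at h ⊢
    haveI : Nonempty ((Order.succ^[n] (Cardinal.aleph α)).ord.ToType) := by
      rw [← Cardinal.mk_ne_zero_iff, Cardinal.mk_toType, Cardinal.card_ord]
      exact (aleph0_pos.trans_le (Stmt11Aux.aleph0_le_iter hκ n)).ne'
    obtain ⟨ops, hops⟩ := Stmt11Aux.jonsson_core (Cardinal.aleph α) hκ n hn h
      ((Order.succ^[n] (Cardinal.aleph α)).ord.ToType)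
      (by rw [Cardinal.mk_toType, Cardinal.card_ord])
      (fun x => Stmt11Aux.mk_Iio_toType_lt x)
    exact ⟨_, ops, by rw [Cardinal.mk_toType, Cardinal.card_ord], hops⟩
end

section
/- If λ is a caliber of the topological space X and cf(λ) > ℵ₀, then λ is a caliber of X^I for any index set I. -/
open Cardinal

/-- `λ` is a caliber of the topological space `X`: every family of `λ` nonempty open
sets has a subfamily of cardinality `λ` with nonempty intersection. -/
def Caliber (lam : Cardinal) (X : Type) [TopologicalSpace X] : Prop :=
  ∀ (ι : Type) (U : ι → Set X), #ι = lam →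
    (∀ i, IsOpen (U i) ∧ (U i).Nonempty) →
    ∃ J : Set ι, #J = lam ∧ (⋂ i ∈ J, U i).Nonempty

section Helpers

/-- Sum of fewer than `cof` many cardinals below `c` is below `c`. -/
lemma sum_lt_of_lt_cof {c : Cardinal} (hc : ℵ₀ < c.ord.cof) {ι : Type}
    (hι : #ι < c.ord.cof) {f : ι → Cardinal} (hf : ∀ i, f i < c) :
    Cardinal.sum f < c := by
  have hcle : c.ord.cof ≤ c := Ordinal.cof_ord_le c
  have hsup : iSup f < c := Ordinal.iSup_lt hι hf
  calc Cardinal.sum f ≤ #ι * iSup f := Cardinal.sum_le_mk_mul_iSup f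
    _ < c := Cardinal.mul_lt_of_lt (hc.le.trans hcle) (hι.trans_le hcle) hsup

lemma caliber_of_homeomorph {lam : Cardinal} {X Y : Type} [TopologicalSpace X]
    [TopologicalSpace Y] (e : X ≃ₜ Y) (h : Caliber lam X) : Caliber lam Y := by
  intro ι U hι hU
  obtain ⟨J, hJ, x, hx⟩ := h ι (fun i => e ⁻¹' U i) hι (fun i => by
    refine ⟨(hU i).1.preimage e.continuous, ?_⟩
    obtain ⟨y, hy⟩ := (hU i).2
    exact ⟨e.symm y, by simpa using hy⟩)
  refine ⟨J, hJ, ⟨e x, ?_⟩⟩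
  simp only [Set.mem_iInter] at hx ⊢
  exact fun i hi => hx i hi

lemma caliber_of_subsingleton {lam : Cardinal} {Y : Type} [TopologicalSpace Y]
    [Subsingleton Y] [Nonempty Y] : Caliber lam Y := by
  intro ι U hι hU
  refine ⟨Set.univ, by rwa [mk_univ], ⟨Classical.arbitrary Y, ?_⟩⟩
  simp only [Set.mem_iInter]
  intro i _
  obtain ⟨z, hz⟩ := (hU i).2
  rwa [Subsingleton.elim (Classical.arbitrary Y) z]

lemma caliber_prod {lam : Cardinal} {X Y : Type} [TopologicalSpace X] [TopologicalSpace Y]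
    (hX : Caliber lam X) (hY : Caliber lam Y) : Caliber lam (X × Y) := by
  intro ι U hι hU
  choose p hp using fun i => (hU i).2
  choose u v hu hv hpu hpv huv using fun i =>
    (isOpen_prod_iff.1 (hU i).1) (p i).1 (p i).2 (by simpa using hp i)
  obtain ⟨J1, hJ1, x, hx⟩ := hX ι u hι fun i => ⟨hu i, ⟨_, hpu i⟩⟩
  obtain ⟨J2, hJ2, y, hy⟩ := hY (↥J1) (fun i => v i.1) hJ1 fun i => ⟨hv i.1, ⟨_, hpv i.1⟩⟩
  refine ⟨Subtype.val '' J2, by rw [mk_image_eq Subtype.val_injective]; exact hJ2, ⟨(x, y), ?_⟩⟩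
  simp only [Set.mem_iInter] at hx hy ⊢
  rintro i ⟨i2, hi2, rfl⟩
  exact huv i2.1 ⟨hx i2.1 i2.2, hy i2 hi2⟩

lemma caliber_pi_finite {lam : Cardinal} {X : Type} [TopologicalSpace X] [Nonempty X]
    (hX : Caliber lam X) : ∀ (n : ℕ) (F : Type) [Fintype F], Fintype.card F ≤ n →
    Caliber lam (F → X) := by
  intro n
  induction n with
  | zero =>
    intro F _ hF
    have : IsEmpty F := Fintype.card_eq_zero_iff.1 (le_antisymm hF (Nat.zero_le _))
    exact caliber_of_subsingleton
  | succ n IH =>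
    intro F _ hF
    rcases isEmpty_or_nonempty F with hF0 | hF0
    · exact caliber_of_subsingleton
    · obtain ⟨i⟩ := hF0
      classical
      have hcard : Fintype.card {j : F // j ≠ i} ≤ n := by
        have h2 : Fintype.card {j : F // j ≠ i} = Fintype.card F - 1 := by
          simpa using Fintype.card_subtype_compl (p := fun j : F => j = i)
        have h3 : 1 ≤ Fintype.card F := @Fintype.card_pos F _ ⟨i⟩
        omega
      have h1 : Caliber lam (X × ({j : F // j ≠ i} → X)) :=
        caliber_prod hX (IH _ hcard)
      exact caliber_of_homeomorph (Homeomorph.funSplitAt X i).symm h1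

end Helpers

section Combinatorics

noncomputable def wrec {K : Type} [LT K] [h : WellFoundedLT K]
    (F : ∀ k : K, ({k' : K // k' < k} → Cardinal) → Cardinal) : K → Cardinal :=
  h.wf.fix (fun k ih => F k (fun k' => ih k'.1 k'.2))

lemma wrec_eq {K : Type} [LT K] [h : WellFoundedLT K]
    (F : ∀ k : K, ({k' : K // k' < k} → Cardinal) → Cardinal) (k : K) :
    wrec F k = F k (fun k' => wrec F k'.1) := by
  rw [wrec, WellFounded.fix_eq]


lemma rainbow_regular (n : ℕ) : ∀ {ν : Cardinal}, ν.IsRegular → ℵ₀ < ν →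
    ∀ {I A : Type} (s : A → Finset I), #A = ν → (∀ i, (s i).card ≤ n) →
    ∃ (J : Set A) (c : I → ℕ), #J = ν ∧ (∀ i ∈ J, Set.InjOn c ↑(s i)) ∧
      (∀ i ∈ J, ∀ j ∈ s i, c j < n) := by
  induction n with
  | zero =>
    intro ν hν hων I A s hA hs
    have hse : ∀ i, s i = ∅ := fun i =>
      Finset.card_eq_zero.1 (le_antisymm (hs i) (Nat.zero_le _))
    refine ⟨Set.univ, fun _ => 0, by rwa [mk_univ], ?_, ?_⟩
    · intro i _
      simp [hse i, Set.InjOn]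
    · intro i _ j hj
      simp [hse i] at hj
  | succ n IH =>
    intro ν hν hων I A s hA hs
    classical
    by_cases hbig : ∃ j : I, #{i : A | j ∈ s i} = ν
    · -- a coordinate of full degree
      obtain ⟨j₀, hj₀⟩ := hbig
      obtain ⟨J', c', hJ', hinj', hlt'⟩ := IH hν hων
        (fun i : {i : A | j₀ ∈ s i} => (s i.1).erase j₀) hj₀
        (fun i => by
          show ((s i.1).erase j₀).card ≤ n
          rw [Finset.card_erase_of_mem i.2]
          have h2 := hs i.1
          omega)
      refine ⟨Subtype.val '' J', Function.update c' j₀ n,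
        (mk_image_eq Subtype.val_injective).trans hJ', ?_, ?_⟩
      · rintro _ ⟨i', hi', rfl⟩ a ha b hb hab
        rcases eq_or_ne a j₀ with ha0 | ha0 <;> rcases eq_or_ne b j₀ with hb0 | hb0
        · rw [ha0, hb0]
        · exfalso
          rw [ha0, Function.update_self, Function.update_of_ne hb0] at hab
          have := hlt' i' hi' b (Finset.mem_erase.2 ⟨hb0, hb⟩)
          omega
        · exfalso
          rw [hb0, Function.update_self, Function.update_of_ne ha0] at hab
          have := hlt' i' hi' a (Finset.mem_erase.2 ⟨ha0, ha⟩)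
          omega
        · rw [Function.update_of_ne ha0, Function.update_of_ne hb0] at hab
          exact hinj' i' hi' (Finset.mem_erase.2 ⟨ha0, ha⟩) (Finset.mem_erase.2 ⟨hb0, hb⟩) hab
      · rintro _ ⟨i', hi', rfl⟩ j hj
        rcases eq_or_ne j j₀ with hj0 | hj0
        · rw [hj0, Function.update_self]; omega
        · rw [Function.update_of_ne hj0]
          have := hlt' i' hi' j (Finset.mem_erase.2 ⟨hj0, hj⟩)
          omega
    · -- all degrees below ν : extract a disjoint subfamily by Zorn
      push_neg at hbig
      have hTlt : ∀ j : I, #{i : A | j ∈ s i} < ν := fun j =>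
        lt_of_le_of_ne (hA ▸ mk_set_le _) (hbig j)
      obtain ⟨M, hMmax⟩ : ∃ M, Maximal
          (fun M : Set A => M.Pairwise fun i1 i2 => Disjoint (s i1) (s i2)) M := by
        apply zorn_subset
        intro C hC hchain
        refine ⟨⋃₀ C, ?_, fun t ht => Set.subset_sUnion_of_mem ht⟩
        rintro i1 ⟨t1, ht1, hit1⟩ i2 ⟨t2, ht2, hit2⟩ hne
        rcases hchain.total ht1 ht2 with h | h
        · exact (hC ht2) (h hit1) hit2 hne
        · exact (hC ht1) hit1 (h hit2) hne
      have hM : M.Pairwise fun i1 i2 => Disjoint (s i1) (s i2) := hMmax.1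
      have hmeet : ∀ i, i ∉ M → ∃ i' ∈ M, ¬ Disjoint (s i) (s i') := by
        intro i hiM
        by_contra hcon
        push_neg at hcon
        apply hiM
        refine hMmax.2 ?_ (Set.subset_insert i M) (Set.mem_insert i M)
        rintro a (rfl | haM) b (rfl | hbM) hab
        · exact absurd rfl hab
        · exact hcon b hbM
        · exact (hcon a haM).symm
        · exact hM haM hbM hab
      have hMcard : #M = ν := by
        by_contra hne
        have hMlt : #M < ν := lt_of_le_of_ne (hA ▸ mk_set_le _) hne
        have hcover : (Set.univ : Set A) ⊆
            M ∪ ⋃ i' ∈ M, ⋃ j ∈ (s i' : Set I), {i : A | j ∈ s i} := by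
          intro i _
          by_cases hiM : i ∈ M
          · exact Or.inl hiM
          · right
            obtain ⟨i', hi', hnd⟩ := hmeet i hiM
            obtain ⟨j, hji, hji'⟩ := Finset.not_disjoint_iff.1 hnd
            simp only [Set.mem_iUnion]
            exact ⟨i', hi', j, hji', hji⟩
        have hinlt : ∀ i' : A, #(⋃ j ∈ (s i' : Set I), {i : A | j ∈ s i}) < ν := by
          intro i'
          refine lt_of_le_of_lt (mk_biUnion_le _ _) ?_
          apply Cardinal.mul_lt_of_lt hν.1
          · exact (finset_card_lt_aleph0 (s i')).trans hων
          · exact Ordinal.iSup_lt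
              (((finset_card_lt_aleph0 (s i')).trans hων).trans_le hν.2)
              fun j => hTlt j.1
        have houtlt : #(⋃ i' ∈ M, ⋃ j ∈ (s i' : Set I), {i : A | j ∈ s i}) < ν := by
          refine lt_of_le_of_lt (mk_biUnion_le _ _) ?_
          apply Cardinal.mul_lt_of_lt hν.1 hMlt
          exact Ordinal.iSup_lt (hMlt.trans_le hν.2) fun i' => hinlt i'.1
        have : ν ≤ #M + #(⋃ i' ∈ M, ⋃ j ∈ (s i' : Set I), {i : A | j ∈ s i}) := by
          calc ν = #(Set.univ : Set A) := by rw [mk_univ, hA]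
            _ ≤ #(M ∪ ⋃ i' ∈ M, ⋃ j ∈ (s i' : Set I), {i : A | j ∈ s i} : Set A) :=
              mk_le_mk_of_subset hcover
            _ ≤ _ := mk_union_le _ _
        exact absurd this (not_le.2 (Cardinal.add_lt_of_lt hν.1 hMlt houtlt))
      -- the colouring
      set c : I → ℕ := fun j =>
        if h : ∃ i ∈ M, j ∈ s i then ((s h.choose).toList).idxOf j else 0 with hc
      have hckey : ∀ i ∈ M, ∀ j ∈ s i, c j = ((s i).toList).idxOf j := by
        intro i hi j hj
        have hex : ∃ i' ∈ M, j ∈ s i' := ⟨i, hi, hj⟩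
        have h1 : hex.choose = i := by
          by_contra hne
          exact Finset.disjoint_left.1 (hM hex.choose_spec.1 hi hne) hex.choose_spec.2 hj
        simp only [hc, dif_pos hex]
        rw [h1]
      refine ⟨M, c, hMcard, ?_, ?_⟩
      · intro i hi a ha b hb hab
        rw [hckey i hi a ha, hckey i hi b hb] at hab
        exact (List.idxOf_inj (Finset.mem_toList.2 ha)).1 hab
      · intro i hi j hj
        rw [hckey i hi j hj]
        calc ((s i).toList).idxOf j < (s i).toList.length :=
            List.idxOf_lt_length_iff.2 (Finset.mem_toList.2 hj)
          _ ≤ n + 1 := by rw [Finset.length_toList]; exact hs i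

lemma rainbow_singular (n : ℕ) {lam : Cardinal} (hcof : ℵ₀ < lam.ord.cof)
    (hreg : lam.ord.cof < lam) {K : Type} [LinearOrder K] [wfK : WellFoundedLT K]
    (hK : #K = lam.ord.cof) (hKpred : ∀ k : K, #{k' : K // k' < k} < lam.ord.cof)
    {I A : Type} (s : A → Finset I) (hA : #A = lam) (hs : ∀ i, (s i).card ≤ n)
    (hbig : ∀ j : I, #{i : A | j ∈ s i} ≠ lam) :
    ∃ (J : Set A) (c : I → ℕ), #J = lam ∧ (∀ i ∈ J, Set.InjOn c ↑(s i)) ∧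
      (∀ i ∈ J, ∀ j ∈ s i, c j < n) := by
  classical
  have hωlam : ℵ₀ < lam := hcof.trans_le (Ordinal.cof_ord_le lam)
  set T : I → Set A := fun j => {i | j ∈ s i} with hT
  have hTlt : ∀ j : I, #(T j) < lam := fun j =>
    lt_of_le_of_ne (hA ▸ mk_set_le _) (hbig j)
  have hlimit : ∀ c : Cardinal, c < lam → Order.succ c < lam := by
    intro c hc
    have hle : Order.succ c ≤ lam := Order.succ_le_of_lt hc
    rcases lt_or_ge c ℵ₀ with h | h
    · exact lt_of_le_of_lt (Order.succ_le_of_lt h) hωlam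
    · rcases lt_or_eq_of_le hle with h' | h'
      · exact h'
      · exfalso
        have := (isRegular_succ h).2
        rw [h'] at this
        exact absurd this (not_le.2 hreg)
  -- cofinal family of cardinals
  obtain ⟨K₀, g, hlsub, hK₀⟩ := Ordinal.exists_lsub_cof lam.ord
  have hglt : ∀ k, (g k).card < lam := fun k =>
    Cardinal.lt_ord.1 (hlsub ▸ Ordinal.lt_lsub g k)
  have hgcof : ∀ c, c < lam → ∃ k, c ≤ (g k).card := by
    intro c hc
    by_contra hcon
    push_neg at hcon
    have h1 : ∀ k, g k < c.ord := fun k => Cardinal.lt_ord.2 (hcon k)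
    have h2 := Ordinal.lsub_le h1
    rw [hlsub] at h2
    exact absurd (Cardinal.ord_le_ord.1 h2) (not_le.2 hc)
  obtain ⟨eK⟩ : Nonempty (K ≃ K₀) := Cardinal.eq.1 (hK.trans hK₀.symm)
  set lamf : K → Cardinal := fun k => Order.succ (max ℵ₀ ((g (eK k)).card)) with hlamf
  have hlamf_reg : ∀ k, (lamf k).IsRegular := fun k => isRegular_succ (le_max_left _ _)
  have hlamf_ω : ∀ k, ℵ₀ < lamf k := fun k =>
    lt_of_le_of_lt (le_max_left _ _) (Order.lt_succ _)
  have hlamf_lt : ∀ k, lamf k < lam := fun k => hlimit _ (max_lt hωlam (hglt _))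
  have hlamf_cof : ∀ c, c < lam → ∃ k, c ≤ lamf k := by
    intro c hc
    obtain ⟨k₀, hk₀⟩ := hgcof c hc
    refine ⟨eK.symm k₀, ?_⟩
    simp only [hlamf, Equiv.apply_symm_apply]
    exact hk₀.trans ((le_max_right _ _).trans (Order.le_succ _))
  -- stratification by degrees
  set AS : Cardinal → Set A := fun θ => {i | ∀ j ∈ s i, #(T j) < θ} with hASdef
  have hAS_big : ∀ c, c < lam → ∃ θ, θ < lam ∧ c < #(AS θ) := by
    intro c hc
    by_contra hcon
    push_neg at hcon
    have hcover : (Set.univ : Set A) ⊆ ⋃ k : K, AS (lamf k) := by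
      intro i _
      have hD : ((s i).sup fun j => Order.succ #(T j)) < lam := by
        rw [Finset.sup_lt_iff (lt_of_le_of_lt zero_le hωlam)]
        exact fun j _ => hlimit _ (hTlt j)
      obtain ⟨k, hk⟩ := hlamf_cof _ hD
      refine Set.mem_iUnion.2 ⟨k, fun j hj => ?_⟩
      calc #(T j) < Order.succ #(T j) := Order.lt_succ _
        _ ≤ (s i).sup (fun j => Order.succ #(T j)) :=
          Finset.le_sup (f := fun j => Order.succ #(T j)) hj
        _ ≤ lamf k := hk
    have h1 : lam ≤ #(⋃ k : K, AS (lamf k)) := by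
      rw [← hA, ← mk_univ]
      exact mk_le_mk_of_subset hcover
    have h2 : #(⋃ k : K, AS (lamf k)) ≤ Cardinal.sum fun k : K => #(AS (lamf k)) :=
      mk_iUnion_le_sum_mk
    have h3 : (Cardinal.sum fun k : K => #(AS (lamf k))) ≤
        Cardinal.sum fun _ : K => c :=
      Cardinal.sum_le_sum _ _ fun k => hcon _ (hlamf_lt k)
    have h4 : (Cardinal.sum fun _ : K => c) = #K * c := by
      simp [Cardinal.sum_const']
    have h5 : #K * c < lam := by
      rw [hK]
      exact Cardinal.mul_lt_of_lt hωlam.le hreg hc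
    exact absurd ((h1.trans h2).trans (h3.trans_eq h4)) (not_le.2 h5)
  set θf : Cardinal → Cardinal := fun x => sInf {θ | θ < lam ∧ x < #(AS θ)} with hθfdef
  have hθf : ∀ x, x < lam → θf x < lam ∧ x < #(AS (θf x)) := by
    intro x hx
    have hne : {θ | θ < lam ∧ x < #(AS θ)}.Nonempty := by
      obtain ⟨θ, h1, h2⟩ := hAS_big x hx
      exact ⟨θ, h1, h2⟩
    exact csInf_mem hne
  -- the recursive bound on block sizes
  set ρ : K → Cardinal := wrec (fun k prev =>
    lamf k + Cardinal.sum fun k' : {k' : K // k' < k} =>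
      Order.succ (prev k') * ℵ₀ * θf (prev k')) with hρdef
  have hρ_eq : ∀ k, ρ k = lamf k + Cardinal.sum fun k' : {k' : K // k' < k} =>
      Order.succ (ρ k'.1) * ℵ₀ * θf (ρ k'.1) := fun k => wrec_eq _ k
  have hρ_lt : ∀ k, ρ k < lam := by
    have hstep : ∀ k : K, (∀ k' : K, k' < k → ρ k' < lam) → ρ k < lam := by
      intro k ih
      rw [hρ_eq]
      refine Cardinal.add_lt_of_lt hωlam.le (hlamf_lt k) ?_
      refine sum_lt_of_lt_cof hcof (hKpred k) ?_
      intro k'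
      have h1 := ih k'.1 k'.2
      exact Cardinal.mul_lt_of_lt hωlam.le
        (Cardinal.mul_lt_of_lt hωlam.le (hlimit _ h1) hωlam) (hθf _ h1).1
    exact fun k => wellFounded_lt.induction k hstep
  have hρ_ge : ∀ k, lamf k ≤ ρ k := fun k => by
    rw [hρ_eq]; exact self_le_add_right _ _
  have hρ_ω : ∀ k, ℵ₀ ≤ ρ k := fun k => (hlamf_ω k).le.trans (hρ_ge k)
  -- choose the blocks
  have hGex : ∀ k : K, ∃ S : Set A, S ⊆ AS (θf (ρ k)) ∧ #S = Order.succ (ρ k) := by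
    intro k
    have h2 := (hθf _ (hρ_lt k)).2
    obtain ⟨p, hp1, hp2⟩ := Cardinal.le_mk_iff_exists_subset.1 (Order.succ_le_of_lt h2)
    exact ⟨p, hp1, hp2⟩
  choose G hGsub hGcard using hGex
  set C : K → Set I := fun k => ⋃ i ∈ G k, (s i : Set I) with hCdef
  have hCcard : ∀ k, #(C k) ≤ Order.succ (ρ k) * ℵ₀ := by
    intro k
    refine le_trans (mk_biUnion_le _ _) ?_
    rw [hGcard]
    exact mul_le_mul' le_rfl (ciSup_le' fun i => (finset_card_lt_aleph0 _).le)
  set Bad : K → Set A := fun k => {i | ∃ j ∈ s i, j ∈ C k} with hBaddef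
  have hBad : ∀ k, #(Bad k) ≤ Order.succ (ρ k) * ℵ₀ * θf (ρ k) := by
    intro k
    have hsub2 : Bad k ⊆ ⋃ j : C k, T j.1 := by
      rintro i ⟨j, hj1, hj2⟩
      exact Set.mem_iUnion.2 ⟨⟨j, hj2⟩, hj1⟩
    refine le_trans (mk_le_mk_of_subset hsub2) (le_trans mk_iUnion_le_sum_mk ?_)
    refine le_trans (Cardinal.sum_le_sum _ (fun _ => θf (ρ k)) ?_) ?_
    · intro j
      obtain ⟨i, hiG, hji⟩ := Set.mem_iUnion₂.1 j.2
      exact (hGsub k hiG j.1 hji).le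
    · rw [Cardinal.sum_const']
      exact mul_le_mul' (hCcard k) le_rfl
  set G' : K → Set A := fun k => G k \ ⋃ k' : {k' : K // k' < k}, Bad k'.1 with hG'def
  have hG'card : ∀ k, lamf k ≤ #(G' k) := by
    intro k
    by_contra hlt'
    push_neg at hlt'
    have hrem : #(⋃ k' : {k' : K // k' < k}, Bad k'.1) ≤ ρ k := by
      refine le_trans mk_iUnion_le_sum_mk (le_trans
        (Cardinal.sum_le_sum _ _ fun k' => hBad k'.1) ?_)
      rw [hρ_eq k]
      exact le_add_self
    have hsplit : G k ⊆ G' k ∪ ⋃ k' : {k' : K // k' < k}, Bad k'.1 := by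
      intro i hi
      by_cases h : i ∈ ⋃ k' : {k' : K // k' < k}, Bad k'.1
      · exact Or.inr h
      · exact Or.inl ⟨hi, h⟩
    have hfin : Order.succ (ρ k) ≤ ρ k := by
      calc Order.succ (ρ k) = #(G k) := (hGcard k).symm
        _ ≤ #(G' k) + #(⋃ k' : {k' : K // k' < k}, Bad k'.1) :=
          le_trans (mk_le_mk_of_subset hsplit) (mk_union_le _ _)
        _ ≤ ρ k + ρ k := add_le_add (hlt'.le.trans (hρ_ge k)) hrem
        _ = ρ k := Cardinal.add_eq_self (hρ_ω k)
    exact absurd hfin (not_le.2 (Order.lt_succ _))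
  have hEex : ∀ k, ∃ E : Set A, E ⊆ G' k ∧ #E = lamf k := fun k =>
    Cardinal.le_mk_iff_exists_subset.1 (hG'card k)
  choose E hEsub hEcard using hEex
  -- rainbow colour each block by the regular case
  have hrb : ∀ k : K, ∃ (J : Set ↥(E k)) (c : I → ℕ), #J = lamf k ∧
      (∀ i ∈ J, Set.InjOn c ↑(s i.1)) ∧ (∀ i ∈ J, ∀ j ∈ s i.1, c j < n) :=
    fun k => rainbow_regular n (hlamf_reg k) (hlamf_ω k)
      (fun i : ↥(E k) => s i.1) (hEcard k) (fun i => hs i.1)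
  choose Jk ck hJk hinjk hltk using hrb
  set H : K → Set A := fun k => Subtype.val '' (Jk k) with hHdef
  have hHcard : ∀ k, #(H k) = lamf k := fun k =>
    (mk_image_eq Subtype.val_injective).trans (hJk k)
  have hHsubG' : ∀ k, H k ⊆ G' k := by
    rintro k _ ⟨i, _, rfl⟩
    exact hEsub k i.2
  have hHsubG : ∀ k, H k ⊆ G k := fun k => (hHsubG' k).trans Set.diff_subset
  have hCH : ∀ k, ∀ i ∈ H k, ∀ j ∈ s i, j ∈ C k := fun k i hi j hj =>
    Set.mem_iUnion₂.2 ⟨i, hHsubG k hi, hj⟩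
  have hkey : ∀ k k' : K, k' < k → ∀ i ∈ H k, ∀ j ∈ s i, j ∉ C k' := by
    intro k k' hkk' i hi j hjs hjC
    exact (hHsubG' k hi).2 (Set.mem_iUnion.2 ⟨⟨k', hkk'⟩, j, hjs, hjC⟩)
  have hdisj : ∀ k k' : K, k ≠ k' → ∀ i ∈ H k, ∀ i' ∈ H k',
      ∀ j, j ∈ s i → j ∈ s i' → False := by
    intro k k' hne i hi i' hi' j hj hj'
    rcases hne.lt_or_gt with h | h
    · exact hkey k' k h i' hi' j hj' (hCH k i hi j hj)
    · exact hkey k k' h i hi j hj (hCH k' i' hi' j hj')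
  set cok : I → ℕ := fun j =>
    if h : ∃ k, ∃ i ∈ H k, j ∈ s i then ck h.choose j else 0 with hcok
  have hckey : ∀ k, ∀ i ∈ H k, ∀ j ∈ s i, cok j = ck k j := by
    intro k i hi j hj
    have hex : ∃ k, ∃ i ∈ H k, j ∈ s i := ⟨k, i, hi, hj⟩
    have heq : hex.choose = k := by
      by_contra hne
      obtain ⟨i0, hi0, hji0⟩ := hex.choose_spec
      exact hdisj _ k hne i0 hi0 i hi j hji0 hj
    simp only [hcok, dif_pos hex, heq]
  refine ⟨⋃ k, H k, cok, ?_, ?_, ?_⟩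
  · refine le_antisymm (hA ▸ mk_set_le _) ?_
    by_contra hlt2
    push_neg at hlt2
    obtain ⟨k, hk⟩ := hlamf_cof (Order.succ #(⋃ k, H k)) (hlimit _ hlt2)
    have hle2 : lamf k ≤ #(⋃ k, H k) :=
      (hHcard k) ▸ mk_le_mk_of_subset (Set.subset_iUnion H k)
    exact absurd (hk.trans hle2) (not_le.2 (Order.lt_succ _))
  · intro i hi a ha b hb hab
    obtain ⟨k, hik⟩ := Set.mem_iUnion.1 hi
    rw [hckey k i hik a ha, hckey k i hik b hb] at hab
    obtain ⟨i', hi', rfl⟩ := hik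
    exact hinjk k i' hi' ha hb hab
  · intro i hi j hj
    obtain ⟨k, hik⟩ := Set.mem_iUnion.1 hi
    rw [hckey k i hik j hj]
    obtain ⟨i', hi', rfl⟩ := hik
    exact hltk k i' hi' j hj


lemma rainbow_main (n : ℕ) : ∀ {lam : Cardinal}, ℵ₀ < lam.ord.cof →
    ∀ {I A : Type} (s : A → Finset I), #A = lam → (∀ i, (s i).card ≤ n) →
    ∃ (J : Set A) (c : I → ℕ), #J = lam ∧ (∀ i ∈ J, Set.InjOn c ↑(s i)) ∧
      (∀ i ∈ J, ∀ j ∈ s i, c j < n) := by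
  induction n with
  | zero =>
    intro lam hcof I A s hA hs
    have hse : ∀ i, s i = ∅ := fun i =>
      Finset.card_eq_zero.1 (le_antisymm (hs i) (Nat.zero_le _))
    refine ⟨Set.univ, fun _ => 0, by rwa [mk_univ], ?_, ?_⟩
    · intro i _
      simp [hse i, Set.InjOn]
    · intro i _ j hj
      simp [hse i] at hj
  | succ n IH =>
    intro lam hcof I A s hA hs
    classical
    have hωlam : ℵ₀ < lam := hcof.trans_le (Ordinal.cof_ord_le lam)
    by_cases hreg : lam ≤ lam.ord.cof
    · exact rainbow_regular (n + 1) ⟨hωlam.le, hreg⟩ hωlam s hA hs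
    push_neg at hreg
    by_cases hbig : ∃ j : I, #{i : A | j ∈ s i} = lam
    · -- a coordinate of full degree : reduce n
      obtain ⟨j₀, hj₀⟩ := hbig
      obtain ⟨J', c', hJ', hinj', hlt'⟩ := IH hcof
        (fun i : {i : A | j₀ ∈ s i} => (s i.1).erase j₀) hj₀
        (fun i => by
          show ((s i.1).erase j₀).card ≤ n
          rw [Finset.card_erase_of_mem i.2]
          have h2 := hs i.1
          omega)
      refine ⟨Subtype.val '' J', Function.update c' j₀ n,
        (mk_image_eq Subtype.val_injective).trans hJ', ?_, ?_⟩
      · rintro _ ⟨i', hi', rfl⟩ a ha b hb hab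
        rcases eq_or_ne a j₀ with ha0 | ha0 <;> rcases eq_or_ne b j₀ with hb0 | hb0
        · rw [ha0, hb0]
        · exfalso
          rw [ha0, Function.update_self, Function.update_of_ne hb0] at hab
          have := hlt' i' hi' b (Finset.mem_erase.2 ⟨hb0, hb⟩)
          omega
        · exfalso
          rw [hb0, Function.update_self, Function.update_of_ne ha0] at hab
          have := hlt' i' hi' a (Finset.mem_erase.2 ⟨ha0, ha⟩)
          omega
        · rw [Function.update_of_ne ha0, Function.update_of_ne hb0] at hab
          exact hinj' i' hi' (Finset.mem_erase.2 ⟨ha0, ha⟩) (Finset.mem_erase.2 ⟨hb0, hb⟩) hab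
      · rintro _ ⟨i', hi', rfl⟩ j hj
        rcases eq_or_ne j j₀ with hj0 | hj0
        · rw [hj0, Function.update_self]; omega
        · rw [Function.update_of_ne hj0]
          have := hlt' i' hi' j (Finset.mem_erase.2 ⟨hj0, hj⟩)
          omega
    · -- the singular case : call the block construction
      push_neg at hbig
      have hKpred : ∀ k : (lam.ord.cof).ord.ToType,
          #{k' // k' < k} < lam.ord.cof := by
        intro k
        have h1 := Ordinal.typein_lt_self k
        have h2 := @Ordinal.card_typein (lam.ord.cof).ord.ToType (· < ·) isWellOrder_lt k
        rw [← h2]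
        exact Cardinal.lt_ord.1 h1
      exact rainbow_singular (n + 1) hcof hreg (K := (lam.ord.cof).ord.ToType)
        (by rw [Cardinal.mk_toType, Cardinal.card_ord]) hKpred s hA hs hbig

end Combinatorics

/-- Shelah: if `λ` is a caliber of `X` and `cf(λ) > ℵ₀`, then `λ` is a caliber of
any power `X^I`. -/
theorem stmt_14 (lam : Cardinal) (X : Type) [TopologicalSpace X]
    (h1 : Caliber lam X) (h2 : ℵ₀ < lam.ord.cof) (I : Type) :
    Caliber lam (I → X) := by
  classical
  have hωlam : ℵ₀ < lam := h2.trans_le (Ordinal.cof_ord_le lam)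
  rcases isEmpty_or_nonempty X with hX | hX
  · rcases isEmpty_or_nonempty I with hI | hI
    · have : Subsingleton (I → X) := ⟨fun f g => funext fun j => hI.elim j⟩
      have : Nonempty (I → X) := ⟨fun j => hI.elim j⟩
      exact caliber_of_subsingleton
    · intro ι U hι hU
      have hne : Nonempty ι := by
        rw [← mk_ne_zero_iff, hι]
        exact fun h => by simp [h] at hωlam
      obtain ⟨f, _⟩ := (hU (Classical.arbitrary ι)).2
      exact (hX.false (f (Classical.arbitrary I))).elim
  · intro ι U hι hU
    choose f hf using fun i => (hU i).2
    choose s V hV hsub using fun i => (isOpen_pi_iff.1 (hU i).1) (f i) (hf i)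
    -- pigeonhole on the size of supports
    obtain ⟨n, hn⟩ : ∃ n : ℕ, #{i : ι | (s i).card = n} = lam := by
      by_contra hcon
      push_neg at hcon
      have hlt : ∀ n : ℕ, #{i : ι | (s i).card = n} < lam := fun n =>
        lt_of_le_of_ne (by rw [← hι]; exact mk_set_le _) (hcon n)
      have hcover : (Set.univ : Set ι) = ⋃ n : ℕ, {i : ι | (s i).card = n} := by
        ext i; simp
      have : lam ≤ Cardinal.sum fun n : ℕ => #{i : ι | (s i).card = n} := by
        rw [← hι, ← mk_univ, hcover]
        exact mk_iUnion_le_sum_mk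
      exact absurd this (not_le.2 (sum_lt_of_lt_cof h2 (by simpa using h2) hlt))
    set A : Set ι := {i : ι | (s i).card = n} with hA
    obtain ⟨J1, c, hJ1, hinj, hlt⟩ := rainbow_main n h2 (fun i : A => s i.1) hn
      (fun i => le_of_eq i.2)
    -- colouring into `Fin (n+1)`
    set cc : I → Fin (n + 1) := fun j => ⟨min (c j) n, by omega⟩ with hcc
    have hcc_inj : ∀ i : A, i ∈ J1 → Set.InjOn cc ↑(s i.1) := by
      intro i hi a ha b hb hab
      apply hinj i hi ha hb
      have h1 : c a < n := hlt i hi a ha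
      have h2 : c b < n := hlt i hi b hb
      simpa [hcc, Fin.ext_iff, Nat.min_eq_left h1.le, Nat.min_eq_left h2.le] using hab
    -- the open sets in the finite power
    set W : ↥J1 → Set (Fin (n + 1) → X) :=
      fun i => ⋂ j ∈ s i.1.1, (fun x : Fin (n + 1) → X => x (cc j)) ⁻¹' (V i.1.1 j) with hW
    have hWopen : ∀ i, IsOpen (W i) := by
      intro i
      apply isOpen_biInter_finset
      intro j hj
      exact ((hV i.1.1 j hj).1).preimage (continuous_apply (cc j))
    have hWne : ∀ i : ↥J1, (W i).Nonempty := by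
      intro i
      refine ⟨fun k => if h : ∃ j ∈ s i.1.1, cc j = k then f i.1.1 h.choose
        else Classical.arbitrary X, ?_⟩
      simp only [hW, Set.mem_iInter, Set.mem_preimage]
      intro j hj
      have hex : ∃ j' ∈ s i.1.1, cc j' = cc j := ⟨j, hj, rfl⟩
      rw [dif_pos hex]
      obtain ⟨hj', hcj'⟩ := hex.choose_spec
      have : hex.choose = j := hcc_inj i.1 i.2 hj' hj hcj'
      rw [this]
      exact (hV i.1.1 j hj).2
    obtain ⟨J2, hJ2, g, hg⟩ := caliber_pi_finite h1 (n + 1) (Fin (n + 1)) (by simp)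
      (↥J1) W hJ1 (fun i => ⟨hWopen i, hWne i⟩)
    refine ⟨(fun i : ↥J1 => i.1.1) '' J2, ?_, ⟨fun j => g (cc j), ?_⟩⟩
    · refine (mk_image_eq ?_).trans hJ2
      exact fun a b h => Subtype.ext (Subtype.ext h)
    · simp only [Set.mem_iInter] at hg ⊢
      rintro i ⟨i2, hi2, rfl⟩
      apply hsub i2.1.1
      intro j hj
      have := hg i2 hi2
      simp only [hW, Set.mem_iInter, Set.mem_preimage] at this
      exact this j hj
end
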